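/- arXiv:1110.1693 — 6 statements merged into one kernel-verified Lean document; each statement's English description precedes it below -/
import Mathlib

section
/- If G is a chordal graph, then the square of its line graph L(G)^2 is chordal. -/
open SimpleGraph

/-- The square of a graph: same vertices, adjacency iff distance 1 or 2. -/
def SimpleGraph.square {V : Type*} (G : SimpleGraph V) : SimpleGraph V where
  Adj u v := u ≠ v ∧ (G.Adj u v ∨ ∃ w, G.Adj u w ∧ G.Adj w v)
  symm := ⟨by
    rintro u v ⟨h, h' | ⟨w, hw1, hw2⟩⟩
    · exact ⟨h.symm, Or.inl h'.symm⟩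
    · exact ⟨h.symm, Or.inr ⟨w, hw2.symm, hw1.symm⟩⟩⟩
  loopless := ⟨fun v h => h.1 rfl⟩

/-- `G` has an induced cycle of length `n`. -/
def SimpleGraph.HasInducedCycle {V : Type*} (G : SimpleGraph V) (n : ℕ) : Prop :=
  Nonempty (cycleGraph n ↪g G)

/-- A graph is chordal if it has no induced cycle of length at least 4. -/
def SimpleGraph.Chordal {V : Type*} (G : SimpleGraph V) : Prop :=
  ∀ n, 4 ≤ n → ¬ G.HasInducedCycle n

lemma endgame {V : Type*} (G : SimpleGraph V) (N : ℕ) (hN : 8 ≤ N) (s : ℕ → V)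
    (hper : ∀ t, s (t + N) = s t)
    (hA : ∀ t, s t = s (t + 1) ∨ G.Adj (s t) (s (t + 1)))
    (hL2 : ∀ t, ¬(s t = s (t + 1) ∧ s (t + 1) = s (t + 2)))
    (h4a : ∀ t, s t ≠ s (t + 2))
    (h4b : ∀ t, G.Adj (s t) (s (t + 2)) → s (t + 1) = s t ∨ s (t + 1) = s (t + 2))
    (h5a : ∀ t, s t ≠ s (t + 3))
    (h5b : ∀ t, G.Adj (s t) (s (t + 3)) → s t = s (t + 1) ∧ s (t + 2) = s (t + 3))
    (hfar : ∀ t d, 4 ≤ d → d + 4 ≤ N → s t ≠ s (t + d) ∧ ¬G.Adj (s t) (s (t + d))) :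
    ∃ m, 4 ≤ m ∧ Nonempty (cycleGraph m ↪g G) := by
  classical
  set kp : ℕ → Prop := fun u => s u ≠ s (u - 1) with hkp_def
  have hkp : ∀ u, kp u ↔ s u ≠ s (u - 1) := fun u => Iff.rfl
  have kper : ∀ t, 1 ≤ t → kp t → kp (t + N) := by
    intro t ht h
    rw [hkp] at h ⊢
    rw [hper t, show t + N - 1 = (t - 1) + N by omega, hper (t - 1)]
    exact h
  have density : ∀ t : ℕ, kp (t + 1) ∨ kp (t + 2) := by
    intro t
    rw [hkp, hkp]
    simp only [Nat.add_sub_cancel, show t + 2 - 1 = t + 1 by omega]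
    by_contra h
    push_neg at h
    exact hL2 t ⟨h.1.symm, h.2.symm⟩
  set nxt : ℕ → ℕ := fun t => if s (t + 1) = s t then t + 2 else t + 1 with hnxt_def
  have hnxt : ∀ t, nxt t = if s (t + 1) = s t then t + 2 else t + 1 := fun _ => rfl
  have hnxt_kp : ∀ t, kp (nxt t) := by
    intro t
    rw [hnxt]
    split
    · rcases density t with h | h
      · rw [hkp] at h; simp only [Nat.add_sub_cancel] at h; tauto
      · exact h
    · rw [hkp]; simpa only [Nat.add_sub_cancel] using ‹¬s (t + 1) = s t›
  have hnxt_gt : ∀ t, t < nxt t ∧ nxt t ≤ t + 2 := by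
    intro t; rw [hnxt]; split <;> omega
  have hAdjNext : ∀ t, G.Adj (s t) (s (nxt t)) := by
    intro t
    rw [hnxt]
    split
    · rename_i h
      rcases hA (t + 1) with h2 | h2
      · exact absurd (h.symm.trans h2) (h4a t)
      · rwa [h] at h2
    · rename_i h
      rcases hA t with h2 | h2
      · exact absurd h2.symm h
      · exact h2
  set t₀ : ℕ := nxt 0 with ht₀_def
  have ht₀ : 1 ≤ t₀ ∧ t₀ ≤ 2 := ⟨(hnxt_gt 0).1, (hnxt_gt 0).2⟩
  set c : ℕ → ℕ := fun j => nxt^[j] t₀ with hc_def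
  have hc0 : c 0 = t₀ := rfl
  have hcsucc : ∀ j, c (j + 1) = nxt (c j) := fun j => Function.iterate_succ_apply' nxt j t₀
  have hckp : ∀ j, kp (c j) := by
    intro j
    cases j with
    | zero => exact hnxt_kp 0
    | succ j => rw [hcsucc]; exact hnxt_kp _
  have hcmono : StrictMono c := by
    apply strictMono_nat_of_lt_succ
    intro j; rw [hcsucc]; exact (hnxt_gt (c j)).1
  have hclow : ∀ a k : ℕ, c a + k ≤ c (a + k) := by
    intro a k
    induction k with
    | zero => simp
    | succ k ih =>
      have h2 := hcmono (show a + k < a + (k + 1) by omega)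
      omega
  have hcup : ∀ a k : ℕ, c (a + k) ≤ c a + 2 * k := by
    intro a k
    induction k with
    | zero => simp
    | succ k ih =>
      have h1 : c (a + (k + 1)) = nxt (c (a + k)) := by
        rw [show a + (k + 1) = (a + k) + 1 by omega, hcsucc]
      have := (hnxt_gt (c (a + k))).2
      omega
  have hc1 : ∀ j, 1 ≤ c j := by
    intro j
    have := hclow 0 j
    simp only [hc0, Nat.zero_add] at this
    omega
  have hit : ∀ t, kp t → t₀ ≤ t → ∃ j, c j = t := by
    intro t
    induction t using Nat.strong_induction_on with
    | _ t ih =>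
      intro hkpt hle
      rcases eq_or_lt_of_le hle with heq | hlt
      · exact ⟨0, heq⟩
      · have ht2 : 2 ≤ t := by omega
        have hkpt₀ : kp t₀ := hckp 0
        by_cases hk : kp (t - 1)
        · obtain ⟨j, hj⟩ := ih (t - 1) (by omega) hk (by omega)
          refine ⟨j + 1, ?_⟩
          rw [hcsucc, hj, hnxt, show t - 1 + 1 = t by omega]
          rw [hkp] at hkpt
          rw [if_neg hkpt]
        · have ht3 : 3 ≤ t := by
            by_contra h3
            have h2 : t = 2 := by omega
            have h1 : t - 1 = t₀ := by omega
            rw [h1] at hk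
            exact hk hkpt₀
          have hkt2 : kp (t - 2) := by
            rcases density (t - 3) with h | h
            · rwa [show t - 3 + 1 = t - 2 by omega] at h
            · rw [show t - 3 + 2 = t - 1 by omega] at h
              exact absurd h hk
          have ht2' : t₀ ≤ t - 2 := by
            by_contra h
            have he : t - 1 = t₀ := by omega
            rw [he] at hk
            exact hk hkpt₀
          obtain ⟨j, hj⟩ := ih (t - 2) (by omega) hkt2 ht2'
          refine ⟨j + 1, ?_⟩
          rw [hcsucc, hj, hnxt, show t - 2 + 1 = t - 1 by omega]
          have hs : s (t - 1) = s (t - 2) := by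
            by_contra hne
            apply hk
            rw [hkp, show t - 1 - 1 = t - 2 by omega]
            exact hne
          rw [if_pos hs]
          omega
  have hkpt₀N : kp (t₀ + N) := kper t₀ ht₀.1 (hckp 0)
  obtain ⟨m, hm⟩ := hit (t₀ + N) hkpt₀N (by omega)
  have hm4 : 4 ≤ m := by
    have := hcup 0 m
    simp only [Nat.zero_add] at this
    rw [hm, hc0] at this
    omega
  have hcons : ∀ a b : ℕ, a < b → b < m →
      (G.Adj (s (c a)) (s (c b)) ∨ s (c a) = s (c b)) → b = a + 1 ∨ (a = 0 ∧ b = m - 1) := by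
    intro a b hab hbm h
    by_cases hb1 : b = a + 1
    · exact Or.inl hb1
    by_cases hwrap : a = 0 ∧ b = m - 1
    · exact Or.inr hwrap
    exfalso
    have hab2 : a + 2 ≤ b := by omega
    have hdlow : c a + 2 ≤ c b := le_trans (hclow a 2) (hcmono.monotone hab2)
    obtain ⟨d, hcb⟩ : ∃ d, c b = c a + d := ⟨c b - c a, by omega⟩
    have hd2 : 2 ≤ d := by omega
    have hup1 : c b + (m - b) ≤ c m := by
      have := hclow b (m - b)
      rwa [show b + (m - b) = m by omega] at this
    have hup2 : t₀ + a ≤ c a := by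
      have := hclow 0 a
      rwa [hc0, Nat.zero_add] at this
    have hdup : d + (m - b) + a ≤ N := by
      rw [hm] at hup1
      omega
    have hdN2 : d ≤ N - 2 := by omega
    rw [hcb] at h
    have hcase : d = 2 ∨ d = 3 ∨ (4 ≤ d ∧ d + 4 ≤ N) ∨ d = N - 3 ∨ d = N - 2 := by omega
    rcases hcase with rfl | rfl | ⟨hd1, hd2'⟩ | hd | hd
    · rcases h with hadj | heq
      · rcases h4b (c a) hadj with h1 | h1
        · have hc2 : c (a + 1) = c b := by
            rw [hcsucc, hnxt, if_pos h1, hcb]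
          exact hb1 (hcmono.injective hc2).symm
        · have hk := hckp b
          rw [hkp, hcb, show c a + 2 - 1 = c a + 1 by omega] at hk
          exact hk h1.symm
      · exact h4a (c a) heq
    · rcases h with hadj | heq
      · obtain ⟨e1, e2⟩ := h5b (c a) hadj
        have hna : c (a + 1) = c a + 2 := by
          rw [hcsucc, hnxt, if_pos e1.symm]
        have hna2 : c (a + 2) = c a + 4 := by
          rw [show a + 2 = (a + 1) + 1 by omega, hcsucc, hna, hnxt,
            show c a + 2 + 1 = c a + 3 by omega, if_pos e2.symm]
        have hb2 : c (a + 2) ≤ c b := hcmono.monotone hab2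
        omega
      · exact h5a (c a) heq
    · obtain ⟨hne, hnadj⟩ := hfar (c a) d hd1 hd2'
      rcases h with hadj | heq
      · exact hnadj hadj
      · exact hne heq
    · subst hd
      have h3 : s (c a + (N - 3) + 3) = s (c a) := by
        rw [show c a + (N - 3) + 3 = c a + N by omega]
        exact hper (c a)
      rcases h with hadj | heq
      · obtain ⟨e1, e2⟩ := h5b (c a + (N - 3)) (by rw [h3]; exact hadj.symm)
        have hkN : kp (c a + N) := kper _ (hc1 a) (hckp a)
        rw [hkp] at hkN
        apply hkN
        rw [show c a + N - 1 = c a + (N - 3) + 2 by omega,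
          show c a + N = c a + (N - 3) + 3 by omega]
        exact e2.symm
      · have he := h5a (c a + (N - 3))
        rw [h3] at he
        exact he heq.symm
    · subst hd
      have h2 : s (c a + (N - 2) + 2) = s (c a) := by
        rw [show c a + (N - 2) + 2 = c a + N by omega]
        exact hper (c a)
      rcases h with hadj | heq
      · rcases h4b (c a + (N - 2)) (by rw [h2]; exact hadj.symm) with h1 | h1
        · have hcb1 : c (b + 1) = c a + N := by
            rw [hcsucc, hcb, hnxt, if_pos h1]
            omega
          have hble : c (b + 1) ≤ c m := hcmono.monotone (by omega)
          rw [hm] at hble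
          have ha0 : a = 0 := by omega
          have hbm1 : c (b + 1) = c m := by
            rw [hcb1, hm, ha0]
            rw [hc0]
          have := hcmono.injective hbm1
          exact hwrap ⟨ha0, by omega⟩
        · have hkN : kp (c a + N) := kper _ (hc1 a) (hckp a)
          rw [hkp] at hkN
          apply hkN
          rw [show c a + N - 1 = c a + (N - 2) + 1 by omega,
            show c a + N = c a + (N - 2) + 2 by omega]
          exact h1.symm
      · have he := h4a (c a + (N - 2))
        rw [h2] at he
        exact he heq.symm
  have hnext_adj : ∀ a : ℕ, G.Adj (s (c a)) (s (c (a + 1))) := by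
    intro a; rw [hcsucc]; exact hAdjNext (c a)
  have hwrap_adj : G.Adj (s (c (m - 1))) (s (c 0)) := by
    have h1 : G.Adj (s (c (m - 1))) (s (c ((m - 1) + 1))) := hnext_adj (m - 1)
    rw [show (m - 1) + 1 = m by omega, hm, hper t₀] at h1
    exact h1
  have hdist : ∀ a b : ℕ, a < b → b < m → s (c a) ≠ s (c b) := by
    intro a b hab hbm heq
    rcases hcons a b hab hbm (Or.inr heq) with h | ⟨ha, hb⟩
    · subst h; exact (hnext_adj a).ne heq
    · subst ha; rw [hb] at heq; exact hwrap_adj.ne heq.symm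
  have hmod : ∀ x y : ℕ, x < m → y < m → ((m - y + x) % m = 1 ↔ (x = y + 1 ∨ (x = 0 ∧ y = m - 1))) := by
    intro x y hx hy
    rcases le_or_gt y x with h | h
    · rw [show m - y + x = (x - y) + m by omega, Nat.add_mod_right, Nat.mod_eq_of_lt (by omega)]
      omega
    · rw [Nat.mod_eq_of_lt (by omega)]
      omega
  have hadj_iff : ∀ j1 j2 : Fin m, (cycleGraph m).Adj j1 j2 ↔
      ((j1.val = j2.val + 1 ∨ (j1.val = 0 ∧ j2.val = m - 1)) ∨
        (j2.val = j1.val + 1 ∨ (j2.val = 0 ∧ j1.val = m - 1))) := by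
    intro j1 j2
    rw [cycleGraph_adj', Fin.sub_def, Fin.sub_def]
    show (m - j2.val + j1.val) % m = 1 ∨ (m - j1.val + j2.val) % m = 1 ↔ _
    rw [hmod j1.val j2.val j1.isLt j2.isLt, hmod j2.val j1.val j2.isLt j1.isLt]
  set f : Fin m → V := fun j => s (c j.val) with hf_def
  have finj : Function.Injective f := by
    intro j1 j2 heq
    by_contra hne
    rcases lt_trichotomy j1.val j2.val with h | h | h
    · exact hdist _ _ h j2.isLt heq
    · exact hne (Fin.val_injective h)
    · exact hdist _ _ h j1.isLt heq.symm
  refine ⟨m, hm4, ⟨⟨⟨f, finj⟩, ?_⟩⟩⟩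
  intro j1 j2
  simp only [Function.Embedding.coeFn_mk]
  rw [hadj_iff]
  constructor
  · intro h
    rcases lt_trichotomy j1.val j2.val with hlt | heqv | hgt
    · rcases hcons _ _ hlt j2.isLt (Or.inl h) with h1 | h1
      · exact Or.inr (Or.inl h1)
      · exact Or.inl (Or.inr h1)
    · have : j1 = j2 := Fin.val_injective heqv
      subst this
      exact (G.loopless.irrefl _ h).elim
    · rcases hcons _ _ hgt j1.isLt (Or.inl h.symm) with h1 | h1
      · exact Or.inl (Or.inl h1)
      · exact Or.inr (Or.inr h1)
  · rintro ((h1 | ⟨h1, h2⟩) | (h1 | ⟨h1, h2⟩))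
    · show G.Adj (s (c j1.val)) (s (c j2.val))
      rw [h1]
      exact (hnext_adj j2.val).symm
    · show G.Adj (s (c j1.val)) (s (c j2.val))
      rw [h1, h2]
      exact hwrap_adj.symm
    · show G.Adj (s (c j1.val)) (s (c j2.val))
      rw [h1]
      exact hnext_adj j1.val
    · show G.Adj (s (c j1.val)) (s (c j2.val))
      rw [h1, h2]
      exact hwrap_adj

open Fin.NatCast Fin.CommRing

/-- If G is chordal then $L(G)^2$ is chordal. -/
theorem chordal_lineGraph_sq_chordal {V : Type*} (G : SimpleGraph V)
    (hG : G.Chordal) : (G.lineGraph.square).Chordal := by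
  intro n hn hcyc
  obtain ⟨φ⟩ := hcyc
  obtain ⟨k, rfl⟩ : ∃ k, n = k + 2 + 2 := ⟨n - 4, by omega⟩
  classical
  haveI : NeZero (k + 2 + 2) := ⟨by omega⟩
  set E : Fin (k + 2 + 2) → Sym2 V := fun i => (φ i : Sym2 V) with hE_def
  have hE : ∀ i, E i ∈ G.edgeSet := fun i => (φ i).2
  have hEinj : ∀ i j, E i = E j → i = j := fun i j h => φ.injective (Subtype.ext h)
  have hIff : ∀ i j, (G.lineGraph.square).Adj (φ i) (φ j) ↔ (cycleGraph (k + 2 + 2)).Adj i j :=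
    fun i j => φ.map_rel_iff
  have sq_adj : ∀ (e₁ e₂ : G.edgeSet), (G.lineGraph.square).Adj e₁ e₂ ↔
      (e₁ ≠ e₂ ∧ (G.lineGraph.Adj e₁ e₂ ∨ ∃ w, G.lineGraph.Adj e₁ w ∧ G.lineGraph.Adj w e₂)) :=
    fun _ _ => Iff.rfl
  have adjmem : ∀ {z : Sym2 V}, z ∈ G.edgeSet → ∀ {u w : V}, u ∈ z → w ∈ z → u ≠ w → G.Adj u w := by
    intro z hz u w hu hw huw
    have h := (Sym2.mem_and_mem_iff huw).1 ⟨hu, hw⟩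
    rw [h] at hz
    rwa [SimpleGraph.mem_edgeSet] at hz
  have hne_succ : ∀ i : Fin (k + 2 + 2), i + 1 ≠ i := by
    intro i h
    have h3 : (1 : Fin (k + 2 + 2)) = 0 := by
      have h2 : i + 1 = i + 0 := by rw [h, add_zero]
      exact add_left_cancel h2
    have h4 := congrArg Fin.val h3
    rw [Fin.val_one] at h4
    simp at h4
  have hadd_ne : ∀ j i : Fin (k + 2 + 2), j ≠ i → j + 1 ≠ i + 1 :=
    fun j i h he => h (add_right_cancel he)
  -- the key "far" lemma
  have far2 : ∀ (i : Fin (k + 2 + 2)) (cn : ℕ), 2 ≤ cn → cn + 2 ≤ k + 2 + 2 →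
      ∀ u, u ∈ E i → ∀ w, w ∈ E (i + (cn : Fin (k + 2 + 2))) → u ≠ w ∧ ¬G.Adj u w := by
    intro i cn hc2 hcn u hu w hw
    set j := i + (cn : Fin (k + 2 + 2)) with hj_def
    have hcnval : ((cn : Fin (k + 2 + 2)) : ℕ) = cn := Fin.val_cast_of_lt (by omega)
    have hsub1 : j - i = (cn : Fin (k + 2 + 2)) := by rw [hj_def]; ring
    have hsub2 : i - j = ((k + 2 + 2 - cn : ℕ) : Fin (k + 2 + 2)) := by
      rw [hj_def]
      have h5 : ((k + 2 + 2 - cn : ℕ) : Fin (k + 2 + 2)) =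
          ((k + 2 + 2 : ℕ) : Fin (k + 2 + 2)) - ((cn : ℕ) : Fin (k + 2 + 2)) := by
        rw [← Nat.cast_sub (by omega)]
      rw [h5, Fin.natCast_self]
      ring
    have hne : i ≠ j := by
      intro he
      have h6 : j - i = 0 := by rw [he, sub_self]
      rw [hsub1] at h6
      have h7 := congrArg Fin.val h6
      rw [hcnval, Fin.val_zero] at h7
      omega
    have hnadj : ¬(cycleGraph (k + 2 + 2)).Adj i j := by
      rw [cycleGraph_adj']
      push_neg
      constructor
      · rw [hsub2, Fin.val_cast_of_lt (by omega)]; omega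
      · rw [hsub1, hcnval]; omega
    have hφne : φ i ≠ φ j := fun h => hne (φ.injective h)
    have hsq : ¬(G.lineGraph.square).Adj (φ i) (φ j) := fun h => hnadj ((hIff i j).1 h)
    constructor
    · intro huw
      apply hsq
      rw [sq_adj]
      refine ⟨hφne, Or.inl ?_⟩
      rw [lineGraph_adj_iff_exists]
      exact ⟨hφne, u, hu, by rw [huw]; exact hw⟩
    · intro hadj
      set g : G.edgeSet := ⟨s(u, w), (SimpleGraph.mem_edgeSet G).2 hadj⟩ with hg_def
      have hug : u ∈ (g : Sym2 V) := by rw [hg_def]; exact Sym2.mem_mk_left u w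
      have hwg : w ∈ (g : Sym2 V) := by rw [hg_def]; exact Sym2.mem_mk_right u w
      by_cases hgi : (g : Sym2 V) = E i
      · apply hsq
        rw [sq_adj]
        refine ⟨hφne, Or.inl ?_⟩
        rw [lineGraph_adj_iff_exists]
        exact ⟨hφne, w, by show w ∈ E i; rw [← hgi]; exact hwg, hw⟩
      · by_cases hgj : (g : Sym2 V) = E j
        · apply hsq
          rw [sq_adj]
          refine ⟨hφne, Or.inl ?_⟩
          rw [lineGraph_adj_iff_exists]
          exact ⟨hφne, u, hu, by show u ∈ E j; rw [← hgj]; exact hug⟩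
        · apply hsq
          rw [sq_adj]
          refine ⟨hφne, Or.inr ⟨g, ?_, ?_⟩⟩
          · rw [lineGraph_adj_iff_exists]
            exact ⟨fun h => hgi (congrArg Subtype.val h).symm, u, hu, hug⟩
          · rw [lineGraph_adj_iff_exists]
            exact ⟨fun h => hgj (congrArg Subtype.val h), w, hwg, hw⟩
  -- consecutive edges are close
  have close : ∀ i : Fin (k + 2 + 2), ∃ x y, x ∈ E i ∧ y ∈ E (i + 1) ∧ (x = y ∨ G.Adj x y) := by
    intro i
    have hadj : (cycleGraph (k + 2 + 2)).Adj i (i + 1) := by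
      rw [cycleGraph_adj']
      right
      rw [show i + 1 - i = 1 by ring, Fin.val_one]
    rw [← hIff] at hadj
    rw [sq_adj] at hadj
    obtain ⟨hne, h | ⟨g, hg1, hg2⟩⟩ := hadj
    · rw [lineGraph_adj_iff_exists] at h
      obtain ⟨-, v, hv1, hv2⟩ := h
      exact ⟨v, v, hv1, hv2, Or.inl rfl⟩
    · rw [lineGraph_adj_iff_exists] at hg1 hg2
      obtain ⟨-, x, hx1, hx2⟩ := hg1
      obtain ⟨-, y, hy1, hy2⟩ := hg2
      by_cases hxy : x = y
      · subst hxy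
        exact ⟨x, x, hx1, hy2, Or.inl rfl⟩
      · exact ⟨x, y, hx1, hy2, Or.inr (adjmem g.2 hx2 hy1 hxy)⟩
  -- configurations and their weight
  set Valid : (Fin (k + 2 + 2) → V) → (Fin (k + 2 + 2) → V) → Prop := fun p q =>
    ∀ i, p i ∈ E i ∧ q i ∈ E i ∧ (q i = p (i + 1) ∨ G.Adj (q i) (p (i + 1))) with hValid_def
  set T : (Fin (k + 2 + 2) → V) → (Fin (k + 2 + 2) → V) → Fin (k + 2 + 2) → ℕ := fun p q i =>
    (if p i = q i then 0 else 1) + (if q i = p (i + 1) then 0 else 1) with hT_def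
  set W : (Fin (k + 2 + 2) → V) → (Fin (k + 2 + 2) → V) → ℕ := fun p q => ∑ i, T p q i with hW_def
  have hcancel : ∀ i : Fin (k + 2 + 2), i - 1 + 1 = i := fun i => by ring
  have hex : ∃ w, ∃ p q, Valid p q ∧ W p q = w := by
    choose xc yc h1 h2 h3 using close
    refine ⟨_, fun i => yc (i - 1), xc, fun i => ⟨?_, h1 i, ?_⟩, rfl⟩
    · have := h2 (i - 1)
      rwa [hcancel i] at this
    · show xc i = yc (i + 1 - 1) ∨ G.Adj (xc i) (yc (i + 1 - 1))
      rw [show i + 1 - 1 = i by ring]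
      exact h3 i
  obtain ⟨p, q, hval, hWpq⟩ := Nat.find_spec hex
  have hmin : ∀ p' q', Valid p' q' → W p q ≤ W p' q' := by
    intro p' q' h'
    rw [hWpq]
    exact Nat.find_min' hex ⟨p', q', h', rfl⟩
  have hp : ∀ i, p i ∈ E i := fun i => (hval i).1
  have hq : ∀ i, q i ∈ E i := fun i => (hval i).2.1
  have hcon : ∀ i, q i = p (i + 1) ∨ G.Adj (q i) (p (i + 1)) := fun i => (hval i).2.2
  -- locality of the weight
  have hkey : ∀ (i : Fin (k + 2 + 2)) (p' q' : Fin (k + 2 + 2) → V), Valid p' q' →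
      (∀ j, j ≠ i → j ≠ i + 1 → T p' q' j = T p q j) →
      T p q i + T p q (i + 1) ≤ T p' q' i + T p' q' (i + 1) := by
    intro i p' q' hv' hsame
    have hi1 : (i + 1) ∈ Finset.univ.erase i := Finset.mem_erase.2 ⟨hne_succ i, Finset.mem_univ _⟩
    have hdecomp : ∀ (r1 r2 : Fin (k + 2 + 2) → V),
        W r1 r2 = T r1 r2 i + (T r1 r2 (i + 1) + ∑ j ∈ (Finset.univ.erase i).erase (i + 1), T r1 r2 j) := by
      intro r1 r2
      show (∑ j, T r1 r2 j) = _
      rw [← Finset.add_sum_erase _ (T r1 r2) (Finset.mem_univ i),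
        ← Finset.add_sum_erase _ (T r1 r2) hi1]
    have hmm := hmin p' q' hv'
    rw [hdecomp p q, hdecomp p' q'] at hmm
    have hsum_eq : ∑ j ∈ (Finset.univ.erase i).erase (i + 1), T p' q' j
        = ∑ j ∈ (Finset.univ.erase i).erase (i + 1), T p q j := by
      apply Finset.sum_congr rfl
      intro j hj
      rw [Finset.mem_erase, Finset.mem_erase] at hj
      exact hsame j hj.2.1 hj.1
    rw [hsum_eq] at hmm
    omega
  -- minimality consequences, stage P2/P2' (forbidden triple equalities)
  have P2 : ∀ i : Fin (k + 2 + 2), ¬(p i = q i ∧ q i = p (i + 1)) := by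
    rintro i ⟨h1, h2⟩
    have hpp : p i = p (i + 1) := h1.trans h2
    have hmem : p (i + 1) ∈ E (i - 1 + ((2 : ℕ) : Fin (k + 2 + 2))) := by
      rw [show i - 1 + ((2 : ℕ) : Fin (k + 2 + 2)) = i + 1 by push_cast; ring]
      exact hp _
    obtain ⟨hne, hnadj⟩ := far2 (i - 1) 2 le_rfl (by omega) (q (i - 1)) (hq _) (p (i + 1)) hmem
    have hc := hcon (i - 1)
    rw [hcancel i] at hc
    rcases hc with heq | hadj
    · exact hne (heq.trans hpp)
    · rw [hpp] at hadj
      exact hnadj hadj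
  have P2' : ∀ i : Fin (k + 2 + 2), ¬(q i = p (i + 1) ∧ p (i + 1) = q (i + 1)) := by
    rintro i ⟨h1, h2⟩
    have hqq : q i = q (i + 1) := h1.trans h2
    have hmem : p (i + 1 + 1) ∈ E (i + ((2 : ℕ) : Fin (k + 2 + 2))) := by
      rw [show i + ((2 : ℕ) : Fin (k + 2 + 2)) = i + 1 + 1 by push_cast; ring]
      exact hp _
    obtain ⟨hne, hnadj⟩ := far2 i 2 le_rfl (by omega) (q i) (hq _) (p (i + 1 + 1)) hmem
    rcases hcon (i + 1) with heq | hadj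
    · exact hne (hqq.trans heq)
    · rw [← hqq] at hadj
      exact hnadj hadj
  have hne_ii : ∀ i : Fin (k + 2 + 2), i ≠ i + 1 := fun i he => hne_succ i he.symm
  -- P4a : p i ≠ p (i+1)
  have P4a : ∀ i : Fin (k + 2 + 2), p i ≠ p (i + 1) := by
    intro i h
    by_cases hqi : p i = q i
    · exact P2 i ⟨hqi, hqi.symm.trans h⟩
    · have hv' : Valid p (Function.update q i (p i)) := by
        intro j
        by_cases hj : j = i
        · rw [hj]
          exact ⟨hp i, by rw [Function.update_self]; exact hp i,
            Or.inl (by rw [Function.update_self]; exact h)⟩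
        · exact ⟨hp j, by rw [Function.update_of_ne hj]; exact hq j,
            by rw [Function.update_of_ne hj]; exact hcon j⟩
      have hsame : ∀ j, j ≠ i → j ≠ i + 1 → T p (Function.update q i (p i)) j = T p q j := by
        intro j hj1 hj2
        show (if p j = Function.update q i (p i) j then 0 else 1)
          + (if Function.update q i (p i) j = p (j + 1) then 0 else 1) = _
        rw [Function.update_of_ne hj1]
      have hk := hkey i p (Function.update q i (p i)) hv' hsame
      have e1 : T p (Function.update q i (p i)) i = 0 := by
        show (if p i = Function.update q i (p i) i then 0 else 1)
          + (if Function.update q i (p i) i = p (i + 1) then 0 else 1) = 0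
        rw [Function.update_self, if_pos rfl, if_pos h]
      have e2 : T p (Function.update q i (p i)) (i + 1) = T p q (i + 1) := by
        show (if p (i + 1) = Function.update q i (p i) (i + 1) then 0 else 1)
          + (if Function.update q i (p i) (i + 1) = p (i + 1 + 1) then 0 else 1) = _
        rw [Function.update_of_ne (hne_succ i)]
      have eT1 : T p q i = (if p i = q i then 0 else 1)
          + (if q i = p (i + 1) then 0 else 1) := rfl
      rw [if_neg hqi] at eT1
      have e4 : (if q i = p (i + 1) then 0 else 1) ≤ 1 := by split <;> omega
      omega
  have P4a' : ∀ i : Fin (k + 2 + 2), q i ≠ q (i + 1) := by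
    intro i h
    by_cases hp1 : p (i + 1) = q (i + 1)
    · exact P2' i ⟨h.trans hp1.symm, hp1⟩
    · have hv' : Valid (Function.update p (i + 1) (q (i + 1))) q := by
        intro j
        by_cases hj : j = i + 1
        · rw [hj]
          exact ⟨by rw [Function.update_self]; exact hq (i + 1), hq (i + 1),
            by rw [Function.update_of_ne (hne_succ (i + 1))]; exact hcon (i + 1)⟩
        · by_cases hj2 : j = i
          · rw [hj2]
            exact ⟨by rw [Function.update_of_ne (hne_ii i)]; exact hp i, hq i,
              Or.inl (by rw [Function.update_self]; exact h)⟩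
          · exact ⟨by rw [Function.update_of_ne hj]; exact hp j, hq j,
              by rw [Function.update_of_ne (hadd_ne j i hj2)]; exact hcon j⟩
      have hsame : ∀ j, j ≠ i → j ≠ i + 1 → T (Function.update p (i + 1) (q (i + 1))) q j = T p q j := by
        intro j hj1 hj2
        show (if Function.update p (i + 1) (q (i + 1)) j = q j then 0 else 1)
          + (if q j = Function.update p (i + 1) (q (i + 1)) (j + 1) then 0 else 1) = _
        rw [Function.update_of_ne hj2, Function.update_of_ne (hadd_ne j i hj1)]
      have hk := hkey i (Function.update p (i + 1) (q (i + 1))) q hv' hsame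
      have hqp : q i ≠ p (i + 1) := fun he => hp1 (he.symm.trans h)
      have e1 : T (Function.update p (i + 1) (q (i + 1))) q i = (if p i = q i then 0 else 1) := by
        show (if Function.update p (i + 1) (q (i + 1)) i = q i then 0 else 1)
          + (if q i = Function.update p (i + 1) (q (i + 1)) (i + 1) then 0 else 1) = _
        rw [Function.update_of_ne (hne_ii i), Function.update_self, if_pos h, add_zero]
      have e2 : T (Function.update p (i + 1) (q (i + 1))) q (i + 1)
          = (if q (i + 1) = p (i + 1 + 1) then 0 else 1) := by
        show (if Function.update p (i + 1) (q (i + 1)) (i + 1) = q (i + 1) then 0 else 1)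
          + (if q (i + 1) = Function.update p (i + 1) (q (i + 1)) (i + 1 + 1) then 0 else 1) = _
        rw [Function.update_self, Function.update_of_ne (hne_succ (i + 1)), if_pos rfl, zero_add]
      have eT1 : T p q i = (if p i = q i then 0 else 1)
          + (if q i = p (i + 1) then 0 else 1) := rfl
      have eT2 : T p q (i + 1) = (if p (i + 1) = q (i + 1) then 0 else 1)
          + (if q (i + 1) = p (i + 1 + 1) then 0 else 1) := rfl
      rw [if_neg hqp] at eT1
      rw [if_neg hp1] at eT2
      omega
  -- P4b : adjacency between p i and p (i+1) forces q i to be one of them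
  have P4b : ∀ i : Fin (k + 2 + 2), G.Adj (p i) (p (i + 1)) → q i = p i ∨ q i = p (i + 1) := by
    intro i h
    by_contra hno
    push_neg at hno
    obtain ⟨hno1, hno2⟩ := hno
    have hv' : Valid p (Function.update q i (p i)) := by
      intro j
      by_cases hj : j = i
      · rw [hj]
        exact ⟨hp i, by rw [Function.update_self]; exact hp i,
          Or.inr (by rw [Function.update_self]; exact h)⟩
      · exact ⟨hp j, by rw [Function.update_of_ne hj]; exact hq j,
          by rw [Function.update_of_ne hj]; exact hcon j⟩
    have hsame : ∀ j, j ≠ i → j ≠ i + 1 → T p (Function.update q i (p i)) j = T p q j := by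
      intro j hj1 hj2
      show (if p j = Function.update q i (p i) j then 0 else 1)
        + (if Function.update q i (p i) j = p (j + 1) then 0 else 1) = _
      rw [Function.update_of_ne hj1]
    have hk := hkey i p (Function.update q i (p i)) hv' hsame
    have e1 : T p (Function.update q i (p i)) i = 1 := by
      show (if p i = Function.update q i (p i) i then 0 else 1)
        + (if Function.update q i (p i) i = p (i + 1) then 0 else 1) = 1
      rw [Function.update_self, if_pos rfl, if_neg h.ne]
    have e2 : T p (Function.update q i (p i)) (i + 1) = T p q (i + 1) := by
      show (if p (i + 1) = Function.update q i (p i) (i + 1) then 0 else 1)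
        + (if Function.update q i (p i) (i + 1) = p (i + 1 + 1) then 0 else 1) = _
      rw [Function.update_of_ne (hne_succ i)]
    have eT1 : T p q i = (if p i = q i then 0 else 1)
        + (if q i = p (i + 1) then 0 else 1) := rfl
    rw [if_neg (fun he => hno1 he.symm), if_neg hno2] at eT1
    omega
  have P4b' : ∀ i : Fin (k + 2 + 2), G.Adj (q i) (q (i + 1)) →
      p (i + 1) = q i ∨ p (i + 1) = q (i + 1) := by
    intro i h
    by_contra hno
    push_neg at hno
    obtain ⟨hno1, hno2⟩ := hno
    have hv' : Valid (Function.update p (i + 1) (q (i + 1))) q := by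
      intro j
      by_cases hj : j = i + 1
      · rw [hj]
        exact ⟨by rw [Function.update_self]; exact hq (i + 1), hq (i + 1),
          by rw [Function.update_of_ne (hne_succ (i + 1))]; exact hcon (i + 1)⟩
      · by_cases hj2 : j = i
        · rw [hj2]
          exact ⟨by rw [Function.update_of_ne (hne_ii i)]; exact hp i, hq i,
            Or.inr (by rw [Function.update_self]; exact h)⟩
        · exact ⟨by rw [Function.update_of_ne hj]; exact hp j, hq j,
            by rw [Function.update_of_ne (hadd_ne j i hj2)]; exact hcon j⟩
    have hsame : ∀ j, j ≠ i → j ≠ i + 1 → T (Function.update p (i + 1) (q (i + 1))) q j = T p q j := by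
      intro j hj1 hj2
      show (if Function.update p (i + 1) (q (i + 1)) j = q j then 0 else 1)
        + (if q j = Function.update p (i + 1) (q (i + 1)) (j + 1) then 0 else 1) = _
      rw [Function.update_of_ne hj2, Function.update_of_ne (hadd_ne j i hj1)]
    have hk := hkey i (Function.update p (i + 1) (q (i + 1))) q hv' hsame
    have e1 : T (Function.update p (i + 1) (q (i + 1))) q i
        = (if p i = q i then 0 else 1) + 1 := by
      show (if Function.update p (i + 1) (q (i + 1)) i = q i then 0 else 1)
        + (if q i = Function.update p (i + 1) (q (i + 1)) (i + 1) then 0 else 1) = _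
      rw [Function.update_of_ne (hne_ii i), Function.update_self, if_neg h.ne]
    have e2 : T (Function.update p (i + 1) (q (i + 1))) q (i + 1)
        = (if q (i + 1) = p (i + 1 + 1) then 0 else 1) := by
      show (if Function.update p (i + 1) (q (i + 1)) (i + 1) = q (i + 1) then 0 else 1)
        + (if q (i + 1) = Function.update p (i + 1) (q (i + 1)) (i + 1 + 1) then 0 else 1) = _
      rw [Function.update_self, Function.update_of_ne (hne_succ (i + 1)), if_pos rfl, zero_add]
    have eT1 : T p q i = (if p i = q i then 0 else 1)
        + (if q i = p (i + 1) then 0 else 1) := rfl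
    have eT2 : T p q (i + 1) = (if p (i + 1) = q (i + 1) then 0 else 1)
        + (if q (i + 1) = p (i + 1 + 1) then 0 else 1) := rfl
    rw [if_neg (show ¬(q i = p (i + 1)) from fun he => hno1 he.symm)] at eT1
    rw [if_neg hno2] at eT2
    omega
  -- P5 : distance-3 interaction
  have P5 : ∀ i : Fin (k + 2 + 2), (p i = q (i + 1) ∨ G.Adj (p i) (q (i + 1))) →
      p i = q i ∧ p (i + 1) = q (i + 1) := by
    intro i h
    have hv' : Valid (Function.update p (i + 1) (q (i + 1))) (Function.update q i (p i)) := by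
      intro j
      by_cases hj : j = i
      · rw [hj]
        refine ⟨by rw [Function.update_of_ne (hne_ii i)]; exact hp i,
          by rw [Function.update_self]; exact hp i, ?_⟩
        rw [Function.update_self, Function.update_self]
        exact h
      · by_cases hj2 : j = i + 1
        · rw [hj2]
          refine ⟨by rw [Function.update_self]; exact hq (i + 1),
            by rw [Function.update_of_ne (hne_succ i)]; exact hq (i + 1), ?_⟩
          rw [Function.update_of_ne (hne_succ i), Function.update_of_ne (hne_succ (i + 1))]
          exact hcon (i + 1)
        · refine ⟨by rw [Function.update_of_ne hj2]; exact hp j,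
            by rw [Function.update_of_ne hj]; exact hq j, ?_⟩
          rw [Function.update_of_ne hj, Function.update_of_ne (hadd_ne j i hj)]
          exact hcon j
    have hsame : ∀ j, j ≠ i → j ≠ i + 1 →
        T (Function.update p (i + 1) (q (i + 1))) (Function.update q i (p i)) j = T p q j := by
      intro j hj1 hj2
      show (if Function.update p (i + 1) (q (i + 1)) j = Function.update q i (p i) j then 0 else 1)
        + (if Function.update q i (p i) j = Function.update p (i + 1) (q (i + 1)) (j + 1) then 0 else 1) = _
      rw [Function.update_of_ne hj1, Function.update_of_ne hj2,
        Function.update_of_ne (hadd_ne j i hj1)]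
    have hk := hkey i (Function.update p (i + 1) (q (i + 1))) (Function.update q i (p i)) hv' hsame
    have e1 : T (Function.update p (i + 1) (q (i + 1))) (Function.update q i (p i)) i
        = (if p i = q (i + 1) then 0 else 1) := by
      show (if Function.update p (i + 1) (q (i + 1)) i = Function.update q i (p i) i then 0 else 1)
        + (if Function.update q i (p i) i = Function.update p (i + 1) (q (i + 1)) (i + 1) then 0 else 1) = _
      rw [Function.update_of_ne (hne_ii i)]
      rw [show Function.update q i (p i) i = p i from Function.update_self i (p i) q]
      rw [show Function.update p (i + 1) (q (i + 1)) (i + 1) = q (i + 1) from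
        Function.update_self (i + 1) (q (i + 1)) p]
      rw [if_pos rfl, zero_add]
    have e2 : T (Function.update p (i + 1) (q (i + 1))) (Function.update q i (p i)) (i + 1)
        = (if q (i + 1) = p (i + 1 + 1) then 0 else 1) := by
      show (if Function.update p (i + 1) (q (i + 1)) (i + 1) = Function.update q i (p i) (i + 1) then 0 else 1)
        + (if Function.update q i (p i) (i + 1) = Function.update p (i + 1) (q (i + 1)) (i + 1 + 1) then 0 else 1) = _
      rw [Function.update_self, Function.update_of_ne (hne_succ i),
        Function.update_of_ne (hne_succ (i + 1)), if_pos rfl, zero_add]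
    have eb : (if p i = q (i + 1) then 0 else 1) ≤ 1 := by split <;> omega
    have eT1 : T p q i = (if p i = q i then 0 else 1)
        + (if q i = p (i + 1) then 0 else 1) := rfl
    have eT2 : T p q (i + 1) = (if p (i + 1) = q (i + 1) then 0 else 1)
        + (if q (i + 1) = p (i + 1 + 1) then 0 else 1) := rfl
    by_cases c1 : p i = q i
    · by_cases c2 : q i = p (i + 1)
      · exact absurd ⟨c1, c2⟩ (P2 i)
      · by_cases c3 : p (i + 1) = q (i + 1)
        · exact ⟨c1, c3⟩
        · exfalso
          rw [if_pos c1, if_neg c2] at eT1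
          rw [if_neg c3] at eT2
          omega
    · exfalso
      by_cases c2 : q i = p (i + 1)
      · by_cases c3 : p (i + 1) = q (i + 1)
        · exact P2' i ⟨c2, c3⟩
        · rw [if_neg c1, if_pos c2] at eT1
          rw [if_neg c3] at eT2
          omega
      · rw [if_neg c1, if_neg c2] at eT1
        omega
  -- the cyclic vertex sequence
  have hcast1 : ∀ a : ℕ, ((a + 1 : ℕ) : Fin (k + 2 + 2)) = ((a : ℕ) : Fin (k + 2 + 2)) + 1 := by
    intro a; push_cast; ring
  have hcast2 : ((2 : ℕ) : Fin (k + 2 + 2)) = 2 := by push_cast; ring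
  set s : ℕ → V := fun t => if t % 2 = 0 then p ((t / 2 : ℕ) : Fin (k + 2 + 2))
    else q ((t / 2 : ℕ) : Fin (k + 2 + 2)) with hs_def
  have hse : ∀ a : ℕ, s (2 * a) = p ((a : ℕ) : Fin (k + 2 + 2)) := by
    intro a
    rw [hs_def]
    simp only []
    rw [if_pos (by omega), show 2 * a / 2 = a by omega]
  have hso : ∀ a : ℕ, s (2 * a + 1) = q ((a : ℕ) : Fin (k + 2 + 2)) := by
    intro a
    rw [hs_def]
    simp only []
    rw [if_neg (by omega), show (2 * a + 1) / 2 = a by omega]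
  have hpar : ∀ t : ℕ, ∃ a, t = 2 * a ∨ t = 2 * a + 1 := fun t => ⟨t / 2, by omega⟩
  have smem : ∀ t : ℕ, s t ∈ E ((t / 2 : ℕ) : Fin (k + 2 + 2)) := by
    intro t
    rw [hs_def]
    simp only []
    split
    · exact hp _
    · exact hq _
  have hsper : ∀ t, s (t + 2 * (k + 2 + 2)) = s t := by
    intro t
    rw [hs_def]
    simp only []
    rw [show (t + 2 * (k + 2 + 2)) % 2 = t % 2 by omega,
      show (t + 2 * (k + 2 + 2)) / 2 = t / 2 + (k + 2 + 2) by omega,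
      Nat.cast_add, Fin.natCast_self, add_zero]
  have hsA : ∀ t, s t = s (t + 1) ∨ G.Adj (s t) (s (t + 1)) := by
    intro t
    obtain ⟨a, rfl | rfl⟩ := hpar t
    · rw [hse a, hso a]
      by_cases h : p ((a : ℕ) : Fin (k + 2 + 2)) = q ((a : ℕ) : Fin (k + 2 + 2))
      · exact Or.inl h
      · exact Or.inr (adjmem (hE _) (hp _) (hq _) h)
    · rw [hso a, show 2 * a + 1 + 1 = 2 * (a + 1) by omega, hse (a + 1), hcast1 a]
      exact hcon _
  have hsL2 : ∀ t, ¬(s t = s (t + 1) ∧ s (t + 1) = s (t + 2)) := by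
    intro t
    obtain ⟨a, rfl | rfl⟩ := hpar t
    · rw [hse a, hso a, show 2 * a + 1 + 1 = 2 * (a + 1) by omega, hse (a + 1), hcast1 a]
      exact P2 _
    · rw [hso a, show 2 * a + 1 + 1 = 2 * (a + 1) by omega,
        show 2 * a + 1 + 2 = 2 * (a + 1) + 1 by omega, hse (a + 1), hso (a + 1), hcast1 a]
      exact P2' _
  have hs4a : ∀ t, s t ≠ s (t + 2) := by
    intro t
    obtain ⟨a, rfl | rfl⟩ := hpar t
    · rw [hse a, show 2 * a + 2 = 2 * (a + 1) by omega, hse (a + 1), hcast1 a]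
      exact P4a _
    · rw [hso a, show 2 * a + 1 + 2 = 2 * (a + 1) + 1 by omega, hso (a + 1), hcast1 a]
      exact P4a' _
  have hs4b : ∀ t, G.Adj (s t) (s (t + 2)) → s (t + 1) = s t ∨ s (t + 1) = s (t + 2) := by
    intro t
    obtain ⟨a, rfl | rfl⟩ := hpar t
    · rw [hse a, hso a, show 2 * a + 2 = 2 * (a + 1) by omega, hse (a + 1), hcast1 a]
      exact P4b _
    · rw [hso a, show 2 * a + 1 + 1 = 2 * (a + 1) by omega,
        show 2 * a + 1 + 2 = 2 * (a + 1) + 1 by omega, hse (a + 1), hso (a + 1), hcast1 a]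
      exact P4b' _
  have hs5a : ∀ t, s t ≠ s (t + 3) := by
    intro t
    obtain ⟨a, rfl | rfl⟩ := hpar t
    · rw [hse a, show 2 * a + 3 = 2 * (a + 1) + 1 by omega, hso (a + 1), hcast1 a]
      intro he
      obtain ⟨e1, e2⟩ := P5 _ (Or.inl he)
      exact P2 _ ⟨e1, e1.symm.trans (he.trans e2.symm)⟩
    · rw [hso a, show 2 * a + 1 + 3 = 2 * (a + 2) by omega, hse (a + 2),
        show ((a + 2 : ℕ) : Fin (k + 2 + 2)) = ((a : ℕ) : Fin (k + 2 + 2)) + 2 by push_cast; ring]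
      obtain ⟨hne', -⟩ := far2 ((a : ℕ) : Fin (k + 2 + 2)) 2 le_rfl (by omega) _ (hq _)
        (p (((a : ℕ) : Fin (k + 2 + 2)) + 2)) (by rw [hcast2]; exact hp _)
      exact hne'
  have hs5b : ∀ t, G.Adj (s t) (s (t + 3)) → s t = s (t + 1) ∧ s (t + 2) = s (t + 3) := by
    intro t
    obtain ⟨a, rfl | rfl⟩ := hpar t
    · rw [hse a, hso a, show 2 * a + 2 = 2 * (a + 1) by omega,
        show 2 * a + 3 = 2 * (a + 1) + 1 by omega, hse (a + 1), hso (a + 1), hcast1 a]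
      intro h
      exact P5 _ (Or.inr h)
    · rw [hso a, show 2 * a + 1 + 3 = 2 * (a + 2) by omega, hse (a + 2),
        show ((a + 2 : ℕ) : Fin (k + 2 + 2)) = ((a : ℕ) : Fin (k + 2 + 2)) + 2 by push_cast; ring]
      intro h
      obtain ⟨-, hnadj⟩ := far2 ((a : ℕ) : Fin (k + 2 + 2)) 2 le_rfl (by omega) _ (hq _)
        (p (((a : ℕ) : Fin (k + 2 + 2)) + 2)) (by rw [hcast2]; exact hp _)
      exact absurd h hnadj
  have hsfar : ∀ t d, 4 ≤ d → d + 4 ≤ 2 * (k + 2 + 2) →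
      s t ≠ s (t + d) ∧ ¬G.Adj (s t) (s (t + d)) := by
    intro t d h4 hdN
    obtain ⟨cn, hcn⟩ : ∃ cn, (t + d) / 2 = t / 2 + cn := ⟨(t + d) / 2 - t / 2, by omega⟩
    have hb1 : 2 ≤ cn := by omega
    have hb2 : cn + 2 ≤ k + 2 + 2 := by omega
    have hw : s (t + d) ∈ E (((t / 2 : ℕ) : Fin (k + 2 + 2)) + ((cn : ℕ) : Fin (k + 2 + 2))) := by
      have h8 := smem (t + d)
      rwa [hcn, Nat.cast_add] at h8
    exact far2 _ cn hb1 hb2 (s t) (smem t) (s (t + d)) hw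
  obtain ⟨m, hm4, ⟨emb⟩⟩ := endgame G (2 * (k + 2 + 2)) (by omega) s hsper hsA hsL2 hs4a hs4b
    hs5a hs5b hsfar
  exact hG m hm4 ⟨emb⟩
end

section
/- Let k ≥ 4 and let G be a graph with no induced cycle of length at least k. Then L(G)^2 has no induced cycle of length at least k. -/
open SimpleGraph

namespace LGSQ

section
variable {V : Type*} {G : SimpleGraph V} {n : ℕ} [NeZero n] {e : Fin n → Sym2 V}

/-- Shape of the connecting path between consecutive tokens. -/
def BlockOk (G : SimpleGraph V) (e : Fin n → Sym2 V) (i : Fin n) (a b : V) : List V → Prop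
  | [] => G.Adj a b
  | [x] => (x ∈ e i ∨ x ∈ e (i + 1)) ∧ G.Adj a x ∧ G.Adj x b
  | [x, y] => x ∈ e i ∧ y ∈ e (i + 1) ∧ G.Adj a x ∧ G.Adj x y ∧ G.Adj y b
  | _ => False

structure Cfg (G : SimpleGraph V) (e : Fin n → Sym2 V) : Type _ where
  t : Fin n → V
  inn : Fin n → List V
  ht : ∀ i, t i ∈ e i
  tne : ∀ i, t i ≠ t (i + 1)
  ok : ∀ i, BlockOk G e i (t i) (t (i + 1)) (inn i)

def Cfg.cost {e : Fin n → Sym2 V} (c : Cfg G e) : ℕ := ∑ i, (c.inn i).length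

/-- All data of a minimal configuration for an induced cycle in `L(G)²`. -/
structure Good (G : SimpleGraph V) (n : ℕ) [NeZero n] : Type _ where
  e : Fin n → Sym2 V
  hn : 4 ≤ n
  edge : ∀ i, e i ∈ G.edgeSet
  far : ∀ i j : Fin n, j ≠ i → j ≠ i + 1 → i ≠ j + 1 →
      ∀ u v, u ∈ e i → v ∈ e j → u ≠ v ∧ ¬ G.Adj u v
  c : Cfg G e
  min : ∀ c' : Cfg G e, c.cost ≤ c'.cost


omit [NeZero n] in
lemma sum_update2 (f : Fin n → ℕ) {i j : Fin n} (hij : i ≠ j) (a b : ℕ) :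
    ∑ x, Function.update (Function.update f i a) j b x + (f i + f j)
      = ∑ x, f x + (a + b) := by
  classical
  have hj : j ∈ Finset.univ := Finset.mem_univ j
  have hi : i ∈ Finset.univ.erase j := Finset.mem_erase.2 ⟨hij, Finset.mem_univ i⟩
  rw [← Finset.add_sum_erase _ _ hj, ← Finset.add_sum_erase _ _ hi,
      ← Finset.add_sum_erase _ f hj, ← Finset.add_sum_erase _ f hi]
  rw [Function.update_self, Function.update_of_ne hij, Function.update_self]
  have : ∀ x ∈ (Finset.univ.erase j).erase i,
      Function.update (Function.update f i a) j b x = f x := by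
    intro x hx
    rcases Finset.mem_erase.1 hx with ⟨hxi, hx2⟩
    rcases Finset.mem_erase.1 hx2 with ⟨hxj, _⟩
    rw [Function.update_of_ne hxj, Function.update_of_ne hxi]
  rw [Finset.sum_congr rfl this]
  ring

omit [NeZero n] in
lemma sum_update3 (f : Fin n → ℕ) {i j k : Fin n} (hij : i ≠ j) (hik : i ≠ k) (hjk : j ≠ k)
    (a b c : ℕ) :
    ∑ x, Function.update (Function.update (Function.update f i a) j b) k c x
      + (f i + f j + f k) = ∑ x, f x + (a + b + c) := by
  classical
  have hk : k ∈ Finset.univ := Finset.mem_univ k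
  have hj : j ∈ Finset.univ.erase k := Finset.mem_erase.2 ⟨hjk, Finset.mem_univ j⟩
  have hi : i ∈ (Finset.univ.erase k).erase j :=
    Finset.mem_erase.2 ⟨hij, Finset.mem_erase.2 ⟨hik, Finset.mem_univ i⟩⟩
  rw [← Finset.add_sum_erase _ _ hk, ← Finset.add_sum_erase _ _ hj,
      ← Finset.add_sum_erase _ _ hi,
      ← Finset.add_sum_erase _ f hk, ← Finset.add_sum_erase _ f hj,
      ← Finset.add_sum_erase _ f hi]
  rw [Function.update_self, Function.update_of_ne hjk, Function.update_self,
      Function.update_of_ne hik, Function.update_of_ne hij, Function.update_self]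
  have : ∀ x ∈ ((Finset.univ.erase k).erase j).erase i,
      Function.update (Function.update (Function.update f i a) j b) k c x = f x := by
    intro x hx
    rcases Finset.mem_erase.1 hx with ⟨hxi, hx2⟩
    rcases Finset.mem_erase.1 hx2 with ⟨hxj, hx3⟩
    rcases Finset.mem_erase.1 hx3 with ⟨hxk, _⟩
    rw [Function.update_of_ne hxk, Function.update_of_ne hxj, Function.update_of_ne hxi]
  rw [Finset.sum_congr rfl this]
  ring

open Fin.NatCast Fin.CommRing in
lemma finAddNe (hn : 2 ≤ n) {a : ℕ} (h0 : 0 < a) (hlt : a < n) (i : Fin n) :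
    i + (a : Fin n) ≠ i := by
  intro h
  have h2 : (a : Fin n) = 0 := add_eq_left.mp h
  have h3 : ((a : Fin n)).val = 0 := by rw [h2]; rfl
  rw [Fin.val_natCast, Nat.mod_eq_of_lt hlt] at h3
  omega

lemma finValOne (hn : 2 ≤ n) : (1 : Fin n).val = 1 := by
  rw [Fin.val_one', Nat.mod_eq_of_lt (by omega)]

open Fin.NatCast Fin.CommRing in
lemma fin_ne_add1 (hn : 4 ≤ n) (i : Fin n) : i + 1 ≠ i := by
  have := finAddNe (n := n) (by omega) (a := 1) (by omega) (by omega) i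
  rwa [Nat.cast_one] at this

open Fin.NatCast Fin.CommRing in
lemma fin_ne_add2 (hn : 4 ≤ n) (i : Fin n) : i + 1 + 1 ≠ i := by
  have h : i + 1 + 1 = i + ((2:ℕ) : Fin n) := by push_cast; ring
  rw [h]; exact finAddNe (by omega) (by omega) (by omega) i

open Fin.NatCast Fin.CommRing in
lemma fin_ne_add3 (hn : 4 ≤ n) (i : Fin n) : i + 1 + 1 + 1 ≠ i := by
  have h : i + 1 + 1 + 1 = i + ((3:ℕ) : Fin n) := by push_cast; ring
  rw [h]; exact finAddNe (by omega) (by omega) (by omega) i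

variable (A : Good G n)

def Good.t (i : Fin n) : V := A.c.t i
def Good.inn (i : Fin n) : List V := A.c.inn i

lemma Good.ht (i : Fin n) : A.t i ∈ A.e i := A.c.ht i
lemma Good.tne (i : Fin n) : A.t i ≠ A.t (i + 1) := A.c.tne i
lemma Good.ok (i : Fin n) : BlockOk G A.e i (A.t i) (A.t (i + 1)) (A.inn i) := A.c.ok i

/-- membership in a 2-element sym2 edge -/
lemma Good.two_mem {i : Fin n} {u v w : V} (hu : u ∈ A.e i) (hv : v ∈ A.e i)
    (hw : w ∈ A.e i) (huv : u ≠ v) : w = u ∨ w = v := by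
  have h := (Sym2.mem_and_mem_iff huv).1 ⟨hu, hv⟩
  rw [h] at hw
  exact Sym2.mem_iff.1 hw

lemma Good.adj_of_mem {i : Fin n} {u v : V} (hu : u ∈ A.e i) (hv : v ∈ A.e i)
    (huv : u ≠ v) : G.Adj u v := by
  have h := (Sym2.mem_and_mem_iff huv).1 ⟨hu, hv⟩
  have := A.edge i
  rw [h] at this
  exact this

/-- destructor for BlockOk -/
lemma blockOk_cases {e : Fin n → Sym2 V} {i : Fin n} {a b : V} {l : List V}
    (h : BlockOk G e i a b l) :
    (l = [] ∧ G.Adj a b) ∨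
    (∃ x, l = [x] ∧ (x ∈ e i ∨ x ∈ e (i + 1)) ∧ G.Adj a x ∧ G.Adj x b) ∨
    (∃ x y, l = [x, y] ∧ x ∈ e i ∧ y ∈ e (i + 1) ∧ G.Adj a x ∧ G.Adj x y ∧ G.Adj y b) := by
  match l with
  | [] => exact Or.inl ⟨rfl, h⟩
  | [x] => exact Or.inr (Or.inl ⟨x, rfl, h⟩)
  | [x, y] => exact Or.inr (Or.inr ⟨x, y, rfl, h.1, h.2.1, h.2.2.1, h.2.2.2.1, h.2.2.2.2⟩)
  | _ :: _ :: _ :: _ => exact absurd h (by simp [BlockOk])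

end

end LGSQ
namespace LGSQ
section
variable {V : Type*} {G : SimpleGraph V} {n : ℕ} [NeZero n] {e : Fin n → Sym2 V}

omit [NeZero n] in
lemma sum_update1 (f : Fin n → ℕ) (i : Fin n) (a : ℕ) :
    ∑ x, Function.update f i a x + f i = ∑ x, f x + a := by
  classical
  have hi : i ∈ Finset.univ := Finset.mem_univ i
  rw [← Finset.add_sum_erase _ _ hi, ← Finset.add_sum_erase _ f hi, Function.update_self]
  have : ∀ x ∈ Finset.univ.erase i, Function.update f i a x = f x := by
    intro x hx
    exact Function.update_of_ne (Finset.mem_erase.1 hx).1 _ _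
  rw [Finset.sum_congr rfl this]
  ring

variable (A : Good G n)

/-- R1 : can't shorten a single block -/
lemma Good.short1 (i : Fin n) (l' : List V)
    (h : BlockOk G A.e i (A.t i) (A.t (i+1)) l') :
    (A.inn i).length ≤ l'.length := by
  by_contra hlt
  push_neg at hlt
  classical
  set c' : Cfg G A.e :=
    { t := A.c.t
      inn := Function.update A.c.inn i l'
      ht := A.c.ht
      tne := A.c.tne
      ok := by
        intro j
        by_cases hj : j = i
        · subst hj; rw [Function.update_self]; exact h
        · rw [Function.update_of_ne hj]; exact A.c.ok j } with hc'
  have key : c'.cost + (A.c.inn i).length = A.c.cost + l'.length := by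
    show (∑ x, ((Function.update A.c.inn i l') x).length) + _ = _
    have : (fun x => ((Function.update A.c.inn i l') x).length)
        = Function.update (fun j => (A.c.inn j).length) i l'.length := by
      ext x
      by_cases hx : x = i
      · subst hx; simp
      · simp [Function.update_of_ne hx]
    rw [show (∑ x, ((Function.update A.c.inn i l') x).length)
        = ∑ x, Function.update (fun j => (A.c.inn j).length) i l'.length x by
        rw [← this]]
    exact sum_update1 _ i _
  have := A.min c'
  unfold Cfg.cost at key this
  simp only [Good.inn] at hlt
  omega

/-- R2 : retoken at i+1 -/
lemma Good.short2 (i : Fin n) (v : V) (hv : v ∈ A.e (i+1))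
    (h1 : A.t i ≠ v) (h2 : v ≠ A.t (i+1+1)) (l1 l2 : List V)
    (ok1 : BlockOk G A.e i (A.t i) v l1)
    (ok2 : BlockOk G A.e (i+1) v (A.t (i+1+1)) l2) :
    (A.inn i).length + (A.inn (i+1)).length ≤ l1.length + l2.length := by
  have hn4 := A.hn
  have e1 : i + 1 ≠ i := fin_ne_add1 hn4 i
  have e2 : i + 1 + 1 ≠ i + 1 := fin_ne_add1 hn4 (i+1)
  have e21 : i + 1 + 1 ≠ i := fin_ne_add2 hn4 i
  by_contra hlt
  push_neg at hlt
  classical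
  set t' : Fin n → V := Function.update A.c.t (i+1) v with ht'
  have ht'i : t' i = A.t i := by
    rw [ht', Function.update_of_ne (Ne.symm e1)]; rfl
  have ht'i1 : t' (i+1) = v := by rw [ht', Function.update_self]
  have ht'i2 : t' (i+1+1) = A.t (i+1+1) := by
    rw [ht', Function.update_of_ne e2]; rfl
  have ht'other : ∀ j, j ≠ i + 1 → t' j = A.t j := by
    intro j hj; rw [ht', Function.update_of_ne hj]; rfl
  set c' : Cfg G A.e :=
    { t := t'
      inn := Function.update (Function.update A.c.inn i l1) (i+1) l2
      ht := by
        intro j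
        by_cases hj : j = i + 1
        · subst hj; rw [ht'i1]; exact hv
        · rw [ht'other j hj]; exact A.c.ht j
      tne := by
        intro j
        by_cases hj : j = i
        · subst hj; rw [ht'i, ht'i1]; exact h1
        · by_cases hj2 : j = i + 1
          · subst hj2; rw [ht'i1, ht'i2]; exact h2
          · rw [ht'other j hj2, ht'other (j+1) (fun h => hj (by
              have := add_right_cancel h; exact this))]
            exact A.c.tne j
      ok := by
        intro j
        by_cases hj : j = i
        · subst hj
          rw [Function.update_of_ne e1.symm, Function.update_self, ht'i, ht'i1]
          exact ok1
        · by_cases hj2 : j = i + 1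
          · subst hj2
            rw [Function.update_self, ht'i1, ht'i2]
            exact ok2
          · rw [Function.update_of_ne hj2, Function.update_of_ne hj,
              ht'other j hj2, ht'other (j+1) (fun h => hj (add_right_cancel h))]
            exact A.c.ok j } with hc'
  have key : c'.cost + ((A.c.inn i).length + (A.c.inn (i+1)).length)
      = A.c.cost + (l1.length + l2.length) := by
    show (∑ x, ((Function.update (Function.update A.c.inn i l1) (i+1) l2) x).length) + _ = _
    have heq : (fun x => ((Function.update (Function.update A.c.inn i l1) (i+1) l2) x).length)
        = Function.update (Function.update (fun j => (A.c.inn j).length) i l1.length)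
            (i+1) l2.length := by
      ext x
      by_cases hx : x = i + 1
      · subst hx; simp
      · by_cases hx2 : x = i
        · subst hx2
          rw [Function.update_of_ne hx, Function.update_of_ne hx, Function.update_self,
            Function.update_self]
        · rw [Function.update_of_ne hx, Function.update_of_ne hx, Function.update_of_ne hx2,
            Function.update_of_ne hx2]
    rw [show (∑ x, ((Function.update (Function.update A.c.inn i l1) (i+1) l2) x).length)
        = ∑ x, Function.update (Function.update (fun j => (A.c.inn j).length) i l1.length)
            (i+1) l2.length x by rw [← heq]]
    exact sum_update2 _ e1.symm _ _
  have := A.min c'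
  unfold Cfg.cost at key this
  simp only [Good.inn] at hlt
  omega

end
end LGSQ
namespace LGSQ
section
variable {V : Type*} {G : SimpleGraph V} {n : ℕ} [NeZero n] {e : Fin n → Sym2 V}
variable (A : Good G n)

/-- R3 : retoken at i+1 and i+2 -/
lemma Good.short3 (i : Fin n) (v w : V) (hv : v ∈ A.e (i+1)) (hw : w ∈ A.e (i+1+1))
    (h1 : A.t i ≠ v) (h2 : v ≠ w) (h3 : w ≠ A.t (i+1+1+1)) (l1 l2 l3 : List V)
    (ok1 : BlockOk G A.e i (A.t i) v l1)
    (ok2 : BlockOk G A.e (i+1) v w l2)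
    (ok3 : BlockOk G A.e (i+1+1) w (A.t (i+1+1+1)) l3) :
    (A.inn i).length + (A.inn (i+1)).length + (A.inn (i+1+1)).length
      ≤ l1.length + l2.length + l3.length := by
  have hn4 := A.hn
  have e1 : i + 1 ≠ i := fin_ne_add1 hn4 i
  have e2 : i + 1 + 1 ≠ i + 1 := fin_ne_add1 hn4 (i+1)
  have e3 : i + 1 + 1 + 1 ≠ i + 1 + 1 := fin_ne_add1 hn4 (i+1+1)
  have e21 : i + 1 + 1 ≠ i := fin_ne_add2 hn4 i
  have e31 : i + 1 + 1 + 1 ≠ i + 1 := fin_ne_add2 hn4 (i+1)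
  have e30 : i + 1 + 1 + 1 ≠ i := fin_ne_add3 hn4 i
  by_contra hlt
  push_neg at hlt
  classical
  set t' : Fin n → V := Function.update (Function.update A.c.t (i+1) v) (i+1+1) w with ht'
  have ht'i : t' i = A.t i := by
    rw [ht', Function.update_of_ne (Ne.symm e21), Function.update_of_ne (Ne.symm e1)]; rfl
  have ht'i1 : t' (i+1) = v := by
    rw [ht', Function.update_of_ne (Ne.symm e2), Function.update_self]
  have ht'i2 : t' (i+1+1) = w := by rw [ht', Function.update_self]
  have ht'i3 : t' (i+1+1+1) = A.t (i+1+1+1) := by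
    rw [ht', Function.update_of_ne e3, Function.update_of_ne e31]; rfl
  have ht'other : ∀ j, j ≠ i + 1 → j ≠ i + 1 + 1 → t' j = A.t j := by
    intro j hj hj2
    rw [ht', Function.update_of_ne hj2, Function.update_of_ne hj]; rfl
  set c' : Cfg G A.e :=
    { t := t'
      inn := Function.update (Function.update (Function.update A.c.inn i l1) (i+1) l2)
        (i+1+1) l3
      ht := by
        intro j
        by_cases hj : j = i + 1
        · subst hj; rw [ht'i1]; exact hv
        · by_cases hj2 : j = i + 1 + 1
          · subst hj2; rw [ht'i2]; exact hw
          · rw [ht'other j hj hj2]; exact A.c.ht j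
      tne := by
        intro j
        by_cases hja : j = i
        · subst hja; rw [ht'i, ht'i1]; exact h1
        · by_cases hjb : j = i + 1
          · subst hjb; rw [ht'i1, ht'i2]; exact h2
          · by_cases hjc : j = i + 1 + 1
            · subst hjc; rw [ht'i2, ht'i3]; exact h3
            · rw [ht'other j hjb hjc,
                ht'other (j+1) (fun h => hja (add_right_cancel h))
                  (fun h => hjb (add_right_cancel h))]
              exact A.c.tne j
      ok := by
        intro j
        by_cases hja : j = i
        · subst hja
          rw [Function.update_of_ne (Ne.symm e21), Function.update_of_ne (Ne.symm e1),
            Function.update_self, ht'i, ht'i1]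
          exact ok1
        · by_cases hjb : j = i + 1
          · subst hjb
            rw [Function.update_of_ne (Ne.symm e2), Function.update_self, ht'i1, ht'i2]
            exact ok2
          · by_cases hjc : j = i + 1 + 1
            · subst hjc
              rw [Function.update_self, ht'i2, ht'i3]
              exact ok3
            · rw [Function.update_of_ne hjc, Function.update_of_ne hjb,
                Function.update_of_ne hja, ht'other j hjb hjc,
                ht'other (j+1) (fun h => hja (add_right_cancel h))
                  (fun h => hjb (add_right_cancel h))]
              exact A.c.ok j } with hc'
  have key : c'.cost + ((A.c.inn i).length + (A.c.inn (i+1)).length + (A.c.inn (i+1+1)).length)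
      = A.c.cost + (l1.length + l2.length + l3.length) := by
    show (∑ x, ((Function.update (Function.update (Function.update A.c.inn i l1) (i+1) l2)
        (i+1+1) l3) x).length) + _ = _
    have heq : (fun x => ((Function.update (Function.update (Function.update A.c.inn i l1)
          (i+1) l2) (i+1+1) l3) x).length)
        = Function.update (Function.update (Function.update (fun j => (A.c.inn j).length)
            i l1.length) (i+1) l2.length) (i+1+1) l3.length := by
      ext x
      by_cases hx : x = i + 1 + 1
      · subst hx; simp
      · by_cases hx2 : x = i + 1
        · subst hx2
          rw [Function.update_of_ne hx, Function.update_of_ne hx, Function.update_self,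
            Function.update_self]
        · by_cases hx3 : x = i
          · subst hx3
            rw [Function.update_of_ne hx, Function.update_of_ne hx,
              Function.update_of_ne hx2, Function.update_of_ne hx2,
              Function.update_self, Function.update_self]
          · rw [Function.update_of_ne hx, Function.update_of_ne hx,
              Function.update_of_ne hx2, Function.update_of_ne hx2,
              Function.update_of_ne hx3, Function.update_of_ne hx3]
    rw [show (∑ x, ((Function.update (Function.update (Function.update A.c.inn i l1)
          (i+1) l2) (i+1+1) l3) x).length)
        = ∑ x, Function.update (Function.update (Function.update (fun j => (A.c.inn j).length)
            i l1.length) (i+1) l2.length) (i+1+1) l3.length x by rw [← heq]]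
    exact sum_update3 _ (Ne.symm e1) (Ne.symm e21) (Ne.symm e2) _ _ _
  have := A.min c'
  unfold Cfg.cost at key this
  simp only [Good.inn] at hlt
  omega

end
end LGSQ
namespace LGSQ
section
variable {V : Type*} {G : SimpleGraph V} {n : ℕ} [NeZero n] {e : Fin n → Sym2 V}

@[simp] lemma blockOk_nil {e : Fin n → Sym2 V} {i : Fin n} {a b : V} :
    BlockOk G e i a b [] ↔ G.Adj a b := Iff.rfl
@[simp] lemma blockOk_one {e : Fin n → Sym2 V} {i : Fin n} {a b x : V} :
    BlockOk G e i a b [x] ↔ (x ∈ e i ∨ x ∈ e (i + 1)) ∧ G.Adj a x ∧ G.Adj x b := Iff.rfl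
@[simp] lemma blockOk_two {e : Fin n → Sym2 V} {i : Fin n} {a b x y : V} :
    BlockOk G e i a b [x, y] ↔
      x ∈ e i ∧ y ∈ e (i + 1) ∧ G.Adj a x ∧ G.Adj x y ∧ G.Adj y b := Iff.rfl

variable (A : Good G n)

/-- far at label distance two -/
lemma Good.far2 (i : Fin n) {u v : V} (hu : u ∈ A.e i) (hv : v ∈ A.e (i+1+1)) :
    u ≠ v ∧ ¬ G.Adj u v := by
  have hn4 := A.hn
  exact A.far i (i+1+1) (fin_ne_add2 hn4 i) (fin_ne_add1 hn4 (i+1))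
    (Ne.symm (fin_ne_add3 hn4 i)) u v hu hv

/-- P_B -/
lemma Good.pB (i : Fin n) (h : A.inn i ≠ []) : ¬ G.Adj (A.t i) (A.t (i+1)) := by
  intro hadj
  have := A.short1 i [] (blockOk_nil.2 hadj)
  simp at this
  exact h this

/-- P_A : `t i` vs second midpoint of block `i` -/
lemma Good.pA {i : Fin n} {x y : V} (h : A.inn i = [x, y]) :
    A.t i ≠ y ∧ ¬ G.Adj (A.t i) y := by
  have ok_i := A.ok i; rw [h] at ok_i
  obtain ⟨hx1, hy1, ha1, ha2, ha3⟩ := blockOk_two.1 ok_i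
  constructor
  · intro heq
    exact A.pB i (by rw [h]; simp) (by rw [heq]; exact ha3)
  · intro hadj
    have := A.short1 i [y] (blockOk_one.2 ⟨Or.inr hy1, hadj, ha3⟩)
    rw [h] at this; simp at this

/-- P_F : first midpoint of block `i` vs `t (i+1)` -/
lemma Good.pF {i : Fin n} {x y : V} (h : A.inn i = [x, y]) :
    A.t (i+1) ≠ x ∧ ¬ G.Adj x (A.t (i+1)) := by
  have ok_i := A.ok i; rw [h] at ok_i
  obtain ⟨hx1, hy1, ha1, ha2, ha3⟩ := blockOk_two.1 ok_i
  constructor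
  · intro heq
    exact A.pB i (by rw [h]; simp) (by rw [heq]; exact ha1)
  · intro hadj
    have := A.short1 i [x] (blockOk_one.2 ⟨Or.inl hx1, ha1, hadj⟩)
    rw [h] at this; simp at this

/-- P_C : `t i` vs left-labelled midpoint of block `i+1` -/
lemma Good.pC {i : Fin n} {x : V} (hx : x ∈ A.e (i+1))
    (hmid : A.inn (i+1) = [x] ∨ ∃ y, A.inn (i+1) = [x, y]) :
    A.t i ≠ x ∧ ¬ G.Adj (A.t i) x := by
  have hn4 := A.hn
  -- facts about block i+1
  have hxsucc : (G.Adj x (A.t (i+1+1)) ∧ A.inn (i+1) = [x]) ∨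
      (∃ y, A.inn (i+1) = [x, y] ∧ y ∈ A.e (i+1+1) ∧ G.Adj (A.t (i+1)) x ∧ G.Adj x y ∧
        G.Adj y (A.t (i+1+1))) := by
    rcases hmid with h1 | ⟨y, h2⟩
    · have ok1 := A.ok (i+1); rw [h1] at ok1
      obtain ⟨_, _, h⟩ := blockOk_one.1 ok1
      exact Or.inl ⟨h, h1⟩
    · have ok1 := A.ok (i+1); rw [h2] at ok1
      obtain ⟨_, hy1, ha1, ha2, ha3⟩ := blockOk_two.1 ok1
      exact Or.inr ⟨y, h2, hy1, ha1, ha2, ha3⟩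
  have hAdjTx : G.Adj (A.t (i+1)) x := by
    rcases hmid with h1 | ⟨y, h2⟩
    · have ok1 := A.ok (i+1); rw [h1] at ok1
      exact (blockOk_one.1 ok1).2.1
    · have ok1 := A.ok (i+1); rw [h2] at ok1
      exact (blockOk_two.1 ok1).2.2.1
  have hx_ne_t2 : x ≠ A.t (i+1+1) := by
    rcases hxsucc with ⟨h, _⟩ | ⟨y, h2, hy1, ha1, ha2, ha3⟩
    · exact h.ne
    · intro heq
      exact A.pB (i+1) (by rw [h2]; simp) (by rw [heq] at ha1; exact ha1)
  constructor
  · -- equality case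
    intro heq
    subst heq
    by_cases hinn : A.inn i = []
    · -- Adj (t i) continues; use far with block i+1+1's start
      rcases hxsucc with ⟨h, _⟩ | ⟨y, h2, hy1, ha1, ha2, ha3⟩
      · -- Adj (t i) (t (i+1+1)), t i ∈ e i
        exact (A.far2 i (A.ht i) (A.c.ht (i+1+1))).2 h
      · exact (A.far2 i (A.ht i) hy1).2 ha2
    · -- t i and t (i+1) both in e (i+1), distinct: adjacent, contradicting pB
      have := A.adj_of_mem hx (A.ht (i+1)) (A.tne i)
      exact A.pB i hinn this
  · -- adjacency case
    intro hadj
    have h1 : A.t i ≠ x := hadj.ne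
    rcases hxsucc with ⟨h, h1'⟩ | ⟨y, h2, hy1, ha1, ha2, ha3⟩
    · have := A.short2 i x hx h1 hx_ne_t2 [] []
        (blockOk_nil.2 hadj) (blockOk_nil.2 h)
      rw [h1'] at this; simp at this
    · have := A.short2 i x hx h1 hx_ne_t2 [] [y]
        (blockOk_nil.2 hadj) (blockOk_one.2 ⟨Or.inr hy1, ha2, ha3⟩)
      rw [h2] at this; simp at this

end
end LGSQ
namespace LGSQ
section
variable {V : Type*} {G : SimpleGraph V} {n : ℕ} [NeZero n] {e : Fin n → Sym2 V}
variable (A : Good G n)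

/-- facts about a left-labelled midpoint of block `i+1` -/
lemma Good.midL {i : Fin n} {v : V}
    (hmid : A.inn (i+1) = [v] ∨ ∃ y, A.inn (i+1) = [v, y]) :
    G.Adj (A.t (i+1)) v ∧ v ≠ A.t (i+1+1) ∧
    ∃ l2 : List V, l2.length + 1 = (A.inn (i+1)).length ∧
      BlockOk G A.e (i+1) v (A.t (i+1+1)) l2 := by
  rcases hmid with h1 | ⟨y, h2⟩
  · have ok1 := A.ok (i+1); rw [h1] at ok1
    obtain ⟨hm, ha1, ha2⟩ := blockOk_one.1 ok1
    exact ⟨ha1, ha2.ne, [], by rw [h1]; simp, blockOk_nil.2 ha2⟩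
  · have ok1 := A.ok (i+1); rw [h2] at ok1
    obtain ⟨hm, hy1, ha1, ha2, ha3⟩ := blockOk_two.1 ok1
    refine ⟨ha1, ?_, [y], by rw [h2]; simp, blockOk_one.2 ⟨Or.inr hy1, ha2, ha3⟩⟩
    intro heq
    exact A.pB (i+1) (by rw [h2]; simp) (by rw [heq] at ha1; exact ha1)

/-- P_G1 : left-labelled midpoint of block `i` vs left-labelled midpoint of block `i+1` -/
lemma Good.pG1 {i : Fin n} {x y : V}
    (hx : (A.inn i = [x] ∧ x ∈ A.e i) ∨ ∃ x₂, A.inn i = [x, x₂])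
    (hyl : y ∈ A.e (i+1))
    (hy : A.inn (i+1) = [y] ∨ ∃ y₂, A.inn (i+1) = [y, y₂]) :
    x ≠ y ∧ ¬ G.Adj x y := by
  obtain ⟨hAdjTy, hy_ne, l2, hl2len, hl2ok⟩ := A.midL hy
  have hxmem : x ∈ A.e i := by
    rcases hx with ⟨h1, hm⟩ | ⟨x₂, h2⟩
    · exact hm
    · have ok0 := A.ok i; rw [h2] at ok0
      exact (blockOk_two.1 ok0).1
  have hAdjtx : G.Adj (A.t i) x := by
    rcases hx with ⟨h1, _⟩ | ⟨x₂, h2⟩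
    · have ok0 := A.ok i; rw [h1] at ok0
      exact (blockOk_one.1 ok0).2.1
    · have ok0 := A.ok i; rw [h2] at ok0
      exact (blockOk_two.1 ok0).2.2.1
  have hlen : 1 ≤ (A.inn i).length := by
    rcases hx with ⟨h1, _⟩ | ⟨x₂, h2⟩
    · simp [h1]
    · simp [h2]
  constructor
  · intro heq
    subst heq
    have := A.short2 i x hyl hAdjtx.ne hy_ne [] l2 (blockOk_nil.2 hAdjtx) hl2ok
    simp only [List.length_nil] at this
    omega
  · intro hadj
    have h1 : A.t i ≠ y := (A.pC hyl hy).1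
    have := A.short2 i y hyl h1 hy_ne [x] l2
      (blockOk_one.2 ⟨Or.inl hxmem, hAdjtx, hadj⟩) hl2ok
    simp at this
    omega

/-- P_G2 : right-labelled length-1 midpoint of block `i` vs left midpoint of block `i+1` -/
lemma Good.pG2 {i : Fin n} {x y : V} (hx : A.inn i = [x]) (hxm : x ∈ A.e (i+1))
    (hyl : y ∈ A.e (i+1))
    (hy : A.inn (i+1) = [y] ∨ ∃ y₂, A.inn (i+1) = [y, y₂]) :
    x ≠ y ∧ ¬ G.Adj x y := by
  obtain ⟨hAdjTy, hy_ne, l2, hl2len, hl2ok⟩ := A.midL hy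
  have ok0 := A.ok i; rw [hx] at ok0
  obtain ⟨_, ha1, ha2⟩ := blockOk_one.1 ok0
  constructor
  · intro heq
    subst heq
    have := A.short2 i x hxm ha1.ne hy_ne [] l2 (blockOk_nil.2 ha1) hl2ok
    rw [hx] at this; simp at this
    omega
  · intro hadj
    -- x, y, t (i+1) three distinct elements of the 2-element edge e (i+1)
    rcases A.two_mem hyl (A.ht (i+1)) hxm (Ne.symm hAdjTy.ne) with h | h
    · exact hadj.ne h
    · exact ha2.ne h

/-- P_I : right-labelled length-1 midpoint of block `i` vs `t (i+1+1)` -/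
lemma Good.pI {i : Fin n} {x : V} (hx : A.inn i = [x]) (hxm : x ∈ A.e (i+1)) :
    x ≠ A.t (i+1+1) ∧ ¬ G.Adj x (A.t (i+1+1)) := by
  have ok0 := A.ok i; rw [hx] at ok0
  obtain ⟨_, ha1, ha2⟩ := blockOk_one.1 ok0
  constructor
  · intro heq
    -- look at the start of block i+1+1
    rcases blockOk_cases (A.ok (i+1+1)) with ⟨h0, hadj⟩ | ⟨z, h1, hmz, hb1, hb2⟩ |
      ⟨z, z', h2, hmz, hmz', hb1, hb2, hb3⟩
    · exact (A.far2 (i+1) hxm (A.c.ht (i+1+1+1))).2 (by rw [heq]; exact hadj)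
    · rcases hmz with hz | hz
      · have := A.short3 i x z hxm hz ha1.ne
          (by rw [heq]; exact hb1.ne) hb2.ne [] [] []
          (blockOk_nil.2 ha1) (blockOk_nil.2 (by rw [heq]; exact hb1))
          (blockOk_nil.2 hb2)
        rw [hx, h1] at this; simp at this
      · exact (A.far2 (i+1) hxm hz).2 (by rw [heq]; exact hb1)
    · have := A.short3 i x z hxm hmz ha1.ne
        (by rw [heq]; exact hb1.ne) (A.pF h2).1.symm [] [] [z']
        (blockOk_nil.2 ha1) (blockOk_nil.2 (by rw [heq]; exact hb1))
        (blockOk_one.2 ⟨Or.inr hmz', hb2, hb3⟩)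
      rw [hx, h2] at this; simp at this
  · intro hadj
    have := A.short2 i x hxm ha1.ne hadj.ne [] []
      (blockOk_nil.2 ha1) (blockOk_nil.2 hadj)
    rw [hx] at this; simp at this

/-- P_G3 : right length-1 midpoints of blocks `i` and `i+1` -/
lemma Good.pG3 {i : Fin n} {x y : V} (hx : A.inn i = [x]) (hxm : x ∈ A.e (i+1))
    (hy : A.inn (i+1) = [y]) (hym : y ∈ A.e (i+1+1)) :
    x ≠ y ∧ ¬ G.Adj x y := by
  have ok0 := A.ok i; rw [hx] at ok0
  obtain ⟨_, ha1, ha2⟩ := blockOk_one.1 ok0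
  have ok1 := A.ok (i+1); rw [hy] at ok1
  obtain ⟨_, hb1, hb2⟩ := blockOk_one.1 ok1
  constructor
  · intro heq
    subst heq
    have := A.short2 i x hxm ha1.ne hb2.ne [] []
      (blockOk_nil.2 ha1) (blockOk_nil.2 hb2)
    rw [hx, hy] at this; simp at this
  · intro hadj
    have := A.short2 i x hxm ha1.ne (A.pI hx hxm).1 [] [y]
      (blockOk_nil.2 ha1) (blockOk_one.2 ⟨Or.inr hym, hadj, hb2⟩)
    rw [hx, hy] at this; simp at this

/-- P_H : right length-1 midpoint of block `i` vs second midpoint of block `i+1` -/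
lemma Good.pH {i : Fin n} {x y y' : V} (hx : A.inn i = [x]) (hxm : x ∈ A.e (i+1))
    (hy : A.inn (i+1) = [y, y']) :
    x ≠ y' ∧ ¬ G.Adj x y' := by
  have ok0 := A.ok i; rw [hx] at ok0
  obtain ⟨_, ha1, ha2⟩ := blockOk_one.1 ok0
  have ok1 := A.ok (i+1); rw [hy] at ok1
  obtain ⟨hym, hy'm, hb1, hb2, hb3⟩ := blockOk_two.1 ok1
  constructor
  · intro heq
    subst heq
    have := A.short2 i x hxm ha1.ne hb3.ne [] []
      (blockOk_nil.2 ha1) (blockOk_nil.2 hb3)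
    rw [hx, hy] at this; simp at this
  · intro hadj
    have := A.short2 i x hxm ha1.ne (A.pI hx hxm).1 [] [y']
      (blockOk_nil.2 ha1) (blockOk_one.2 ⟨Or.inr hy'm, hadj, hb3⟩)
    rw [hx, hy] at this; simp at this

end
end LGSQ
namespace LGSQ
section
variable {V : Type*} {G : SimpleGraph V} {n : ℕ} [NeZero n] {e : Fin n → Sym2 V}
variable (A : Good G n)

/-- P_M : second midpoint of block `i` vs `t (i+1+1)` -/
lemma Good.pM {i : Fin n} {x x' : V} (hx : A.inn i = [x, x']) :
    x' ≠ A.t (i+1+1) ∧ ¬ G.Adj x' (A.t (i+1+1)) := by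
  have ok0 := A.ok i; rw [hx] at ok0
  obtain ⟨hxm, hx'm, ha1, ha2, ha3⟩ := blockOk_two.1 ok0
  have htne : A.t i ≠ x' := (A.pA hx).1
  constructor
  · intro heq
    rcases blockOk_cases (A.ok (i+1+1)) with ⟨h0, hadj⟩ | ⟨z, h1, hmz, hb1, hb2⟩ |
      ⟨z, z', h2, hmz, hmz', hb1, hb2, hb3⟩
    · exact (A.far2 (i+1) hx'm (A.c.ht (i+1+1+1))).2 (by rw [heq]; exact hadj)
    · rcases hmz with hz | hz
      · have := A.short3 i x' z hx'm hz htne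
          (by rw [heq]; exact hb1.ne) hb2.ne [x] [] []
          (blockOk_one.2 ⟨Or.inl hxm, ha1, ha2⟩)
          (blockOk_nil.2 (by rw [heq]; exact hb1)) (blockOk_nil.2 hb2)
        rw [hx, h1] at this; simp at this
      · exact (A.far2 (i+1) hx'm hz).2 (by rw [heq]; exact hb1)
    · have := A.short3 i x' z hx'm hmz htne
        (by rw [heq]; exact hb1.ne) (A.pF h2).1.symm [x] [] [z']
        (blockOk_one.2 ⟨Or.inl hxm, ha1, ha2⟩)
        (blockOk_nil.2 (by rw [heq]; exact hb1))
        (blockOk_one.2 ⟨Or.inr hmz', hb2, hb3⟩)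
      rw [hx, h2] at this; simp at this
  · intro hadj
    have := A.short2 i x' hx'm htne hadj.ne [x] []
      (blockOk_one.2 ⟨Or.inl hxm, ha1, ha2⟩) (blockOk_nil.2 hadj)
    rw [hx] at this; simp at this
    omega

/-- P_K1 : second midpoint of block `i` vs left-labelled midpoint of block `i+1` -/
lemma Good.pK1 {i : Fin n} {x x' y : V} (hx : A.inn i = [x, x'])
    (hyl : y ∈ A.e (i+1))
    (hy : A.inn (i+1) = [y] ∨ ∃ y₂, A.inn (i+1) = [y, y₂]) :
    x' ≠ y ∧ ¬ G.Adj x' y := by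
  have ok0 := A.ok i; rw [hx] at ok0
  obtain ⟨hxm, hx'm, ha1, ha2, ha3⟩ := blockOk_two.1 ok0
  obtain ⟨hAdjTy, hy_ne, l2, hl2len, hl2ok⟩ := A.midL hy
  constructor
  · intro heq
    subst heq
    have := A.short2 i x' hyl (A.pA hx).1 hy_ne [x] l2
      (blockOk_one.2 ⟨Or.inl hxm, ha1, ha2⟩) hl2ok
    rw [hx] at this; simp at this
    omega
  · intro hadj
    -- x', y, t (i+1) three distinct in e (i+1)
    rcases A.two_mem hyl (A.ht (i+1)) hx'm (Ne.symm hAdjTy.ne) with h | h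
    · exact hadj.ne h
    · exact ha3.ne h

/-- P_K2 : second midpoint of block `i` vs right length-1 midpoint of block `i+1` -/
lemma Good.pK2 {i : Fin n} {x x' y : V} (hx : A.inn i = [x, x'])
    (hy : A.inn (i+1) = [y]) (hym : y ∈ A.e (i+1+1)) :
    x' ≠ y ∧ ¬ G.Adj x' y := by
  have ok0 := A.ok i; rw [hx] at ok0
  obtain ⟨hxm, hx'm, ha1, ha2, ha3⟩ := blockOk_two.1 ok0
  have ok1 := A.ok (i+1); rw [hy] at ok1
  obtain ⟨_, hb1, hb2⟩ := blockOk_one.1 ok1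
  constructor
  · intro heq
    subst heq
    have := A.short2 i x' hx'm (A.pA hx).1 hb2.ne [x] []
      (blockOk_one.2 ⟨Or.inl hxm, ha1, ha2⟩) (blockOk_nil.2 hb2)
    rw [hx, hy] at this; simp at this
  · intro hadj
    have := A.short2 i x' hx'm (A.pA hx).1 (A.pM hx).1 [x] [y]
      (blockOk_one.2 ⟨Or.inl hxm, ha1, ha2⟩)
      (blockOk_one.2 ⟨Or.inr hym, hadj, hb2⟩)
    rw [hx, hy] at this; simp at this

/-- P_L : second midpoints of blocks `i` and `i+1` -/
lemma Good.pL {i : Fin n} {x x' y y' : V} (hx : A.inn i = [x, x'])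
    (hy : A.inn (i+1) = [y, y']) :
    x' ≠ y' ∧ ¬ G.Adj x' y' := by
  have ok0 := A.ok i; rw [hx] at ok0
  obtain ⟨hxm, hx'm, ha1, ha2, ha3⟩ := blockOk_two.1 ok0
  have ok1 := A.ok (i+1); rw [hy] at ok1
  obtain ⟨hym, hy'm, hb1, hb2, hb3⟩ := blockOk_two.1 ok1
  constructor
  · intro heq
    subst heq
    have := A.short2 i x' hx'm (A.pA hx).1 hb3.ne [x] []
      (blockOk_one.2 ⟨Or.inl hxm, ha1, ha2⟩) (blockOk_nil.2 hb3)
    rw [hx, hy] at this; simp at this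
  · intro hadj
    have := A.short2 i x' hx'm (A.pA hx).1 (A.pM hx).1 [x] [y']
      (blockOk_one.2 ⟨Or.inl hxm, ha1, ha2⟩)
      (blockOk_one.2 ⟨Or.inr hy'm, hadj, hb3⟩)
    rw [hx, hy] at this; simp at this

/-- tail block for a left-labelled midpoint of block `i+1+1`, plus successor adjacency info -/
lemma Good.midL2 {i : Fin n} {z : V}
    (hz : A.inn (i+1+1) = [z] ∨ ∃ z₂, A.inn (i+1+1) = [z, z₂]) :
    z ≠ A.t (i+1+1+1) ∧
    (∃ w, w ∈ A.e (i+1+1+1) ∧ G.Adj z w) ∧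
    ∃ l3 : List V, l3.length + 1 = (A.inn (i+1+1)).length ∧
      BlockOk G A.e (i+1+1) z (A.t (i+1+1+1)) l3 := by
  rcases hz with h1 | ⟨z₂, h2⟩
  · have ok2 := A.ok (i+1+1); rw [h1] at ok2
    obtain ⟨hm, hb1, hb2⟩ := blockOk_one.1 ok2
    exact ⟨hb2.ne, ⟨A.t (i+1+1+1), A.c.ht (i+1+1+1), hb2⟩,
      [], by rw [h1]; simp, blockOk_nil.2 hb2⟩
  · have ok2 := A.ok (i+1+1); rw [h2] at ok2
    obtain ⟨hm, hz2, hb1, hb2, hb3⟩ := blockOk_two.1 ok2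
    exact ⟨(A.pF h2).1.symm, ⟨z₂, hz2, hb2⟩,
      [z₂], by rw [h2]; simp, blockOk_one.2 ⟨Or.inr hz2, hb2, hb3⟩⟩

/-- P_N : second midpoint of block `i` vs left-labelled midpoint of block `i+1+1` -/
lemma Good.pN {i : Fin n} {x x' z : V} (hx : A.inn i = [x, x'])
    (hzl : z ∈ A.e (i+1+1))
    (hz : A.inn (i+1+1) = [z] ∨ ∃ z₂, A.inn (i+1+1) = [z, z₂]) :
    x' ≠ z ∧ ¬ G.Adj x' z := by
  have ok0 := A.ok i; rw [hx] at ok0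
  obtain ⟨hxm, hx'm, ha1, ha2, ha3⟩ := blockOk_two.1 ok0
  obtain ⟨hz_ne, ⟨w, hwm, hzw⟩, l3, hl3len, hl3ok⟩ := A.midL2 hz
  constructor
  · intro heq
    exact (A.far2 (i+1) hx'm hwm).2 (by rw [heq]; exact hzw)
  · intro hadj
    have := A.short3 i x' z hx'm hzl (A.pA hx).1 hadj.ne hz_ne [x] [] l3
      (blockOk_one.2 ⟨Or.inl hxm, ha1, ha2⟩) (blockOk_nil.2 hadj) hl3ok
    rw [hx] at this; simp at this
    omega

/-- P_N' : right length-1 midpoint of block `i` vs left-labelled midpoint of block `i+1+1` -/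
lemma Good.pN' {i : Fin n} {x z : V} (hx : A.inn i = [x]) (hxm : x ∈ A.e (i+1))
    (hzl : z ∈ A.e (i+1+1))
    (hz : A.inn (i+1+1) = [z] ∨ ∃ z₂, A.inn (i+1+1) = [z, z₂]) :
    x ≠ z ∧ ¬ G.Adj x z := by
  have ok0 := A.ok i; rw [hx] at ok0
  obtain ⟨_, ha1, ha2⟩ := blockOk_one.1 ok0
  obtain ⟨hz_ne, ⟨w, hwm, hzw⟩, l3, hl3len, hl3ok⟩ := A.midL2 hz
  constructor
  · intro heq
    exact (A.far2 (i+1) hxm hwm).2 (by rw [heq]; exact hzw)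
  · intro hadj
    have := A.short3 i x z hxm hzl ha1.ne hadj.ne hz_ne [] [] l3
      (blockOk_nil.2 ha1) (blockOk_nil.2 hadj) hl3ok
    rw [hx] at this; simp at this
    omega

end
end LGSQ
namespace LGSQ
section
variable {V : Type*} {G : SimpleGraph V} {n : ℕ} [NeZero n] {e : Fin n → Sym2 V}
variable (A : Good G n)

def Good.m (i : Fin n) : ℕ := (A.inn i).length + 1
def Good.g (i : Fin n) (j : ℕ) : V := (A.t i :: A.inn i).getD j (A.t i)

/-- position roles -/
lemma Good.role (i : Fin n) (j : ℕ) (hj : j < A.m i) :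
    (j = 0 ∧ A.g i j = A.t i) ∨
    (∃ x, A.inn i = [x] ∧ j = 1 ∧ A.g i j = x) ∨
    (∃ x y, A.inn i = [x, y] ∧ ((j = 1 ∧ A.g i j = x) ∨ (j = 2 ∧ A.g i j = y))) := by
  rcases blockOk_cases (A.ok i) with ⟨h0, _⟩ | ⟨x, h1, _⟩ | ⟨x, y, h2, _⟩
  · unfold Good.m at hj
    rw [h0] at hj; simp at hj
    subst hj
    exact Or.inl ⟨rfl, by unfold Good.g; simp⟩
  · unfold Good.m at hj
    rw [h1] at hj; simp at hj
    interval_cases j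
    · exact Or.inl ⟨rfl, by unfold Good.g; simp⟩
    · exact Or.inr (Or.inl ⟨x, h1, rfl, by unfold Good.g; rw [h1]; simp⟩)
  · unfold Good.m at hj
    rw [h2] at hj; simp at hj
    interval_cases j
    · exact Or.inl ⟨rfl, by unfold Good.g; simp⟩
    · exact Or.inr (Or.inr ⟨x, y, h2, Or.inl ⟨rfl, by unfold Good.g; rw [h2]; simp⟩⟩)
    · exact Or.inr (Or.inr ⟨x, y, h2, Or.inr ⟨rfl, by unfold Good.g; rw [h2]; simp⟩⟩)

lemma Good.gmem (i : Fin n) (j : ℕ) (hj : j < A.m i) :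
    A.g i j ∈ A.e i ∨ A.g i j ∈ A.e (i+1) := by
  rcases A.role i j hj with ⟨_, hg⟩ | ⟨x, h1, _, hg⟩ | ⟨x, y, h2, ⟨_, hg⟩ | ⟨_, hg⟩⟩
  · rw [hg]; exact Or.inl (A.ht i)
  · rw [hg]
    have ok0 := A.ok i; rw [h1] at ok0
    exact (blockOk_one.1 ok0).1
  · rw [hg]
    have ok0 := A.ok i; rw [h2] at ok0
    exact Or.inl (blockOk_two.1 ok0).1
  · rw [hg]
    have ok0 := A.ok i; rw [h2] at ok0
    exact Or.inr (blockOk_two.1 ok0).2.1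

/-- chain adjacency -/
lemma Good.chain_in (i : Fin n) (j : ℕ) (hj : j + 1 < A.m i) :
    G.Adj (A.g i j) (A.g i (j+1)) := by
  rcases blockOk_cases (A.ok i) with ⟨h0, _⟩ | ⟨x, h1, _, hb1, hb2⟩ |
      ⟨x, y, h2, _, _, hb1, hb2, hb3⟩
  · unfold Good.m at hj; rw [h0] at hj; simp at hj
  · unfold Good.m at hj; rw [h1] at hj; simp at hj
    have hj0 : j = 0 := by omega
    subst hj0
    unfold Good.g; rw [h1]; simpa using hb1
  · unfold Good.m at hj; rw [h2] at hj; simp at hj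
    have hj2 : j = 0 ∨ j = 1 := by omega
    rcases hj2 with rfl | rfl
    · unfold Good.g; rw [h2]; simpa using hb1
    · unfold Good.g; rw [h2]; simpa using hb2

lemma Good.chain_out (i : Fin n) (j : ℕ) (hj : j + 1 = A.m i) :
    G.Adj (A.g i j) (A.g (i+1) 0) := by
  have hg0 : A.g (i+1) 0 = A.t (i+1) := by unfold Good.g; simp
  rw [hg0]
  rcases blockOk_cases (A.ok i) with ⟨h0, hb⟩ | ⟨x, h1, _, hb1, hb2⟩ |
      ⟨x, y, h2, _, _, hb1, hb2, hb3⟩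
  · unfold Good.m at hj; rw [h0] at hj; simp at hj
    subst hj
    unfold Good.g; simpa using hb
  · unfold Good.m at hj; rw [h1] at hj; simp at hj
    subst hj
    unfold Good.g; rw [h1]; simpa using hb2
  · unfold Good.m at hj; rw [h2] at hj; simp at hj
    subst hj
    unfold Good.g; rw [h2]; simpa using hb3

/-- far at general distance -/
lemma Good.far3 (i : Fin n) (h4 : i+1+1+1+1 ≠ i) {u v : V}
    (hu : u ∈ A.e i) (hv : v ∈ A.e (i+1+1+1)) : u ≠ v ∧ ¬ G.Adj u v := by
  have hn4 := A.hn
  exact A.far i (i+1+1+1) (fin_ne_add3 hn4 i) (fin_ne_add2 hn4 (i+1)) (Ne.symm h4) u v hu hv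

lemma Good.farAll {i i' : Fin n} (hi1 : i' ≠ i) (hi2 : i' ≠ i+1) (hi3 : i' ≠ i+1+1)
    (hi4 : i ≠ i'+1) (hi5 : i ≠ i'+1+1) {u v : V}
    (hu : u ∈ A.e i ∨ u ∈ A.e (i+1)) (hv : v ∈ A.e i' ∨ v ∈ A.e (i'+1)) :
    u ≠ v ∧ ¬ G.Adj u v := by
  rcases hu with hu | hu <;> rcases hv with hv | hv
  · exact A.far i i' hi1 hi2 hi4 u v hu hv
  · exact A.far i (i'+1) (Ne.symm hi4) (fun h => hi1 (add_right_cancel h)) hi5 u v hu hv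
  · exact A.far (i+1) i' hi2 hi3 (fun h => hi1 (add_right_cancel h).symm) u v hu hv
  · exact A.far (i+1) (i'+1) (fun h => hi1 (add_right_cancel h))
      (fun h => hi2 (add_right_cancel h)) (fun h => hi4 (add_right_cancel h)) u v hu hv

end
end LGSQ
namespace LGSQ
section
variable {V : Type*} {G : SimpleGraph V} {n : ℕ} [NeZero n] {e : Fin n → Sym2 V}
variable (A : Good G n)

def Good.NextP (i : Fin n) (j : ℕ) (i' : Fin n) (j' : ℕ) : Prop :=
  (i' = i ∧ j' = j + 1 ∧ j + 1 < A.m i) ∨ (i' = i + 1 ∧ j' = 0 ∧ j + 1 = A.m i)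

/-- same-block pairs -/
lemma Good.big0 (i : Fin n) (j j' : ℕ) (hj : j < A.m i) (hj' : j' < A.m i)
    (hN : ¬ A.NextP i j i j') (hN' : ¬ A.NextP i j' i j) (hne : j ≠ j') :
    A.g i j ≠ A.g i j' ∧ ¬ G.Adj (A.g i j) (A.g i j') := by
  rcases A.role i j hj with ⟨rfl, hg⟩ | ⟨x, h1, rfl, hg⟩ | ⟨x, y, h2, ⟨rfl, hg⟩ | ⟨rfl, hg⟩⟩ <;>
    rcases A.role i j' hj' with ⟨rfl, hg'⟩ | ⟨x', h1', rfl, hg'⟩ |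
      ⟨x', y', h2', ⟨rfl, hg'⟩ | ⟨rfl, hg'⟩⟩
  · exact absurd rfl hne
  · exact absurd (Or.inl ⟨rfl, rfl, by unfold Good.m; rw [h1']; simp⟩) hN
  · exact absurd (Or.inl ⟨rfl, rfl, by unfold Good.m; rw [h2']; simp⟩) hN
  · rw [hg, hg']
    exact A.pA h2'
  · exact absurd (Or.inl ⟨rfl, rfl, by unfold Good.m; rw [h1]; simp⟩) hN'
  · exact absurd rfl hne
  · rw [h1] at h2'; simp at h2'
  · rw [h1] at h2'; simp at h2'
  · exact absurd (Or.inl ⟨rfl, rfl, by unfold Good.m; rw [h2]; simp⟩) hN'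
  · rw [h2] at h1'; simp at h1'
  · exact absurd rfl hne
  · exact absurd (Or.inl ⟨rfl, rfl, by unfold Good.m; rw [h2']; simp⟩) hN
  · rw [hg, hg']
    exact ⟨(A.pA h2).1.symm, fun h => (A.pA h2).2 h.symm⟩
  · rw [h2] at h1'; simp at h1'
  · exact absurd (Or.inl ⟨rfl, rfl, by unfold Good.m; rw [h2]; simp⟩) hN'
  · exact absurd rfl hne
end
end LGSQ
namespace LGSQ
section
variable {V : Type*} {G : SimpleGraph V} {n : ℕ} [NeZero n] {e : Fin n → Sym2 V}
variable (A : Good G n)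

lemma Good.mem1 {i : Fin n} {x : V} (h : A.inn i = [x]) :
    x ∈ A.e i ∨ x ∈ A.e (i+1) := by
  have ok0 := A.ok i; rw [h] at ok0
  exact (blockOk_one.1 ok0).1

lemma Good.mem2 {i : Fin n} {x y : V} (h : A.inn i = [x, y]) :
    x ∈ A.e i ∧ y ∈ A.e (i+1) := by
  have ok0 := A.ok i; rw [h] at ok0
  exact ⟨(blockOk_two.1 ok0).1, (blockOk_two.1 ok0).2.1⟩

/-- consecutive-block pairs -/
lemma Good.big1 (i : Fin n) (j j' : ℕ) (hj : j < A.m i) (hj' : j' < A.m (i+1))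
    (hN : ¬ A.NextP i j (i+1) j') :
    A.g i j ≠ A.g (i+1) j' ∧ ¬ G.Adj (A.g i j) (A.g (i+1) j') := by
  rcases A.role i j hj with ⟨rfl, hg⟩ | ⟨x, h1, rfl, hg⟩ | ⟨x, y, h2, ⟨rfl, hg⟩ | ⟨rfl, hg⟩⟩ <;>
    rcases A.role (i+1) j' hj' with ⟨rfl, hg'⟩ | ⟨x', h1', rfl, hg'⟩ |
      ⟨x', y', h2', ⟨rfl, hg'⟩ | ⟨rfl, hg'⟩⟩ <;> rw [hg, hg']
  -- (T, T')
  · by_cases hmi : 0 + 1 = A.m i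
    · exact absurd (Or.inr ⟨rfl, rfl, hmi⟩) hN
    · have hinne : A.inn i ≠ [] := by
        intro h; unfold Good.m at hmi; rw [h] at hmi; simp at hmi
      exact ⟨A.tne i, A.pB i hinne⟩
  -- (T, M1')
  · rcases A.mem1 h1' with hL | hR
    · exact A.pC hL (Or.inl h1')
    · exact A.far2 i (A.ht i) hR
  -- (T, M2F')
  · exact A.pC (A.mem2 h2').1 (Or.inr ⟨y', h2'⟩)
  -- (T, M2S')
  · exact A.far2 i (A.ht i) (A.mem2 h2').2
  -- (M1, T')
  · exact absurd (Or.inr ⟨rfl, rfl, by unfold Good.m; rw [h1]; simp⟩) hN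
  -- (M1, M1')
  · rcases A.mem1 h1 with hL | hR <;> rcases A.mem1 h1' with hL' | hR'
    · exact A.pG1 (Or.inl ⟨h1, hL⟩) hL' (Or.inl h1')
    · exact A.far2 i hL hR'
    · exact A.pG2 h1 hR hL' (Or.inl h1')
    · exact A.pG3 h1 hR h1' hR'
  -- (M1, M2F')
  · rcases A.mem1 h1 with hL | hR
    · exact A.pG1 (Or.inl ⟨h1, hL⟩) (A.mem2 h2').1 (Or.inr ⟨y', h2'⟩)
    · exact A.pG2 h1 hR (A.mem2 h2').1 (Or.inr ⟨y', h2'⟩)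
  -- (M1, M2S')
  · rcases A.mem1 h1 with hL | hR
    · exact A.far2 i hL (A.mem2 h2').2
    · exact A.pH h1 hR h2'
  -- (M2F, T')
  · exact ⟨(A.pF h2).1.symm, (A.pF h2).2⟩
  -- (M2F, M1')
  · rcases A.mem1 h1' with hL' | hR'
    · exact A.pG1 (Or.inr ⟨y, h2⟩) hL' (Or.inl h1')
    · exact A.far2 i (A.mem2 h2).1 hR'
  -- (M2F, M2F')
  · exact A.pG1 (Or.inr ⟨y, h2⟩) (A.mem2 h2').1 (Or.inr ⟨y', h2'⟩)
  -- (M2F, M2S')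
  · exact A.far2 i (A.mem2 h2).1 (A.mem2 h2').2
  -- (M2S, T')
  · exact absurd (Or.inr ⟨rfl, rfl, by unfold Good.m; rw [h2]; simp⟩) hN
  -- (M2S, M1')
  · rcases A.mem1 h1' with hL' | hR'
    · exact A.pK1 h2 hL' (Or.inl h1')
    · exact A.pK2 h2 h1' hR'
  -- (M2S, M2F')
  · exact A.pK1 h2 (A.mem2 h2').1 (Or.inr ⟨y', h2'⟩)
  -- (M2S, M2S')
  · exact A.pL h2 h2'
end
end LGSQ
namespace LGSQ
section
variable {V : Type*} {G : SimpleGraph V} {n : ℕ} [NeZero n] {e : Fin n → Sym2 V}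
variable (A : Good G n)

/-- blocks-two-apart pairs -/
lemma Good.big2 (i : Fin n) (j j' : ℕ) (hj : j < A.m i) (hj' : j' < A.m (i+1+1)) :
    A.g i j ≠ A.g (i+1+1) j' ∧ ¬ G.Adj (A.g i j) (A.g (i+1+1) j') := by
  have swap : ∀ {u v : V}, (v ≠ u ∧ ¬ G.Adj v u) → u ≠ v ∧ ¬ G.Adj u v :=
    fun h => ⟨h.1.symm, fun ha => h.2 ha.symm⟩
  rcases A.role i j hj with ⟨rfl, hg⟩ | ⟨x, h1, rfl, hg⟩ | ⟨x, y, h2, ⟨rfl, hg⟩ | ⟨rfl, hg⟩⟩ <;>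
    rcases A.role (i+1+1) j' hj' with ⟨rfl, hg'⟩ | ⟨x', h1', rfl, hg'⟩ |
      ⟨x', y', h2', ⟨rfl, hg'⟩ | ⟨rfl, hg'⟩⟩ <;> rw [hg, hg']
  -- (T, T')
  · exact A.far2 i (A.ht i) (A.ht (i+1+1))
  -- (T, M1')
  · rcases A.mem1 h1' with hL' | hR'
    · exact A.far2 i (A.ht i) hL'
    · by_cases h4 : i+1+1+1+1 = i
      · refine swap ?_
        have := A.pI h1' hR'
        rwa [show (i+1+1)+1+1 = i from h4] at this
      · exact A.far3 i h4 (A.ht i) hR'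
  -- (T, M2F')
  · exact A.far2 i (A.ht i) (A.mem2 h2').1
  -- (T, M2S')
  · by_cases h4 : i+1+1+1+1 = i
    · refine swap ?_
      have := A.pM h2'
      rwa [show (i+1+1)+1+1 = i from h4] at this
    · exact A.far3 i h4 (A.ht i) (A.mem2 h2').2
  -- (M1, T')
  · rcases A.mem1 h1 with hL | hR
    · exact A.far2 i hL (A.ht (i+1+1))
    · exact A.pI h1 hR
  -- (M1, M1')
  · rcases A.mem1 h1 with hL | hR
    · rcases A.mem1 h1' with hL' | hR'
      · exact A.far2 i hL hL'
      · by_cases h4 : i+1+1+1+1 = i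
        · refine swap ?_
          exact A.pN' h1' hR' (by rw [show (i+1+1)+1+1 = i from h4]; exact hL)
            (by rw [show (i+1+1)+1+1 = i from h4]; exact Or.inl h1)
        · exact A.far3 i h4 hL hR'
    · rcases A.mem1 h1' with hL' | hR'
      · exact A.pN' h1 hR hL' (Or.inl h1')
      · exact A.far2 (i+1) hR hR'
  -- (M1, M2F')
  · rcases A.mem1 h1 with hL | hR
    · exact A.far2 i hL (A.mem2 h2').1
    · exact A.pN' h1 hR (A.mem2 h2').1 (Or.inr ⟨y', h2'⟩)
  -- (M1, M2S')
  · rcases A.mem1 h1 with hL | hR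
    · by_cases h4 : i+1+1+1+1 = i
      · refine swap ?_
        exact A.pN h2' (by rw [show (i+1+1)+1+1 = i from h4]; exact hL)
          (by rw [show (i+1+1)+1+1 = i from h4]; exact Or.inl h1)
      · exact A.far3 i h4 hL (A.mem2 h2').2
    · exact A.far2 (i+1) hR (A.mem2 h2').2
  -- (M2F, T')
  · exact A.far2 i (A.mem2 h2).1 (A.ht (i+1+1))
  -- (M2F, M1')
  · rcases A.mem1 h1' with hL' | hR'
    · exact A.far2 i (A.mem2 h2).1 hL'
    · by_cases h4 : i+1+1+1+1 = i
      · refine swap ?_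
        exact A.pN' h1' hR' (by rw [show (i+1+1)+1+1 = i from h4]; exact (A.mem2 h2).1)
          (by rw [show (i+1+1)+1+1 = i from h4]; exact Or.inr ⟨y, h2⟩)
      · exact A.far3 i h4 (A.mem2 h2).1 hR'
  -- (M2F, M2F')
  · exact A.far2 i (A.mem2 h2).1 (A.mem2 h2').1
  -- (M2F, M2S')
  · by_cases h4 : i+1+1+1+1 = i
    · refine swap ?_
      exact A.pN h2' (by rw [show (i+1+1)+1+1 = i from h4]; exact (A.mem2 h2).1)
        (by rw [show (i+1+1)+1+1 = i from h4]; exact Or.inr ⟨y, h2⟩)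
    · exact A.far3 i h4 (A.mem2 h2).1 (A.mem2 h2').2
  -- (M2S, T')
  · exact A.pM h2
  -- (M2S, M1')
  · rcases A.mem1 h1' with hL' | hR'
    · exact A.pN h2 hL' (Or.inl h1')
    · exact A.far2 (i+1) (A.mem2 h2).2 hR'
  -- (M2S, M2F')
  · exact A.pN h2 (A.mem2 h2').1 (Or.inr ⟨y', h2'⟩)
  -- (M2S, M2S')
  · exact A.far2 (i+1) (A.mem2 h2).2 (A.mem2 h2').2
end
end LGSQ
namespace LGSQ
section
variable {V : Type*} {G : SimpleGraph V} {n : ℕ} [NeZero n] {e : Fin n → Sym2 V}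
variable (A : Good G n)

lemma Good.chain_next {i i' : Fin n} {j j' : ℕ} (h : A.NextP i j i' j') :
    G.Adj (A.g i j) (A.g i' j') := by
  rcases h with ⟨h1, h2, hlt⟩ | ⟨h1, h2, heq⟩
  · rw [h1, h2]; exact A.chain_in _ _ hlt
  · rw [h1, h2]; exact A.chain_out _ _ heq

lemma Good.big (i i' : Fin n) (j j' : ℕ) (hj : j < A.m i) (hj' : j' < A.m i')
    (hN : ¬ A.NextP i j i' j') (hN' : ¬ A.NextP i' j' i j)
    (hne : ¬ (i = i' ∧ j = j')) :
    A.g i j ≠ A.g i' j' ∧ ¬ G.Adj (A.g i j) (A.g i' j') := by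
  have swap : ∀ {u v : V}, (v ≠ u ∧ ¬ G.Adj v u) → u ≠ v ∧ ¬ G.Adj u v :=
    fun h => ⟨h.1.symm, fun ha => h.2 ha.symm⟩
  by_cases hii : i' = i
  · subst hii
    exact A.big0 _ j j' hj hj' hN hN' (fun h => hne ⟨rfl, h⟩)
  · by_cases h1 : i' = i + 1
    · subst h1; exact A.big1 _ j j' hj hj' hN
    · by_cases h1' : i = i' + 1
      · subst h1'; exact swap (A.big1 _ j' j hj' hj hN')
      · by_cases h2 : i' = i + 1 + 1
        · subst h2; exact A.big2 _ j j' hj hj'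
        · by_cases h2' : i = i' + 1 + 1
          · subst h2'; exact swap (A.big2 _ j' j hj' hj)
          · exact A.farAll hii h1 h2 h1' h2' (A.gmem i j hj) (A.gmem i' j' hj')

/-! ## Index arithmetic -/

open Fin.NatCast Fin.CommRing in
def Good.Mn : ℕ → ℕ := fun a => A.m ((a : Fin n))
def Good.cum : ℕ → ℕ := fun b => ∑ k ∈ Finset.range b, A.Mn k
def Good.L : ℕ := A.cum n

lemma Good.Mn_pos (a : ℕ) : 0 < A.Mn a := by unfold Good.Mn Good.m; omega

lemma Good.Mn_val (i : Fin n) : A.Mn i.val = A.m i := by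
  unfold Good.Mn; rw [Fin.cast_val_eq_self]

lemma Good.cum_mono {a b : ℕ} (h : a ≤ b) : A.cum a ≤ A.cum b :=
  Finset.sum_le_sum_of_subset (Finset.range_subset_range.2 h)

lemma Good.cum_succ (a : ℕ) : A.cum (a + 1) = A.cum a + A.Mn a :=
  Finset.sum_range_succ _ _

lemma Good.n_le_L : n ≤ A.L := by
  unfold Good.L Good.cum
  calc n = ∑ _k ∈ Finset.range n, 1 := by simp
  _ ≤ ∑ k ∈ Finset.range n, A.Mn k := Finset.sum_le_sum (fun k _ => A.Mn_pos k)

lemma Good.decomp_lt {i : Fin n} {j : ℕ} (hj : j < A.m i) : A.cum i.val + j < A.L := by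
  have h1 : A.cum i.val + j < A.cum (i.val + 1) := by
    rw [A.cum_succ, A.Mn_val]; omega
  exact lt_of_lt_of_le h1 (A.cum_mono i.isLt)

lemma Good.decomp_unique {a b ja jb : ℕ} (ha : a < n) (hb : b < n)
    (hja : ja < A.Mn a) (hjb : jb < A.Mn b)
    (heq : A.cum a + ja = A.cum b + jb) : a = b ∧ ja = jb := by
  rcases lt_trichotomy a b with h | h | h
  · exfalso
    have h1 : A.cum a + ja < A.cum (a+1) := by rw [A.cum_succ]; omega
    have h2 : A.cum (a+1) ≤ A.cum b := A.cum_mono h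
    omega
  · subst h; omega
  · exfalso
    have h1 : A.cum b + jb < A.cum (b+1) := by rw [A.cum_succ]; omega
    have h2 : A.cum (b+1) ≤ A.cum a := A.cum_mono h
    omega

lemma Good.decomp_exists_aux (b : ℕ) : ∀ p, p < A.cum b → ∃ a j, a < b ∧ j < A.Mn a ∧
    p = A.cum a + j := by
  induction b with
  | zero => intro p hp; simp [Good.cum] at hp
  | succ b ih =>
    intro p hp
    by_cases h : p < A.cum b
    · obtain ⟨a, j, h1, h2, h3⟩ := ih p h
      exact ⟨a, j, by omega, h2, h3⟩
    · refine ⟨b, p - A.cum b, by omega, ?_, by omega⟩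
      rw [A.cum_succ] at hp
      omega

lemma Good.decomp_exists {p : ℕ} (hp : p < A.L) : ∃ a j, a < n ∧ j < A.Mn a ∧
    p = A.cum a + j := A.decomp_exists_aux n p hp

/-- value of the successor position -/
lemma Good.next_val {i i' : Fin n} {j j' : ℕ} (hj : j < A.m i)
    (hnext : A.NextP i j i' j') :
    A.cum i'.val + j' = (A.cum i.val + j + 1) % A.L := by
  rcases hnext with ⟨h1, h2, hlt⟩ | ⟨h1, h2, heq⟩
  · rw [h1, h2]
    rw [Nat.mod_eq_of_lt (show A.cum i.val + j + 1 < A.L from by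
      have := A.decomp_lt hlt; omega)]
    omega
  · rw [h1, h2]
    by_cases hv : i.val + 1 < n
    · have hval : (i + 1).val = i.val + 1 := by
        rw [Fin.val_add, finValOne (n := n) (by have := A.hn; omega), Nat.mod_eq_of_lt hv]
      rw [hval, A.cum_succ, A.Mn_val]
      have hlt : A.cum (i.val + 1) < A.L := by
        have h1 : A.cum (i.val + 1) < A.cum (i.val + 2) := by
          rw [A.cum_succ (i.val+1)]
          have := A.Mn_pos (i.val + 1)
          omega
        have h2 : A.cum (i.val + 2) ≤ A.cum n := A.cum_mono (by omega)
        exact lt_of_lt_of_le h1 h2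
      rw [A.cum_succ, A.Mn_val] at hlt
      rw [Nat.mod_eq_of_lt (by omega)]
      omega
    · have hvn : i.val + 1 = n := by have := i.isLt; omega
      have hval : (i + 1).val = 0 := by
        rw [Fin.val_add, finValOne (n := n) (by have := A.hn; omega), hvn, Nat.mod_self]
      rw [hval]
      have hLeq : A.cum i.val + j + 1 = A.L := by
        have : A.cum (i.val + 1) = A.cum i.val + A.Mn i.val := A.cum_succ i.val
        rw [hvn] at this
        unfold Good.L
        rw [this, A.Mn_val]
        omega
      rw [hLeq, Nat.mod_self]
      simp [Good.cum]

/-- recognizing the successor position from values -/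
lemma Good.val_next {i i' : Fin n} {j j' : ℕ} (hj : j < A.m i) (hj' : j' < A.m i')
    (hval : A.cum i'.val + j' = (A.cum i.val + j + 1) % A.L) :
    A.NextP i j i' j' := by
  by_cases hlt : j + 1 < A.m i
  · have hN : A.NextP i j i (j+1) := Or.inl ⟨rfl, rfl, hlt⟩
    have h1 := A.next_val hj hN
    rw [← h1] at hval
    obtain ⟨ha, hb⟩ := A.decomp_unique i'.isLt i.isLt
      (by rw [A.Mn_val]; exact hj') (by rw [A.Mn_val]; exact hlt) hval
    have : i' = i := Fin.val_injective ha
    subst this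
    exact Or.inl ⟨rfl, hb, hlt⟩
  · have heq : j + 1 = A.m i := by omega
    have hN : A.NextP i j (i+1) 0 := Or.inr ⟨rfl, rfl, heq⟩
    have h1 := A.next_val hj hN
    rw [← h1] at hval
    obtain ⟨ha, hb⟩ := A.decomp_unique i'.isLt (i+1).isLt
      (by rw [A.Mn_val]; exact hj') (by rw [A.Mn_val]; unfold Good.m; omega) hval
    have : i' = i + 1 := Fin.val_injective ha
    subst this
    exact Or.inr ⟨rfl, hb, heq⟩
end
end LGSQ
namespace LGSQ
section
variable {V : Type*} {G : SimpleGraph V} {n : ℕ} [NeZero n] {e : Fin n → Sym2 V}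

open Fin.NatCast Fin.CommRing in
lemma fin_sub_val_one (hn : 2 ≤ n) (i j : Fin n) : (i - j).val = 1 ↔ i = j + 1 := by
  constructor
  · intro h
    have h2 : i - j = 1 := Fin.val_injective (by rw [h, finValOne hn])
    rw [sub_eq_iff_eq_add] at h2
    rw [h2]; ring
  · intro h
    subst h
    have h2 : j + 1 - j = 1 := by ring
    rw [h2, finValOne hn]

lemma fin_eq_add_one_iff (hn : 2 ≤ n) (p q : Fin n) :
    p = q + 1 ↔ p.val = (q.val + 1) % n := by
  have h : (q + 1).val = (q.val + 1) % n := by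
    rw [Fin.val_add, finValOne hn]
  constructor
  · intro hh; rw [hh, h]
  · intro hh; exact Fin.val_injective (by rw [h]; exact hh)

open Fin.NatCast Fin.CommRing in
lemma Good.embedding (A : Good G n) : ∃ L : ℕ, n ≤ L ∧ Nonempty (cycleGraph L ↪g G) := by
  have hn4 := A.hn
  have hL4 : 4 ≤ A.L := le_trans hn4 A.n_le_L
  haveI : NeZero A.L := ⟨by omega⟩
  have hL2 : 2 ≤ A.L := by omega
  have hdec : ∀ p : Fin A.L, ∃ s : Fin n × ℕ, s.2 < A.m s.1 ∧ A.cum s.1.val + s.2 = p.val := by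
    intro p
    obtain ⟨a, j, ha, hj, hp⟩ := A.decomp_exists p.isLt
    refine ⟨((a : Fin n), j), hj, ?_⟩
    show A.cum ((a : Fin n)).val + j = p.val
    rw [Fin.val_natCast, Nat.mod_eq_of_lt ha, hp]
  choose D hD1 hD2 using hdec
  set f : Fin A.L → V := fun p => A.g (D p).1 (D p).2 with hf
  have key1 : ∀ p q : Fin A.L, p = q + 1 ↔ A.NextP (D q).1 (D q).2 (D p).1 (D p).2 := by
    intro p q
    rw [fin_eq_add_one_iff hL2]
    constructor
    · intro h
      exact A.val_next (hD1 q) (hD1 p) (by rw [hD2 p, hD2 q]; exact h)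
    · intro h
      have := A.next_val (hD1 q) h
      rw [hD2 p, hD2 q] at this
      exact this
  have hDne : ∀ p q : Fin A.L, p ≠ q → ¬((D p).1 = (D q).1 ∧ (D p).2 = (D q).2) := by
    rintro p q hne ⟨h1, h2⟩
    exact hne (Fin.val_injective (by rw [← hD2 p, ← hD2 q, h1, h2]))
  have inj : Function.Injective f := by
    intro p q hfq
    by_contra hne
    by_cases hN : A.NextP (D p).1 (D p).2 (D q).1 (D q).2
    · have h2 : G.Adj (f p) (f q) := A.chain_next hN
      rw [hfq] at h2
      exact G.loopless.irrefl _ h2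
    · by_cases hN' : A.NextP (D q).1 (D q).2 (D p).1 (D p).2
      · have h2 : G.Adj (f q) (f p) := A.chain_next hN'
        rw [hfq] at h2
        exact G.loopless.irrefl _ h2
      · exact (A.big _ _ _ _ (hD1 p) (hD1 q) hN hN' (hDne p q hne)).1 hfq
  have rel : ∀ p q : Fin A.L, (cycleGraph A.L).Adj p q ↔ G.Adj (f p) (f q) := by
    intro p q
    rw [cycleGraph_adj', fin_sub_val_one hL2, fin_sub_val_one hL2]
    constructor
    · rintro (h | h)
      · exact (A.chain_next ((key1 p q).1 h)).symm
      · exact A.chain_next ((key1 q p).1 h)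
    · intro hadj
      by_contra hcyc
      push_neg at hcyc
      have hpq : p ≠ q := by
        rintro rfl
        exact G.loopless.irrefl _ hadj
      refine (A.big _ _ _ _ (hD1 p) (hD1 q) ?_ ?_ (hDne p q hpq)).2 hadj
      · intro hN
        exact hcyc.2 ((key1 q p).2 hN)
      · intro hN'
        exact hcyc.1 ((key1 p q).2 hN')
  exact ⟨A.L, A.n_le_L, ⟨⟨⟨f, inj⟩, fun {p q} => (rel p q).symm⟩⟩⟩
end
end LGSQ
namespace LGSQ
section
variable {V : Type*} {G : SimpleGraph V} {n : ℕ} [NeZero n]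

lemma exists_good (hn : 4 ≤ n) (e : Fin n → Sym2 V)
    (edge : ∀ i, e i ∈ G.edgeSet)
    (far : ∀ i j : Fin n, j ≠ i → j ≠ i + 1 → i ≠ j + 1 →
      ∀ u v, u ∈ e i → v ∈ e j → u ≠ v ∧ ¬ G.Adj u v)
    (near : ∀ i : Fin n, ∃ x y, x ∈ e i ∧ y ∈ e (i+1) ∧ (x = y ∨ G.Adj x y)) :
    Nonempty (Good G n) := by
  classical
  have eadj : ∀ (i : Fin n) (u v : V), u ∈ e i → v ∈ e i → u ≠ v → G.Adj u v := by
    intro i u v hu hv huv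
    have h := (Sym2.mem_and_mem_iff huv).1 ⟨hu, hv⟩
    have h2 := edge i
    rw [h] at h2
    exact h2
  choose xx yy hx hy hxy using near
  set t : Fin n → V := fun i => yy (i - 1) with hT
  have ht1 : ∀ i : Fin n, t (i + 1) = yy i := by
    intro i; show yy (i + 1 - 1) = yy i; rw [add_sub_cancel_right]
  have ht : ∀ i, t i ∈ e i := by
    intro i
    have h := hy (i - 1)
    rwa [sub_add_cancel] at h
  have touch : ∀ i : Fin n, t i ∈ e (i - 1) ∨ ∃ z, z ∈ e (i - 1) ∧ G.Adj z (t i) := by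
    intro i
    rcases hxy (i - 1) with heq | hadj
    · left
      show yy (i-1) ∈ e (i - 1)
      rw [← heq]; exact hx (i - 1)
    · right
      exact ⟨xx (i - 1), hx (i - 1), hadj⟩
  have tne : ∀ i, t i ≠ t (i + 1) := by
    intro i heq
    set b := i - 1 with hb
    have hib : i = b + 1 := by rw [hb, sub_add_cancel]
    have hi1 : i + 1 = b + 1 + 1 := by rw [hib]
    have hmem : t i ∈ e (b + 1 + 1) := by
      have h := ht (i+1)
      rw [← heq] at h
      rwa [hi1] at h
    have c1 : b + 1 + 1 ≠ b := fin_ne_add2 hn b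
    have c2 : b + 1 + 1 ≠ b + 1 := fin_ne_add1 hn (b+1)
    have c3 : b ≠ b + 1 + 1 + 1 := Ne.symm (fin_ne_add3 hn b)
    rcases touch i with hin | ⟨z, hz, hadj⟩
    · exact (far b (b+1+1) c1 c2 c3 (t i) (t i) hin hmem).1 rfl
    · exact (far b (b+1+1) c1 c2 c3 z (t i) hz hmem).2 hadj
  have hok : ∀ i, ∃ l, BlockOk G e i (t i) (t (i + 1)) l := by
    intro i
    rcases hxy i with heq | hadj
    · refine ⟨[], ?_⟩
      show G.Adj (t i) (t (i+1))
      rw [ht1 i]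
      have hyi : yy i ∈ e i := by rw [← heq]; exact hx i
      refine eadj i (t i) (yy i) (ht i) hyi ?_
      rw [← ht1 i]; exact tne i
    · by_cases hxt : t i = xx i
      · refine ⟨[], ?_⟩
        show G.Adj (t i) (t (i+1))
        rw [ht1 i, hxt]
        exact hadj
      · refine ⟨[xx i], blockOk_one.2 ⟨Or.inl (hx i), ?_, ?_⟩⟩
        · exact eadj i (t i) (xx i) (ht i) (hx i) hxt
        · rw [ht1 i]; exact hadj
  choose inn0 hinn0 using hok
  set c0 : Cfg G e := ⟨t, inn0, ht, tne, hinn0⟩ with hc0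
  -- minimal cost configuration
  set S : Set ℕ := {m | ∃ c : Cfg G e, c.cost = m} with hS
  have hSne : c0.cost ∈ S := ⟨c0, rfl⟩
  obtain ⟨c, hc⟩ : ∃ c : Cfg G e, c.cost = sInf S := Nat.sInf_mem ⟨c0.cost, hSne⟩
  refine ⟨⟨e, hn, edge, far, c, ?_⟩⟩
  intro c'
  rw [hc]
  exact Nat.sInf_le ⟨c', rfl⟩
end
end LGSQ

/-- If $k ≥ 4$ and G has no induced cycle of length at least k, then $L(G)^2$
has no induced cycle of length at least k. -/
theorem lineGraph_sq_no_long_induced_cycle {V : Type*} (G : SimpleGraph V)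
    (k : ℕ) (hk : 4 ≤ k) (hG : ∀ n, k ≤ n → ¬ G.HasInducedCycle n) :
    ∀ n, k ≤ n → ¬ (G.lineGraph.square).HasInducedCycle n := by
  rintro n hkn ⟨φ⟩
  haveI : NeZero n := ⟨by omega⟩
  have hn4 : 4 ≤ n := le_trans hk hkn
  have hn2 : 2 ≤ n := by omega
  set E : Fin n → G.edgeSet := fun i => φ i with hE
  set e : Fin n → Sym2 V := fun i => (E i : Sym2 V) with he
  have edge : ∀ i, e i ∈ G.edgeSet := fun i => (E i).2
  have cyc_iff : ∀ i j : Fin n, (cycleGraph n).Adj i j ↔ (i = j + 1 ∨ j = i + 1) := by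
    intro i j
    rw [cycleGraph_adj', LGSQ.fin_sub_val_one hn2, LGSQ.fin_sub_val_one hn2]
  have sq_adj : ∀ a b : G.edgeSet, (G.lineGraph.square).Adj a b ↔
      (a ≠ b ∧ (G.lineGraph.Adj a b ∨ ∃ w, G.lineGraph.Adj a w ∧ G.lineGraph.Adj w b)) :=
    fun a b => Iff.rfl
  have far : ∀ i j : Fin n, j ≠ i → j ≠ i + 1 → i ≠ j + 1 →
      ∀ u v, u ∈ e i → v ∈ e j → u ≠ v ∧ ¬ G.Adj u v := by
    intro i j h1 h2 h3 u v hu hv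
    have hne_ij : i ≠ j := fun h => h1 h.symm
    have hnadj : ¬ (cycleGraph n).Adj i j := by
      rw [cyc_iff]
      rintro (h | h)
      · exact h3 h
      · exact h2 h
    have hEne : E i ≠ E j := fun h => hne_ij (φ.injective h)
    have hnsq : ¬ (G.lineGraph.square).Adj (E i) (E j) :=
      fun h => hnadj (φ.map_rel_iff.1 h)
    have hnor : ¬ (G.lineGraph.Adj (E i) (E j) ∨
        ∃ w, G.lineGraph.Adj (E i) w ∧ G.lineGraph.Adj w (E j)) :=
      fun h => hnsq ((sq_adj _ _).2 ⟨hEne, h⟩)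
    constructor
    · rintro rfl
      exact hnor (Or.inl (SimpleGraph.lineGraph_adj_iff_exists.2 ⟨hEne, u, hu, hv⟩))
    · intro hadj
      have hw : s(u, v) ∈ G.edgeSet := G.mem_edgeSet.2 hadj
      set w : G.edgeSet := ⟨s(u, v), hw⟩ with hwdef
      have huin : u ∈ (w : Sym2 V) := by rw [hwdef]; simp
      have hvin : v ∈ (w : Sym2 V) := by rw [hwdef]; simp
      have hne1 : E i ≠ w := by
        intro hh
        have : v ∈ (E i : Sym2 V) := by rw [hh]; exact hvin
        exact hnor (Or.inl (SimpleGraph.lineGraph_adj_iff_exists.2 ⟨hEne, v, this, hv⟩))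
      have hne2 : w ≠ E j := by
        intro hh
        have : u ∈ (E j : Sym2 V) := by rw [← hh]; exact huin
        exact hnor (Or.inl (SimpleGraph.lineGraph_adj_iff_exists.2 ⟨hEne, u, hu, this⟩))
      refine hnor (Or.inr ⟨w, ?_, ?_⟩)
      · exact SimpleGraph.lineGraph_adj_iff_exists.2 ⟨hne1, u, hu, huin⟩
      · exact SimpleGraph.lineGraph_adj_iff_exists.2 ⟨hne2, v, hvin, hv⟩
  have near : ∀ i : Fin n, ∃ x y, x ∈ e i ∧ y ∈ e (i+1) ∧ (x = y ∨ G.Adj x y) := by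
    intro i
    have hadj_cyc : (cycleGraph n).Adj i (i+1) := (cyc_iff i (i+1)).2 (Or.inr rfl)
    have hsq : (G.lineGraph.square).Adj (E i) (E (i+1)) := φ.map_rel_iff.2 hadj_cyc
    rcases (sq_adj _ _).1 hsq with ⟨hne, hl | ⟨w, a1, a2⟩⟩
    · obtain ⟨_, v, hv1, hv2⟩ := SimpleGraph.lineGraph_adj_iff_exists.1 hl
      exact ⟨v, v, hv1, hv2, Or.inl rfl⟩
    · obtain ⟨ne1, x, hx1, hx2⟩ := SimpleGraph.lineGraph_adj_iff_exists.1 a1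
      obtain ⟨ne2, y, hy1, hy2⟩ := SimpleGraph.lineGraph_adj_iff_exists.1 a2
      by_cases hxy : x = y
      · exact ⟨x, y, hx1, hy2, Or.inl hxy⟩
      · have hwxy : (w : Sym2 V) = s(x, y) := (Sym2.mem_and_mem_iff hxy).1 ⟨hx2, hy1⟩
        have hadj : G.Adj x y := by
          have h2 := w.2
          rw [hwxy] at h2
          exact h2
        exact ⟨x, y, hx1, hy2, Or.inr hadj⟩
  obtain ⟨A⟩ := LGSQ.exists_good hn4 e edge far near
  obtain ⟨L, hL, hemb⟩ := A.embedding
  exact hG L (by omega) hemb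
end

section
/- Every tree-cograph has no induced cycle of length greater than four. -/
open SimpleGraph

/-- Tree-cographs: trees, complements of tree-cographs, and disjoint unions of
tree-cographs. -/
inductive TreeCograph : {V : Type} → SimpleGraph V → Prop
  | tree {V : Type} [Fintype V] (G : SimpleGraph V) : G.IsTree → TreeCograph G
  | compl {V : Type} (G : SimpleGraph V) : TreeCograph G → TreeCograph Gᶜ
  | union {V W : Type} (G : SimpleGraph V) (H : SimpleGraph W) :
      TreeCograph G → TreeCograph H → TreeCograph (G ⊕g H)

namespace TCAux

/-- Complement of an embedding. -/
def emCompl {V W : Type*} {A : SimpleGraph V} {G : SimpleGraph W} (f : A ↪g G) : Aᶜ ↪g Gᶜ where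
  toFun := f
  inj' := f.injective
  map_rel_iff' := by
    intro a b
    simp [compl_adj, f.injective.ne_iff, f.map_adj_iff]

lemma isAcyclic_of_embedding {V W : Type*} {A : SimpleGraph V} {G : SimpleGraph W}
    (f : A ↪g G) (hG : G.IsAcyclic) : A.IsAcyclic := by
  intro v c hc
  exact hG (c.map f.toHom) (hc.map f.injective)

lemma fin_val_add_one {m : ℕ} {u : Fin (m + 3)} (h : u.val < m + 2) :
    (u + 1).val = u.val + 1 := by
  rw [Fin.add_def, Fin.val_one]
  exact Nat.mod_eq_of_lt (by omega)

lemma cycleGraph_adj_succ {m : ℕ} (w : Fin (m + 3)) :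
    (cycleGraph (m + 3)).Adj w (w + 1) := by
  rw [cycleGraph_adj]
  right
  exact add_sub_cancel_left w 1

def shiftHom (m : ℕ) :
    pathGraph (m + 3) →g (cycleGraph (m + 3) \ fromEdgeSet {s(0, 1)}) where
  toFun i := i + 1
  map_rel' := by
    intro u v huv
    rw [pathGraph_adj] at huv
    have key : ∀ a b : Fin (m + 3), a.val + 1 = b.val →
        (cycleGraph (m + 3) \ fromEdgeSet {s((0 : Fin (m + 3)), 1)}).Adj (a + 1) (b + 1) := by
      intro a b hab
      have hav : a.val < m + 2 := by have := b.isLt; omega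
      have ha1 : (a + 1).val = a.val + 1 := fin_val_add_one hav
      have hb' : b = a + 1 := Fin.ext (by rw [ha1]; omega)
      subst hb'
      rw [sdiff_adj]
      refine ⟨cycleGraph_adj_succ _, ?_⟩
      rw [fromEdgeSet_adj]
      rintro ⟨hmem, -⟩
      simp only [Set.mem_singleton_iff, Sym2.eq, Sym2.rel_iff', Prod.mk.injEq,
        Prod.swap_prod_mk] at hmem
      rcases hmem with ⟨h1, h2⟩ | ⟨h1, h2⟩
      · have := congrArg Fin.val h1
        rw [ha1, Fin.val_zero] at this
        omega
      · have ha0 : a.val = 0 := by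
          have := congrArg Fin.val h1
          rw [ha1, Fin.val_one] at this
          omega
        have h2v := congrArg Fin.val h2
        rw [fin_val_add_one (by rw [ha1]; omega), ha1, Fin.val_zero, ha0] at h2v
        omega
    rcases huv with h' | h'
    · exact key u v h'
    · exact (key v u h').symm

lemma cycleGraph_not_isAcyclic {n : ℕ} (hn : 3 ≤ n) : ¬(cycleGraph n).IsAcyclic := by
  obtain ⟨m, rfl⟩ : ∃ m, n = m + 3 := ⟨n - 3, by omega⟩
  intro h
  have hadj : (cycleGraph (m + 3)).Adj 0 1 := by
    have := cycleGraph_adj_succ (m := m) 0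
    simpa using this
  have hb := isAcyclic_iff_forall_edge_isBridge.mp h ((mem_edgeSet _).mpr hadj)
  rw [isBridge_iff] at hb
  apply hb
  have hsurj : Function.Surjective (shiftHom m) := by
    intro x
    refine ⟨x - 1, ?_⟩
    show x - 1 + 1 = x
    exact sub_add_cancel x 1
  have hpre := (pathGraph_preconnected (m + 3)).map (shiftHom m) hsurj
  exact hpre 0 1

lemma not_isAcyclic_of_triangle {V : Type*} {G : SimpleGraph V} {a b c : V}
    (hab : G.Adj a b) (hbc : G.Adj b c) (hca : G.Adj c a) : ¬G.IsAcyclic := by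
  intro h
  have hp : (Walk.cons hab (Walk.cons hbc Walk.nil) : G.Walk a c).IsPath := by
    apply Walk.IsPath.mk'
    simp [Walk.support_cons, hab.ne, hbc.ne, hca.ne']
  have hm : ¬s(c, a) ∈ (Walk.cons hab (Walk.cons hbc Walk.nil) : G.Walk a c).edges := by
    simp only [Walk.edges_cons, Walk.edges_nil, List.mem_cons, List.not_mem_nil, or_false,
      Sym2.eq, Sym2.rel_iff', Prod.mk.injEq, Prod.swap_prod_mk]
    push_neg
    refine ⟨⟨?_, ?_⟩, ?_, ?_⟩ <;> intro hh <;> simp_all [hab.ne, hbc.ne, hca.ne, hca.ne']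
  exact h (Walk.cons hca (Walk.cons hab (Walk.cons hbc Walk.nil)))
    ((Walk.cons_isCycle_iff _ hca).mpr ⟨hp, hm⟩)

/-- `C5` is isomorphic to its complement. -/
def c5Iso : cycleGraph 5 ≃g (cycleGraph 5)ᶜ :=
  ⟨⟨fun i => 2 * i, fun i => 3 * i, by decide, by decide⟩, by decide⟩

lemma mod_ne_one {N x r : ℕ} (h : x = N + r ∨ x = r) (hr : r < N) (hr1 : r ≠ 1) :
    x % N ≠ 1 := by
  rcases h with rfl | rfl
  · rw [Nat.add_mod_left, Nat.mod_eq_of_lt hr]; exact hr1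
  · rw [Nat.mod_eq_of_lt hr]; exact hr1

lemma cycle_nonadj {m a b : ℕ} (ha : a < m + 2) (hb : b < m + 2)
    (h1 : (m + 2 - b + a) % (m + 2) ≠ 1) (h2 : (m + 2 - a + b) % (m + 2) ≠ 1)
    (hne : a ≠ b) : ((cycleGraph (m + 2))ᶜ).Adj ⟨a, ha⟩ ⟨b, hb⟩ := by
  rw [compl_adj]
  refine ⟨by simp [Fin.ext_iff, hne], ?_⟩
  rw [cycleGraph_adj]
  rintro (hh | hh)
  · apply h1
    have := congrArg Fin.val hh
    rw [Fin.sub_def] at this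
    simpa using this
  · apply h2
    have := congrArg Fin.val hh
    rw [Fin.sub_def] at this
    simpa using this

lemma compl_cycleGraph_not_isAcyclic {n : ℕ} (hn : 5 ≤ n) :
    ¬((cycleGraph n)ᶜ).IsAcyclic := by
  by_cases h5 : n = 5
  · subst h5
    intro h
    exact cycleGraph_not_isAcyclic (by norm_num)
      (isAcyclic_of_embedding c5Iso.toEmbedding h)
  · obtain ⟨m, rfl⟩ : ∃ m, n = m + 2 := ⟨n - 2, by omega⟩
    have hm : 4 ≤ m := by omega
    have h02 : ((cycleGraph (m + 2))ᶜ).Adj ⟨0, by omega⟩ ⟨2, by omega⟩ :=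
      cycle_nonadj _ _ (mod_ne_one (r := m) (by omega) (by omega) (by omega))
        (mod_ne_one (r := 2) (by omega) (by omega) (by omega)) (by omega)
    have h24 : ((cycleGraph (m + 2))ᶜ).Adj ⟨2, by omega⟩ ⟨4, by omega⟩ :=
      cycle_nonadj _ _ (mod_ne_one (r := m) (by omega) (by omega) (by omega))
        (mod_ne_one (r := 2) (by omega) (by omega) (by omega)) (by omega)
    have h40 : ((cycleGraph (m + 2))ᶜ).Adj ⟨4, by omega⟩ ⟨0, by omega⟩ :=
      cycle_nonadj _ _ (mod_ne_one (r := 4) (by omega) (by omega) (by omega))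
        (mod_ne_one (r := m - 2) (by omega) (by omega) (by omega)) (by omega)
    exact not_isAcyclic_of_triangle h02 h24 h40

lemma sum_emb_extract {n : ℕ} (hn : 0 < n) {α β : Type*} {G : SimpleGraph α}
    {H : SimpleGraph β} {A : SimpleGraph (Fin n)} (f : A ↪g (G ⊕g H))
    (hconst : ∀ i j : Fin n, (f i).isLeft = (f j).isLeft) :
    Nonempty (A ↪g G) ∨ Nonempty (A ↪g H) := by
  cases h0 : (f ⟨0, hn⟩).isLeft with
  | true =>
    left
    have hl : ∀ i, (f i).isLeft := fun i => by rw [hconst i ⟨0, hn⟩, h0]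
    refine ⟨⟨⟨fun i => (f i).getLeft (hl i), ?_⟩, ?_⟩⟩
    · intro i j h
      apply f.injective
      rw [← Sum.inl_getLeft (f i) (hl i), ← Sum.inl_getLeft (f j) (hl j)]
      exact congrArg Sum.inl h
    · intro i j
      conv_rhs => rw [← f.map_rel_iff, ← Sum.inl_getLeft (f i) (hl i),
        ← Sum.inl_getLeft (f j) (hl j)]
      exact Iff.rfl
  | false =>
    right
    have hr : ∀ i, (f i).isRight := fun i => by
      have := hconst i ⟨0, hn⟩
      rw [h0] at this
      cases hfi : f i <;> simp_all
    refine ⟨⟨⟨fun i => (f i).getRight (hr i), ?_⟩, ?_⟩⟩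
    · intro i j h
      apply f.injective
      rw [← Sum.inr_getRight (f i) (hr i), ← Sum.inr_getRight (f j) (hr j)]
      exact congrArg Sum.inr h
    · intro i j
      conv_rhs => rw [← f.map_rel_iff, ← Sum.inr_getRight (f i) (hr i),
        ← Sum.inr_getRight (f j) (hr j)]
      exact Iff.rfl

lemma cycle_sum {n : ℕ} (hn : 3 ≤ n) {α β : Type*} {G : SimpleGraph α}
    {H : SimpleGraph β} (f : cycleGraph n ↪g (G ⊕g H)) :
    Nonempty (cycleGraph n ↪g G) ∨ Nonempty (cycleGraph n ↪g H) := by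
  apply sum_emb_extract (by omega) f
  have adjside : ∀ a b : Fin n, (cycleGraph n).Adj a b → (f a).isLeft = (f b).isLeft := by
    intro a b hab
    have h2 : (G ⊕g H).Adj (f a) (f b) := f.map_rel_iff.mpr hab
    cases hfa : f a <;> cases hfb : f b <;> simp_all [SimpleGraph.sum]
  have hreach : ∀ i j : Fin n, (cycleGraph n).Reachable i j →
      (f i).isLeft = (f j).isLeft := by
    rintro i j ⟨w⟩
    induction w with
    | nil => rfl
    | cons h p ih => exact (adjside _ _ h).trans ih
  intro i j
  exact hreach i j (cycleGraph_preconnected i j)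

lemma compl_cycle_sum {n : ℕ} (hn : 5 ≤ n) {α β : Type*} {G : SimpleGraph α}
    {H : SimpleGraph β} (f : (cycleGraph n)ᶜ ↪g (G ⊕g H)) :
    Nonempty ((cycleGraph n)ᶜ ↪g G) ∨ Nonempty ((cycleGraph n)ᶜ ↪g H) := by
  obtain ⟨m, rfl⟩ : ∃ m, n = m + 2 := ⟨n - 2, by omega⟩
  apply sum_emb_extract (by omega) f
  by_contra hc
  push_neg at hc
  obtain ⟨i, j, hij⟩ := hc
  have key : ∀ a b : Fin (m + 2), (f a).isLeft ≠ (f b).isLeft →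
      (cycleGraph (m + 2)).Adj a b := by
    intro a b hab
    have hne : a ≠ b := fun h => hab (h ▸ rfl)
    have hnadj : ¬(G ⊕g H).Adj (f a) (f b) := by
      cases hfa : f a <;> cases hfb : f b <;> simp_all [SimpleGraph.sum]
    have h2 : ¬((cycleGraph (m + 2))ᶜ).Adj a b := fun h => hnadj (f.map_rel_iff.mpr h)
    rw [compl_adj] at h2
    push_neg at h2
    exact h2 hne
  have main : ∀ (S : Finset (Fin (m + 2))) (t : Fin (m + 2)),
      (∀ a ∈ S, (f a).isLeft ≠ (f t).isLeft) → S.card ≤ 2 := by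
    intro S t hS
    have hsub : S ⊆ (cycleGraph (m + 2)).neighborFinset t := by
      intro a ha
      rw [mem_neighborFinset]
      exact (key a t (hS a ha)).symm
    calc S.card ≤ _ := Finset.card_le_card hsub
      _ ≤ 2 := by
        rw [cycleGraph_neighborFinset]
        exact (Finset.card_insert_le _ _).trans (by simp)
  classical
  have hL := main (Finset.univ.filter (fun a => (f a).isLeft = (f i).isLeft)) j
    (fun a ha => by
      rw [Finset.mem_filter] at ha
      rw [ha.2]
      exact hij)
  have hR := main (Finset.univ.filter (fun a => ¬((f a).isLeft = (f i).isLeft))) i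
    (fun a ha => by
      rw [Finset.mem_filter] at ha
      exact ha.2)
  have hcard := Finset.card_filter_add_card_filter_not
    (s := (Finset.univ : Finset (Fin (m + 2))))
    (p := fun a => (f a).isLeft = (f i).isLeft)
  rw [Finset.card_univ, Fintype.card_fin] at hcard
  omega

/-- The key invariant: no induced long cycle and no induced complement of a long cycle. -/
lemma good_of_treeCograph : ∀ {V : Type} (G : SimpleGraph V), TreeCograph G →
    ∀ n, 5 ≤ n → IsEmpty (cycleGraph n ↪g G) ∧ IsEmpty ((cycleGraph n)ᶜ ↪g G) := by
  intro V G hG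
  induction hG with
  | tree G hT =>
    intro n hn
    constructor
    · constructor
      intro f
      exact cycleGraph_not_isAcyclic (by omega) (isAcyclic_of_embedding f hT.2)
    · constructor
      intro f
      exact compl_cycleGraph_not_isAcyclic hn (isAcyclic_of_embedding f hT.2)
  | compl G _ ih =>
    intro n hn
    obtain ⟨h1, h2⟩ := ih n hn
    constructor
    · constructor
      intro f
      have h := emCompl f
      rw [compl_compl] at h
      exact h2.false h
    · constructor
      intro f
      have h := emCompl f
      rw [compl_compl, compl_compl] at h
      exact h1.false h
  | union G H _ _ ihG ihH =>
    intro n hn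
    constructor
    · constructor
      intro f
      rcases cycle_sum (by omega) f with g | g
      · exact (ihG n hn).1.false g.some
      · exact (ihH n hn).1.false g.some
    · constructor
      intro f
      rcases compl_cycle_sum hn f with g | g
      · exact (ihG n hn).2.false g.some
      · exact (ihH n hn).2.false g.some

end TCAux


/-- Tree-cographs have no induced cycles of length more than four. -/
theorem treeCograph_no_long_induced_cycle {V : Type} (G : SimpleGraph V)
    (hG : TreeCograph G) : ∀ n, 4 < n → ¬ G.HasInducedCycle n := by
  intro n hn h
  exact (TCAux.good_of_treeCograph G hG n (by omega)).1.false h.some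
end

section
/- The complement of a tree (on any finite vertex set) has no induced cycle of length greater than four. -/
open SimpleGraph

/-- The complement of a finite tree has no induced cycle of length more than four. -/
theorem tree_compl_no_long_induced_cycle {V : Type*} [Fintype V]
    (T : SimpleGraph V) (hT : T.IsTree) :
    ∀ n, 4 < n → ¬ (Tᶜ).HasInducedCycle n := by
  rintro n hn ⟨f⟩
  -- Non-adjacent distinct vertices of the cycle map to T-adjacent vertices.
  have key : ∀ i j : Fin n, i ≠ j → ¬ (cycleGraph n).Adj i j → T.Adj (f i) (f j) := by
    intro i j hij hadj
    have h1 : ¬ (Tᶜ).Adj (f i) (f j) := fun h => hadj (f.map_adj_iff.mp h)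
    have h2 : f i ≠ f j := fun h => hij (f.injective h)
    rw [compl_adj] at h1
    push_neg at h1
    exact h1 h2
  have hn' : 5 ≤ n := hn
  -- indices 0 1 2 3 4
  let i0 : Fin n := ⟨0, by omega⟩
  let i1 : Fin n := ⟨1, by omega⟩
  let i2 : Fin n := ⟨2, by omega⟩
  let i3 : Fin n := ⟨3, by omega⟩
  let i4 : Fin n := ⟨4, by omega⟩
  have nadj : ∀ (a b : ℕ) (ha : a < n) (hb : b < n), 2 ≤ b - a → b - a ≤ n - 2 →
      ¬ (cycleGraph n).Adj ⟨a, ha⟩ ⟨b, hb⟩ := by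
    intro a b ha hb h2 h3 hadj
    rw [cycleGraph_adj'] at hadj
    rcases hadj with h | h
    · rw [Fin.sub_def] at h; simp only [Fin.val_mk] at h
      rcases Nat.lt_or_ge (n - b + a) n with hlt | hge
      · rw [Nat.mod_eq_of_lt hlt] at h; omega
      · rw [Nat.mod_eq_sub_mod hge, Nat.mod_eq_of_lt (by omega)] at h; omega
    · rw [Fin.sub_def] at h; simp only [Fin.val_mk] at h
      rcases Nat.lt_or_ge (n - a + b) n with hlt | hge
      · rw [Nat.mod_eq_of_lt hlt] at h; omega
      · rw [Nat.mod_eq_sub_mod hge, Nat.mod_eq_of_lt (by omega)] at h; omega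
  have n02 : ¬ (cycleGraph n).Adj i0 i2 := nadj 0 2 (by omega) (by omega) (by omega) (by omega)
  have n24 : ¬ (cycleGraph n).Adj i2 i4 := nadj 2 4 (by omega) (by omega) (by omega) (by omega)
  have n14 : ¬ (cycleGraph n).Adj i1 i4 := nadj 1 4 (by omega) (by omega) (by omega) (by omega)
  have n13 : ¬ (cycleGraph n).Adj i1 i3 := nadj 1 3 (by omega) (by omega) (by omega) (by omega)
  have n03 : ¬ (cycleGraph n).Adj i0 i3 := nadj 0 3 (by omega) (by omega) (by omega) (by omega)
  have h02 : T.Adj (f i0) (f i2) := key i0 i2 (by simp [i0, i2, Fin.ext_iff]) n02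
  have h24 : T.Adj (f i2) (f i4) := key i2 i4 (by simp [i2, i4, Fin.ext_iff]) n24
  have h41 : T.Adj (f i4) (f i1) := key i4 i1 (by simp [i4, i1, Fin.ext_iff]) (fun h => n14 h.symm)
  have h13 : T.Adj (f i1) (f i3) := key i1 i3 (by simp [i1, i3, Fin.ext_iff]) n13
  have h30 : T.Adj (f i3) (f i0) := key i3 i0 (by simp [i3, i0, Fin.ext_iff]) (fun h => n03 h.symm)
  -- build the 5-cycle in T
  let w : T.Walk (f i0) (f i0) :=
    Walk.cons h02 (Walk.cons h24 (Walk.cons h41 (Walk.cons h13 (Walk.cons h30 Walk.nil))))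
  have hne : ∀ i j : Fin n, i ≠ j → f i ≠ f j := fun i j hij h => hij (f.injective h)
  have hc : w.IsCycle := by
    have d02 := hne i0 i2 (by simp [i0, i2, Fin.ext_iff])
    have d04 := hne i0 i4 (by simp [i0, i4, Fin.ext_iff])
    have d01 := hne i0 i1 (by simp [i0, i1, Fin.ext_iff])
    have d03 := hne i0 i3 (by simp [i0, i3, Fin.ext_iff])
    have d24 := hne i2 i4 (by simp [i2, i4, Fin.ext_iff])
    have d21 := hne i2 i1 (by simp [i2, i1, Fin.ext_iff])
    have d23 := hne i2 i3 (by simp [i2, i3, Fin.ext_iff])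
    have d41 := hne i4 i1 (by simp [i4, i1, Fin.ext_iff])
    have d43 := hne i4 i3 (by simp [i4, i3, Fin.ext_iff])
    have d13 := hne i1 i3 (by simp [i1, i3, Fin.ext_iff])
    simp [w, Walk.isCycle_def, Walk.isTrail_def, List.nodup_cons, Sym2.eq, Sym2.rel_iff,
      d02, d04, d01, d03, d24, d21, d23, d41, d43, d13, d02.symm, d04.symm, d01.symm,
      d03.symm, d24.symm, d21.symm, d23.symm, d41.symm, d43.symm, d13.symm]
  exact hT.IsAcyclic w hc
end

section
/- Let T be a tree. Then L(complement of T)^2 is a complete graph; that is, for any two non-edges {a,b} and {p,q} of T, the corresponding vertices of L(complement of T) are at distance at most 2. -/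
open SimpleGraph

/-- In an acyclic graph, two length-2 paths between the same endpoints have the
same middle vertex. -/
lemma acyclic_mid_unique {V : Type*} {T : SimpleGraph V} (hT : T.IsAcyclic)
    {a b x y : V} (hab : a ≠ b)
    (h1 : T.Adj a x) (h2 : T.Adj x b) (h3 : T.Adj a y) (h4 : T.Adj y b) : x = y := by
  by_contra hxy
  have hP1 : (SimpleGraph.Walk.cons h1 (SimpleGraph.Walk.cons h2 SimpleGraph.Walk.nil)).IsPath := by
    simp [SimpleGraph.Walk.isPath_def, h1.ne, h2.ne, hab]
  have hP2 : (SimpleGraph.Walk.cons h3 (SimpleGraph.Walk.cons h4 SimpleGraph.Walk.nil)).IsPath := by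
    simp [SimpleGraph.Walk.isPath_def, h3.ne, h4.ne, hab]
  have := hT.path_unique ⟨_, hP1⟩ ⟨_, hP2⟩
  have hsupp := congrArg (fun p : T.Path a b => (p : T.Walk a b).support) this
  simp [SimpleGraph.Walk.support_cons] at hsupp
  have hx : x ∈ [a, y, b] := by
    rw [← hsupp]; simp
  simp at hx
  rcases hx with h | h | h
  · exact h1.ne' h
  · exact hxy h
  · exact h2.ne h

/-- For a finite tree T, $L(\overline{T})^2$ is complete: any two distinct non-edges
of T are at distance at most 2 in $L(\overline{T})$. -/
theorem lineGraph_compl_tree_sq_complete {V : Type*} [Fintype V]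
    (T : SimpleGraph V) (hT : T.IsTree) :
    ∀ e f : (Tᶜ).edgeSet, e ≠ f → ((Tᶜ).lineGraph.square).Adj e f := by
  rintro ⟨e', he⟩ ⟨f', hf⟩ hef
  induction e' using Sym2.ind with | _ a b =>
  induction f' using Sym2.ind with | _ p q =>
  have hab : Tᶜ.Adj a b := he
  have hpq : Tᶜ.Adj p q := hf
  refine ⟨hef, ?_⟩
  by_cases hsh : a = p ∨ a = q ∨ b = p ∨ b = q
  · left
    rw [SimpleGraph.lineGraph_adj_iff_exists]
    refine ⟨hef, ?_⟩
    rcases hsh with h | h | h | h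
    · exact ⟨a, by simp [h]⟩
    · exact ⟨a, by simp [h]⟩
    · exact ⟨b, by simp [h]⟩
    · exact ⟨b, by simp [h]⟩
  · push_neg at hsh
    obtain ⟨hap, haq, hbp, hbq⟩ := hsh
    have key : ∃ x y : V, (x = a ∨ x = b) ∧ (y = p ∨ y = q) ∧ ¬ T.Adj x y := by
      by_contra hall
      push_neg at hall
      have h1 : T.Adj a p := hall a p (Or.inl rfl) (Or.inl rfl)
      have h2 : T.Adj p b := (hall b p (Or.inr rfl) (Or.inl rfl)).symm
      have h3 : T.Adj a q := hall a q (Or.inl rfl) (Or.inr rfl)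
      have h4 : T.Adj q b := (hall b q (Or.inr rfl) (Or.inr rfl)).symm
      exact hpq.ne (acyclic_mid_unique hT.IsAcyclic hab.ne h1 h2 h3 h4)
    obtain ⟨x, y, hx, hy, hxy⟩ := key
    have hxney : x ≠ y := by
      rcases hx with rfl | rfl <;> rcases hy with rfl | rfl <;> assumption
    have hg : s(x, y) ∈ (Tᶜ).edgeSet := by
      rw [SimpleGraph.mem_edgeSet, SimpleGraph.compl_adj]
      exact ⟨hxney, hxy⟩
    right
    refine ⟨⟨s(x, y), hg⟩, ?_, ?_⟩
    · rw [SimpleGraph.lineGraph_adj_iff_exists]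
      constructor
      · intro hcontra
        have : s(a, b) = s(x, y) := congrArg Subtype.val hcontra
        rw [Sym2.eq_iff] at this
        rcases hy with rfl | rfl <;>
          rcases this with ⟨_, h⟩ | ⟨h, _⟩ <;> simp_all
      · exact ⟨x, by rcases hx with rfl | rfl <;> simp, by simp⟩
    · rw [SimpleGraph.lineGraph_adj_iff_exists]
      constructor
      · intro hcontra
        have : s(x, y) = s(p, q) := congrArg Subtype.val hcontra
        rw [Sym2.eq_iff] at this
        rcases hx with rfl | rfl <;>
          rcases this with ⟨h, _⟩ | ⟨_, h⟩ <;> simp_all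
      · exact ⟨y, by simp, by rcases hy with rfl | rfl <;> simp⟩
end

section
/- If T is a tree, then L(T)^2 is strongly chordal, i.e., chordal and containing no induced k-sun for any k ≥ 3. -/
open SimpleGraph

/-- The k-sun: a clique $c_1,…,c_k$ (the `Sum.inl` vertices) together with an
independent set $s_1,…,s_k$ (the `Sum.inr` vertices), where $s_i$ is adjacent
exactly to $c_i$ and $c_{i+1}$ (indices mod k). -/
def sunGraph (k : ℕ) : SimpleGraph (Fin k ⊕ Fin k) where
  Adj x y := match x, y with
    | Sum.inl i, Sum.inl j => i ≠ j
    | Sum.inl i, Sum.inr j => i.val = j.val ∨ i.val = (j.val + 1) % k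
    | Sum.inr i, Sum.inl j => j.val = i.val ∨ j.val = (i.val + 1) % k
    | Sum.inr _, Sum.inr _ => False
  symm := ⟨by
    rintro (i | i) (j | j) h
    · exact Ne.symm h
    · exact h
    · exact h
    · exact h⟩
  loopless := ⟨by
    rintro (i | i) h
    · exact h rfl
    · exact h⟩

/-- A graph is strongly chordal if it is chordal and has no induced k-sun, k ≥ 3. -/
def StronglyChordal {α : Type*} (G : SimpleGraph α) : Prop :=
  G.Chordal ∧ ∀ k, 3 ≤ k → IsEmpty (sunGraph k ↪g G)


section Aux
variable {V : Type*} {T : SimpleGraph V}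


private lemma dist_le_adj (hc : T.Connected) {a b rt : V} (h : T.Adj a b) :
    T.dist a rt ≤ T.dist b rt + 1 := by
  obtain ⟨p, _, hlen⟩ := hc.exists_path_of_dist b rt
  calc T.dist a rt ≤ (Walk.cons h p).length := SimpleGraph.dist_le _
    _ = T.dist b rt + 1 := by simp [hlen]

private lemma support_dist_lt (hc : T.Connected) {a rt b : V} {p : T.Walk a rt}
    (hp : p.length = T.dist a rt) (hb : b ∈ p.support) (hne : b ≠ a) :
    T.dist b rt < T.dist a rt := by
  classical
  have hsp := p.take_spec hb
  have hlen : (p.takeUntil b hb).length + (p.dropUntil b hb).length = T.dist a rt := by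
    have := congrArg Walk.length hsp
    rwa [Walk.length_append, hp] at this
  have h1 : T.dist b rt ≤ (p.dropUntil b hb).length := SimpleGraph.dist_le _
  have h2 : (p.takeUntil b hb).length ≠ 0 := by
    intro h0
    exact hne ((p.takeUntil b hb).eq_of_length_eq_zero h0).symm
  omega

/-- adjacent vertices have depths differing by exactly one -/
private lemma dep_adj (hT : T.IsTree) (rt : V) {a b : V} (h : T.Adj a b) :
    T.dist a rt = T.dist b rt + 1 ∨ T.dist b rt = T.dist a rt + 1 := by
  have hc := hT.isConnected
  have h1 := dist_le_adj hc (rt := rt) h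
  have h2 := dist_le_adj hc (rt := rt) h.symm
  rcases Nat.lt_trichotomy (T.dist a rt) (T.dist b rt) with hlt | heq | hlt
  · right; omega
  · exfalso
    obtain ⟨p, hp, hlen⟩ := hc.exists_path_of_dist a rt
    have hbp : b ∉ p.support := by
      intro hb
      have := support_dist_lt hc hlen hb h.ne'
      omega
    have hq : (Walk.cons h.symm p).IsPath := hp.cons hbp
    obtain ⟨r, hr, hrlen⟩ := hc.exists_path_of_dist b rt
    have huniq := hT.existsUnique_path b rt
    have heq2 : Walk.cons h.symm p = r := huniq.unique hq hr
    have : (Walk.cons h.symm p).length = r.length := by rw [heq2]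
    simp [hlen, hrlen] at this
    omega
  · left; omega

/-- uniqueness of the parent -/
private lemma parent_unique (hT : T.IsTree) (rt : V) {a w w' : V}
    (h1 : T.Adj a w) (h2 : T.Adj a w')
    (d1 : T.dist w rt + 1 = T.dist a rt) (d2 : T.dist w' rt + 1 = T.dist a rt) :
    w = w' := by
  by_contra hne
  have hc := hT.isConnected
  obtain ⟨p, hp, hlen⟩ := hc.exists_path_of_dist w rt
  obtain ⟨p', hp', hlen'⟩ := hc.exists_path_of_dist w' rt
  have hap : a ∉ p.support := by
    intro hmem
    rcases eq_or_ne a w with rfl | hna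
    · exact h1.ne rfl
    · have := support_dist_lt hc hlen hmem hna
      omega
  have hap' : a ∉ p'.support := by
    intro hmem
    rcases eq_or_ne a w' with rfl | hna
    · exact h2.ne rfl
    · have := support_dist_lt hc hlen' hmem hna
      omega
  have hq : (Walk.cons h1 p).IsPath := hp.cons hap
  have hq' : (Walk.cons h2 p').IsPath := hp'.cons hap'
  have huniq := hT.existsUnique_path a rt
  have heq : Walk.cons h1 p = Walk.cons h2 p' := (huniq.unique hq hq')
  have : (Walk.cons h1 p).getVert 1 = (Walk.cons h2 p').getVert 1 := by rw [heq]
  simp [Walk.getVert_cons_succ, Walk.getVert_zero] at this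
  exact hne this

/-- existence of the parent -/
private lemma parent_exists (hc : T.Connected) {rt v : V} {n : ℕ}
    (h : T.dist v rt = n + 1) : ∃ w, T.Adj v w ∧ T.dist w rt = n := by
  obtain ⟨p, hp, hlen⟩ := hc.exists_path_of_dist v rt
  cases p with
  | nil => rw [h] at hlen; simp at hlen
  | cons hadj q =>
    rename_i x
    refine ⟨x, hadj, ?_⟩
    have hq : T.dist x rt ≤ q.length := SimpleGraph.dist_le _
    have hlq : q.length = n := by
      have : q.length + 1 = n + 1 := by rw [← h, ← hlen]; simp
      omega
    have := dist_le_adj hc (rt := rt) hadj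
    omega


/-- two edges have points at distance at most 1 -/
private def nearPair (T : SimpleGraph V) (e f : Sym2 V) : Prop :=
  ∃ a b, a ∈ e ∧ b ∈ f ∧ (a = b ∨ T.Adj a b)

private lemma nearPair_symm {e f : Sym2 V} (h : nearPair T e f) : nearPair T f e := by
  obtain ⟨a, b, ha, hb, hab⟩ := h
  refine ⟨b, a, hb, ha, ?_⟩
  rcases hab with rfl | h'
  · exact Or.inl rfl
  · exact Or.inr h'.symm

private lemma sq_adj_iff {e f : T.edgeSet} :
    (T.lineGraph.square).Adj e f ↔ e ≠ f ∧ nearPair T (e : Sym2 V) (f : Sym2 V) := by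
  constructor
  · rintro ⟨hne, hadj | ⟨g, hg1, hg2⟩⟩
    · obtain ⟨-, x, hx1, hx2⟩ := lineGraph_adj_iff_exists.mp hadj
      exact ⟨hne, x, x, hx1, hx2, Or.inl rfl⟩
    · obtain ⟨-, x, hx1, hx2⟩ := lineGraph_adj_iff_exists.mp hg1
      obtain ⟨-, y, hy1, hy2⟩ := lineGraph_adj_iff_exists.mp hg2
      refine ⟨hne, x, y, hx1, hy2, ?_⟩
      rcases eq_or_ne x y with rfl | hxy
      · exact Or.inl rfl
      · right
        have : (g : Sym2 V) = s(x, y) := ((Sym2.mem_and_mem_iff hxy).mp ⟨hx2, hy1⟩)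
        have hg := g.2
        rw [this] at hg
        exact (SimpleGraph.mem_edgeSet T).mp hg
  · rintro ⟨hne, a, b, ha, hb, hab | hab⟩
    · subst hab
      exact ⟨hne, Or.inl (lineGraph_adj_iff_exists.mpr ⟨hne, a, ha, hb⟩)⟩
    · refine ⟨hne, ?_⟩
      have hgmem : s(a, b) ∈ T.edgeSet := (SimpleGraph.mem_edgeSet T).mpr hab
      set g : T.edgeSet := ⟨s(a, b), hgmem⟩ with hg
      rcases eq_or_ne g e with heq | hge
      · -- b ∈ e
        have hbe : b ∈ (e : Sym2 V) := by
          rw [← heq]; exact Sym2.mem_mk_right a b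
        exact Or.inl (lineGraph_adj_iff_exists.mpr ⟨hne, b, hbe, hb⟩)
      · rcases eq_or_ne g f with heq | hgf
        · have haf : a ∈ (f : Sym2 V) := by
            rw [← heq]; exact Sym2.mem_mk_left a b
          exact Or.inl (lineGraph_adj_iff_exists.mpr ⟨hne, a, ha, haf⟩)
        · have hag : a ∈ (g : Sym2 V) := Sym2.mem_mk_left a b
          have hbg : b ∈ (g : Sym2 V) := Sym2.mem_mk_right a b
          exact Or.inr ⟨g, lineGraph_adj_iff_exists.mpr ⟨Ne.symm hge, a, ha, hag⟩,
            lineGraph_adj_iff_exists.mpr ⟨hgf, b, hbg, hb⟩⟩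
/-- helper: get the two endpoints of an edge containing a -/
private lemma edge_other {f : Sym2 V} (hf : f ∈ T.edgeSet) {a : V} (ha : a ∈ f) :
    ∃ c, f = s(a, c) ∧ T.Adj a c := by
  refine ⟨Sym2.Mem.other ha, (Sym2.other_spec ha).symm, ?_⟩
  have := hf
  rw [← Sym2.other_spec ha] at this
  exact (SimpleGraph.mem_edgeSet T).mp this

/-- Lemma A: classification of low near-neighbours of the deepest edge -/
private lemma classify (hT : T.IsTree) (rt : V) {u p : V} (hup : T.Adj u p)
    (hdp : T.dist p rt + 1 = T.dist u rt)
    {f : Sym2 V} (hf : f ∈ T.edgeSet) (hfe : f ≠ s(u, p))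
    (hfd : ∀ v ∈ f, T.dist v rt ≤ T.dist u rt)
    (hnear : nearPair T f s(u, p)) :
    p ∈ f ∨ ∃ q, T.Adj p q ∧ T.dist q rt + 1 = T.dist p rt ∧ q ∈ f := by
  obtain ⟨a, b, ha, hb, hab⟩ := hnear
  rw [Sym2.mem_iff] at hb
  rcases hb with hb | hb <;> rw [hb] at hab
  · -- b = u
    rcases hab with rfl | hadj
    · -- a = u, so f = s(u,c) with c a parent of u, hence c = p
      obtain ⟨c, hfc, hac⟩ := edge_other hf ha
      have hcd : T.dist c rt ≤ T.dist a rt := hfd c (by rw [hfc]; simp)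
      have := dep_adj hT rt hac
      have hcp : T.dist c rt + 1 = T.dist a rt := by omega
      have : c = p := parent_unique hT rt hac hup hcp hdp
      subst this
      exact absurd hfc hfe
    · -- a adjacent to u, depth-bounded, so a = p
      have had : T.dist a rt ≤ T.dist u rt := hfd a ha
      have := dep_adj hT rt hadj
      have hap : T.dist a rt + 1 = T.dist u rt := by omega
      have : a = p := parent_unique hT rt hadj.symm hup hap hdp
      subst this
      exact Or.inl ha
  · -- b = p
    rcases hab with rfl | hadj
    · exact Or.inl ha
    · have := dep_adj hT rt hadj
      rcases this with h1 | h1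
      · -- dist a = dist p + 1 = dist u, so a is at depth of u; its parent in f must be p
        obtain ⟨c, hfc, hac⟩ := edge_other hf ha
        have hcd : T.dist c rt ≤ T.dist u rt := hfd c (by rw [hfc]; simp)
        have := dep_adj hT rt hac
        have hcp : T.dist c rt + 1 = T.dist a rt := by omega
        have hpa : T.dist p rt + 1 = T.dist a rt := by omega
        have : c = p := parent_unique hT rt hac hadj hcp hpa
        subst this
        exact Or.inl (by rw [hfc]; simp)
      · -- a is a parent of p
        exact Or.inr ⟨a, hadj.symm, by omega, ha⟩

/-- Simpliciality: two low near-neighbours of the deepest edge are near each other -/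
private lemma lemA_pair (hT : T.IsTree) (rt : V) {u p : V} (hup : T.Adj u p)
    (hdp : T.dist p rt + 1 = T.dist u rt)
    {f g : Sym2 V} (hf : f ∈ T.edgeSet) (hg : g ∈ T.edgeSet)
    (hfe : f ≠ s(u, p)) (hge : g ≠ s(u, p))
    (hfd : ∀ v ∈ f, T.dist v rt ≤ T.dist u rt) (hgd : ∀ v ∈ g, T.dist v rt ≤ T.dist u rt)
    (hnf : nearPair T f s(u, p)) (hng : nearPair T g s(u, p)) :
    nearPair T f g := by
  rcases classify hT rt hup hdp hf hfe hfd hnf with hpf | ⟨q, hq1, hq2, hq3⟩ <;>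
    rcases classify hT rt hup hdp hg hge hgd hng with hpg | ⟨q', hq1', hq2', hq3'⟩
  · exact ⟨p, p, hpf, hpg, Or.inl rfl⟩
  · exact ⟨p, q', hpf, hq3', Or.inr hq1'⟩
  · exact ⟨q, p, hq3, hpg, Or.inr hq1.symm⟩
  · have : q = q' := parent_unique hT rt hq1 hq1' hq2 hq2'
    subst this
    exact ⟨q, q, hq3, hq3', Or.inl rfl⟩

/-- h is far from the edge s(u,p) -/
private def farPair (T : SimpleGraph V) (h : Sym2 V) (u p : V) : Prop :=
  ∀ a ∈ h, (a ≠ u ∧ ¬T.Adj a u) ∧ (a ≠ p ∧ ¬T.Adj a p)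

private lemma farPair_of_not_nearPair {h : Sym2 V} {u p : V}
    (hn : ¬ nearPair T h s(u, p)) : farPair T h u p := by
  intro a ha
  refine ⟨⟨fun hx => hn ⟨a, u, ha, by simp, Or.inl hx⟩,
           fun hx => hn ⟨a, u, ha, by simp, Or.inr hx⟩⟩,
          ⟨fun hx => hn ⟨a, p, ha, by simp, Or.inl hx⟩,
           fun hx => hn ⟨a, p, ha, by simp, Or.inr hx⟩⟩⟩

/-- a "type 0" edge (a pendant edge at p at maximal depth) has no far low neighbour -/
private lemma type0_no_far (hT : T.IsTree) (rt : V) {u p c : V} (hup : T.Adj u p)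
    (hdp : T.dist p rt + 1 = T.dist u rt) (hpc : T.Adj p c) (hdc : T.dist c rt = T.dist u rt)
    {h : Sym2 V} (hh : h ∈ T.edgeSet)
    (hhd : ∀ v ∈ h, T.dist v rt ≤ T.dist u rt)
    (hfar : farPair T h u p) (hn : nearPair T h s(p, c)) : False := by
  obtain ⟨a, b, ha, hb, hab⟩ := hn
  rw [Sym2.mem_iff] at hb
  rcases hb with hb | hb <;> rw [hb] at hab
  · rcases hab with rfl | hadj
    · exact (hfar a ha).2.1 rfl
    · exact (hfar a ha).2.2 hadj
  · rcases hab with rfl | hadj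
    · exact (hfar a ha).2.2 hpc.symm
    · have had : T.dist a rt ≤ T.dist u rt := hhd a ha
      have := dep_adj hT rt hadj
      have hac : T.dist a rt + 1 = T.dist c rt := by omega
      have hpc' : T.dist p rt + 1 = T.dist c rt := by omega
      have : a = p := parent_unique hT rt hadj.symm hpc.symm hac hpc'
      exact (hfar a ha).2.1 this

/-- a far low neighbour of a type I/II edge contains a vertex near q -/
private lemma far_nbr_near_q (hT : T.IsTree) (rt : V) {u p q x : V} (hup : T.Adj u p)
    (hdp : T.dist p rt + 1 = T.dist u rt)
    (hdq : T.dist q rt + 1 = T.dist p rt)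
    (hqx : T.Adj q x) (hdx : T.dist x rt = T.dist p rt)
    {h : Sym2 V} (hh : h ∈ T.edgeSet)
    (hhd : ∀ v ∈ h, T.dist v rt ≤ T.dist u rt)
    (hfar : farPair T h u p) (hn : nearPair T h s(q, x)) :
    ∃ a ∈ h, (a = q ∨ T.Adj a q) := by
  obtain ⟨a, b, ha, hb, hab⟩ := hn
  rw [Sym2.mem_iff] at hb
  rcases hb with hb | hb <;> rw [hb] at hab
  · exact ⟨a, ha, hab⟩
  · rcases hab with rfl | hadj
    · exact ⟨a, ha, Or.inr hqx.symm⟩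
    · have had : T.dist a rt ≤ T.dist u rt := hhd a ha
      have h1 := dep_adj hT rt hadj
      rcases h1 with h1 | h1
      · -- dist a = dist x + 1 = dist u : a is at bottom level; its parent in h is x
        obtain ⟨y, hhy, hay⟩ := edge_other hh ha
        have hyd : T.dist y rt ≤ T.dist u rt := hhd y (by rw [hhy]; simp)
        have := dep_adj hT rt hay
        have hy1 : T.dist y rt + 1 = T.dist a rt := by omega
        have hx1 : T.dist x rt + 1 = T.dist a rt := by omega
        have : y = x := parent_unique hT rt hay hadj hy1 hx1
        subst this
        exact ⟨y, by rw [hhy]; simp, Or.inr hqx.symm⟩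
      · -- dist a + 1 = dist x : a is a parent of x, hence a = q
        have hq1 : T.dist q rt + 1 = T.dist x rt := by omega
        have ha1 : T.dist a rt + 1 = T.dist x rt := by omega
        have : a = q := parent_unique hT rt hadj.symm hqx.symm ha1 hq1
        exact ⟨a, ha, Or.inl this⟩

/-- resolution of a near neighbour of the deepest edge which has a far low neighbour -/
private lemma resolve (hT : T.IsTree) (rt : V) {u p : V} (hup : T.Adj u p)
    (hdp : T.dist p rt + 1 = T.dist u rt)
    {f h : Sym2 V} (hf : f ∈ T.edgeSet) (hfe : f ≠ s(u, p))
    (hfd : ∀ v ∈ f, T.dist v rt ≤ T.dist u rt) (hnf : nearPair T f s(u, p))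
    (hh : h ∈ T.edgeSet) (hhd : ∀ v ∈ h, T.dist v rt ≤ T.dist u rt)
    (hfar : farPair T h u p) (hnh : nearPair T h f) :
    ∃ q x, T.Adj p q ∧ T.dist q rt + 1 = T.dist p rt ∧ f = s(q, x) ∧ T.Adj q x ∧
      (T.dist x rt = T.dist p rt ∨ T.dist x rt + 1 = T.dist q rt) := by
  rcases classify hT rt hup hdp hf hfe hfd hnf with hpf | ⟨q, hq1, hq2, hq3⟩
  · obtain ⟨x0, hfx, hpx⟩ := edge_other hf hpf
    have hx0d : T.dist x0 rt ≤ T.dist u rt := hfd x0 (by rw [hfx]; simp)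
    rcases dep_adj hT rt hpx with h1 | h1
    · -- x0 is a parent of p : f = s(p, q)
      refine ⟨x0, p, hpx, by omega, by rw [hfx, Sym2.eq_swap], hpx.symm, Or.inl rfl⟩
    · -- x0 at depth of u : type 0, impossible
      exact absurd (type0_no_far hT rt hup hdp hpx (by omega) hh hhd hfar
        (by rwa [← hfx])) not_false
  · obtain ⟨x, hfx, hqx⟩ := edge_other hf hq3
    have hxd : T.dist x rt ≤ T.dist u rt := hfd x (by rw [hfx]; simp)
    rcases dep_adj hT rt hqx with h1 | h1
    · exact ⟨q, x, hq1, hq2, hfx, hqx, Or.inr (by omega)⟩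
    · exact ⟨q, x, hq1, hq2, hfx, hqx, Or.inl (by omega)⟩

/-- Lemma B : the strong-chordality exchange property at the deepest edge -/
private lemma lemB (hT : T.IsTree) (rt : V) {u p : V} (hup : T.Adj u p)
    (hdp : T.dist p rt + 1 = T.dist u rt)
    {f g h h' : Sym2 V} (hf : f ∈ T.edgeSet) (hg : g ∈ T.edgeSet)
    (hh : h ∈ T.edgeSet) (hh' : h' ∈ T.edgeSet)
    (hfe : f ≠ s(u, p)) (hge : g ≠ s(u, p)) (hfg : f ≠ g)
    (hfd : ∀ v ∈ f, T.dist v rt ≤ T.dist u rt) (hgd : ∀ v ∈ g, T.dist v rt ≤ T.dist u rt)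
    (hhd : ∀ v ∈ h, T.dist v rt ≤ T.dist u rt) (hh'd : ∀ v ∈ h', T.dist v rt ≤ T.dist u rt)
    (hnf : nearPair T f s(u, p)) (hng : nearPair T g s(u, p))
    (hnh : nearPair T h f) (hnh' : nearPair T h' g)
    (hfarh : farPair T h u p) (hfarh' : farPair T h' u p) :
    nearPair T h g ∨ nearPair T h' f := by
  obtain ⟨q, xf, hq1, hq2, hfeq, hqxf, hxf⟩ :=
    resolve hT rt hup hdp hf hfe hfd hnf hh hhd hfarh hnh
  obtain ⟨q', xg, hq1', hq2', hgeq, hqxg, hxg⟩ :=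
    resolve hT rt hup hdp hg hge hgd hng hh' hh'd hfarh' hnh'
  have hqq : q = q' := parent_unique hT rt hq1 hq1' hq2 hq2'
  subst hqq
  rcases hxf with hxf | hxf
  · -- f is type I/II
    obtain ⟨a, ha, haq⟩ := far_nbr_near_q hT rt hup hdp hq2 hqxf hxf hh hhd hfarh
      (by rwa [← hfeq])
    exact Or.inl ⟨a, q, ha, by rw [hgeq]; simp, haq⟩
  · rcases hxg with hxg | hxg
    · -- g is type I/II
      obtain ⟨a, ha, haq⟩ := far_nbr_near_q hT rt hup hdp hq2' hqxg hxg hh' hh'd hfarh'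
        (by rwa [← hgeq])
      exact Or.inr ⟨a, q, ha, by rw [hfeq]; simp, haq⟩
    · -- both type III : f = g, contradiction
      exfalso
      have : xf = xg := parent_unique hT rt hqxf hqxg hxf hxg
      subst this
      exact hfg (by rw [hfeq, hgeq])

private noncomputable def med (T : SimpleGraph V) (rt : V) : Sym2 V → ℕ :=
  Sym2.lift ⟨fun a b => max (T.dist a rt) (T.dist b rt), fun a b => max_comm _ _⟩

private lemma med_ge {rt : V} {e : Sym2 V} {v : V} (hv : v ∈ e) :
    T.dist v rt ≤ med T rt e := by
  induction e with
  | _ x y =>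
    rw [Sym2.mem_iff] at hv
    rcases hv with rfl | rfl
    · exact le_max_left _ _
    · exact le_max_right _ _

private lemma med_le {rt : V} {e : Sym2 V} {c : ℕ} (h : ∀ v ∈ e, T.dist v rt ≤ c) :
    med T rt e ≤ c := by
  induction e with
  | _ x y => exact max_le (h x (by simp)) (h y (by simp))

private lemma deepest_edge (hT : T.IsTree) (rt : V) {e : Sym2 V} (he : e ∈ T.edgeSet) :
    ∃ u p, e = s(u, p) ∧ T.Adj u p ∧ T.dist p rt + 1 = T.dist u rt ∧
      T.dist u rt = med T rt e := by
  induction e with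
  | _ x y =>
    have hadj : T.Adj x y := (SimpleGraph.mem_edgeSet T).mp he
    rcases dep_adj hT rt hadj with h1 | h1
    · exact ⟨x, y, rfl, hadj, h1.symm, by simp [med]; omega⟩
    · exact ⟨y, x, Sym2.eq_swap, hadj.symm, h1.symm, by simp [med]; omega⟩

private lemma embKey (hT : T.IsTree) {ι : Type*} [Fintype ι] [Nonempty ι]
    {H : SimpleGraph ι} (emb : H ↪g T.lineGraph.square) :
    ∃ i₀ : ι,
      (∀ j k, j ≠ k → H.Adj i₀ j → H.Adj i₀ k → H.Adj j k) ∧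
      (∀ j k l l', H.Adj i₀ j → H.Adj i₀ k → j ≠ k → H.Adj j l → H.Adj k l' →
        ¬H.Adj i₀ l → ¬H.Adj i₀ l' → l ≠ i₀ → l' ≠ i₀ →
        (l = k ∨ H.Adj l k) ∨ (l' = j ∨ H.Adj l' j)) := by
  classical
  have hc := hT.isConnected
  obtain ⟨rt⟩ := hc.nonempty
  obtain ⟨i₀, -, hmax⟩ := Finset.exists_max_image Finset.univ
    (fun i => med T rt ((emb i : T.edgeSet) : Sym2 V)) Finset.univ_nonempty
  obtain ⟨u, p, heq, hup, hdp, hmed⟩ := deepest_edge hT rt (emb i₀).2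
  -- depth bound for every edge in the range
  have hbound : ∀ j : ι, ∀ v ∈ ((emb j : T.edgeSet) : Sym2 V), T.dist v rt ≤ T.dist u rt := by
    intro j v hv
    calc T.dist v rt ≤ med T rt (emb j : Sym2 V) := med_ge hv
      _ ≤ med T rt (emb i₀ : Sym2 V) := hmax j (Finset.mem_univ j)
      _ = T.dist u rt := hmed.symm
  have hne : ∀ {a b : ι}, a ≠ b → ((emb a : T.edgeSet) : Sym2 V) ≠ (emb b : Sym2 V) := by
    intro a b hab
    exact fun hcoe => hab (emb.injective (Subtype.coe_injective hcoe))
  have hnear : ∀ {a b : ι}, H.Adj a b → nearPair T ((emb a : T.edgeSet) : Sym2 V) (emb b : Sym2 V) := by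
    intro a b hab
    exact (sq_adj_iff.mp (emb.map_rel_iff.mpr hab)).2
  have hback : ∀ {a b : ι}, a ≠ b →
      nearPair T ((emb a : T.edgeSet) : Sym2 V) (emb b : Sym2 V) → H.Adj a b := by
    intro a b hab hn
    exact emb.map_rel_iff.mp (sq_adj_iff.mpr ⟨fun hx => hab (emb.injective hx), hn⟩)
  have hfar : ∀ {a : ι}, ¬H.Adj i₀ a → a ≠ i₀ → farPair T ((emb a : T.edgeSet) : Sym2 V) u p := by
    intro a hna hai
    apply farPair_of_not_nearPair
    rw [← heq]
    intro hn
    exact hna (emb.map_rel_iff.mp (sq_adj_iff.mpr ⟨fun hx => hai (emb.injective hx), hn⟩)).symm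
  refine ⟨i₀, ?_, ?_⟩
  · intro j k hjk hj hk
    have hjn : nearPair T ((emb j : T.edgeSet) : Sym2 V) s(u, p) := by
      rw [← heq]; exact nearPair_symm (hnear hj)
    have hkn : nearPair T ((emb k : T.edgeSet) : Sym2 V) s(u, p) := by
      rw [← heq]; exact nearPair_symm (hnear hk)
    refine hback hjk (lemA_pair hT rt hup hdp (emb j).2 (emb k).2 ?_ ?_
      (hbound j) (hbound k) hjn hkn)
    · rw [← heq]; exact hne hj.ne'
    · rw [← heq]; exact hne hk.ne'
  · intro j k l l' hj hk hjk hjl hkl' hnl hnl' hli hl'i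
    have hjn : nearPair T ((emb j : T.edgeSet) : Sym2 V) s(u, p) := by
      rw [← heq]; exact nearPair_symm (hnear hj)
    have hkn : nearPair T ((emb k : T.edgeSet) : Sym2 V) s(u, p) := by
      rw [← heq]; exact nearPair_symm (hnear hk)
    have := lemB hT rt hup hdp (emb j).2 (emb k).2 (emb l).2 (emb l').2
      (by rw [← heq]; exact hne hj.ne') (by rw [← heq]; exact hne hk.ne')
      (hne hjk) (hbound j) (hbound k) (hbound l) (hbound l')
      hjn hkn (nearPair_symm (hnear hjl)) (nearPair_symm (hnear hkl'))
      (hfar hnl hli) (hfar hnl' hl'i)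
    rcases this with hlg | hl'f
    · rcases eq_or_ne l k with rfl | hlk
      · exact Or.inl (Or.inl rfl)
      · exact Or.inl (Or.inr (hback hlk hlg))
    · rcases eq_or_ne l' j with rfl | hl'j
      · exact Or.inr (Or.inl rfl)
      · exact Or.inr (Or.inr (hback hl'j hl'f))

private lemma succ_v {K : ℕ} (m : Fin (K+3)) :
    ((m+1 : Fin (K+3))).val = if m.val + 1 = K+3 then 0 else m.val + 1 := by
  have hv := m.isLt
  rw [Fin.add_def]
  simp only [Fin.val_one']
  rw [Nat.mod_eq_of_lt (show 1 < K+3 by omega)]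
  split_ifs with h
  · rw [h, Nat.mod_self]
  · exact Nat.mod_eq_of_lt (by omega)

private lemma pred_v {K : ℕ} (m : Fin (K+3)) :
    ((m-1 : Fin (K+3))).val = if m.val = 0 then K+2 else m.val - 1 := by
  have hv := m.isLt
  rw [Fin.sub_def]
  simp only [Fin.val_one']
  rw [Nat.mod_eq_of_lt (show 1 < K+3 by omega)]
  split_ifs with h
  · rw [h]
    exact Nat.mod_eq_of_lt (by omega)
  · rw [show K + 3 - 1 + m.val = (K+3) + (m.val - 1) by omega, Nat.add_mod_left]
    exact Nat.mod_eq_of_lt (by omega)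

private lemma sun_adj_pred {K : ℕ} (i : Fin (K+3)) :
    (sunGraph (K+3)).Adj (Sum.inl i) (Sum.inr (i-1)) := by
  have e0 : (K+2+1) % (K+3) = 0 := Nat.mod_self (K+3)
  right
  rw [pred_v]
  have hv := i.isLt
  split_ifs with h
  · rw [e0, h]
  · rw [show i.val - 1 + 1 = i.val by omega]
    exact (Nat.mod_eq_of_lt hv).symm

private lemma sun_adj_succ {K : ℕ} (m : Fin (K+3)) :
    (sunGraph (K+3)).Adj (Sum.inr m) (Sum.inl (m+1)) := by
  right
  rw [succ_v]
  have hv := m.isLt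
  split_ifs with h
  · rw [h, Nat.mod_self]
  · exact (Nat.mod_eq_of_lt (by omega)).symm

private lemma sun_not_adj₁ {K : ℕ} (m : Fin (K+3)) :
    ¬ (sunGraph (K+3)).Adj (Sum.inr (m-1)) (Sum.inl (m+1)) := by
  have e0 : (K+2+1) % (K+3) = 0 := Nat.mod_self (K+3)
  rintro (h | h)
  · rw [succ_v, pred_v] at h
    have hv := m.isLt
    split_ifs at h <;> omega
  · rw [succ_v, pred_v] at h
    have hv := m.isLt
    split_ifs at h with h1 h2
    · rw [e0] at h; omega
    · rw [show m.val - 1 + 1 = m.val by omega, Nat.mod_eq_of_lt hv] at h; omega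
    · rw [e0] at h; omega
    · rw [show m.val - 1 + 1 = m.val by omega, Nat.mod_eq_of_lt hv] at h; omega

private lemma sun_not_adj₂ {K : ℕ} (m : Fin (K+3)) :
    ¬ (sunGraph (K+3)).Adj (Sum.inr (m+1)) (Sum.inl m) := by
  rintro (h | h)
  · rw [succ_v] at h
    have hv := m.isLt
    split_ifs at h <;> omega
  · rw [succ_v] at h
    have hv := m.isLt
    split_ifs at h with h1
    · rw [Nat.mod_eq_of_lt (show 0+1 < K+3 by omega)] at h; omega
    · rcases eq_or_ne (m.val + 1 + 1) (K+3) with h2 | h2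
      · rw [show m.val + 1 + 1 = K+2+1 by omega, Nat.mod_self (K+3)] at h; omega
      · rw [Nat.mod_eq_of_lt (by omega)] at h; omega

private lemma fin_pred_ne {K : ℕ} (m : Fin (K+3)) : m - 1 ≠ m := by
  intro h
  have := congrArg Fin.val h
  rw [pred_v] at this
  have hv := m.isLt
  split_ifs at this <;> omega

private lemma fin_ne_succ {K : ℕ} (m : Fin (K+3)) : m ≠ m + 1 := by
  intro h
  have := congrArg Fin.val h
  rw [succ_v] at this
  have hv := m.isLt
  split_ifs at this <;> omega

private lemma cyc_adj_succ {m : ℕ} (i : Fin (m+2+2)) : (cycleGraph (m+2+2)).Adj i (i+1) := by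
  rw [cycleGraph_adj]
  right
  rw [add_sub_cancel_left]

private lemma cyc_adj_pred {m : ℕ} (i : Fin (m+2+2)) : (cycleGraph (m+2+2)).Adj i (i-1) := by
  rw [cycleGraph_adj]
  left
  rw [sub_sub_cancel]

open Fin.CommRing in
private lemma cyc_not_adj {m : ℕ} (i : Fin (m+2+2)) :
    ¬(cycleGraph (m+2+2)).Adj (i-1) (i+1) := by
  rw [cycleGraph_adj]
  push_neg
  constructor
  · intro h
    have h2 : (i - 1) - (i + 1) = -2 := by ring
    rw [h2] at h
    have h3 : ((3 : ℕ) : Fin (m+2+2)) = 0 := by push_cast; linear_combination -h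
    rw [Fin.natCast_eq_zero] at h3
    have := Nat.le_of_dvd (by norm_num) h3
    omega
  · intro h
    have h2 : (i + 1) - (i - 1) = 2 := by ring
    rw [h2] at h
    have : (1 : Fin (m+2+2)) = 0 := by linear_combination h
    exact one_ne_zero this

open Fin.CommRing in
private lemma cyc_pred_ne_succ {m : ℕ} (i : Fin (m+2+2)) : i - 1 ≠ i + 1 := by
  intro h
  have h3 : ((2 : ℕ) : Fin (m+2+2)) = 0 := by push_cast; linear_combination (i+1) - (i-1) - h
  rw [Fin.natCast_eq_zero] at h3
  have := Nat.le_of_dvd (by norm_num) h3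
  omega

end Aux

/-- If T is a tree then $L(T)^2$ is strongly chordal. -/
theorem tree_lineGraph_sq_stronglyChordal {V : Type*} (T : SimpleGraph V)
    (hT : T.IsTree) : StronglyChordal (T.lineGraph.square) := by
  classical
  constructor
  · rintro n hn ⟨emb⟩
    obtain ⟨m, rfl⟩ : ∃ m, n = m + 2 + 2 := ⟨n - 4, by omega⟩
    obtain ⟨i₀, hA, -⟩ := embKey hT emb
    exact cyc_not_adj i₀ (hA _ _ (cyc_pred_ne_succ i₀) (cyc_adj_pred i₀) (cyc_adj_succ i₀))
  · intro k hk
    constructor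
    intro emb
    obtain ⟨K, rfl⟩ : ∃ K, k = K + 3 := ⟨k - 3, by omega⟩
    haveI : Nonempty (Fin (K+3) ⊕ Fin (K+3)) := ⟨Sum.inl 0⟩
    obtain ⟨i₀, hA, hB⟩ := embKey hT emb
    rcases i₀ with i | m
    · -- a clique vertex is deepest
      have hne : (Sum.inr (i-1) : Fin (K+3) ⊕ Fin (K+3)) ≠ Sum.inr i :=
        fun h => fin_pred_ne i (Sum.inr.inj h)
      exact hA _ _ hne (sun_adj_pred i) (Or.inl rfl)
    · -- an independent vertex is deepest
      have h1 : (sunGraph (K+3)).Adj (Sum.inr m) (Sum.inl m) := Or.inl rfl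
      have h2 := sun_adj_succ m
      have hjk : (Sum.inl m : Fin (K+3) ⊕ Fin (K+3)) ≠ Sum.inl (m+1) :=
        fun h => fin_ne_succ m (Sum.inl.inj h)
      have h3 : (sunGraph (K+3)).Adj (Sum.inl m) (Sum.inr (m-1)) := sun_adj_pred m
      have h4 : (sunGraph (K+3)).Adj (Sum.inl (m+1)) (Sum.inr (m+1)) := Or.inl rfl
      have h5 : ¬(sunGraph (K+3)).Adj (Sum.inr m) (Sum.inr (m-1)) := fun h => h
      have h6 : ¬(sunGraph (K+3)).Adj (Sum.inr m) (Sum.inr (m+1)) := fun h => h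
      have h7 : (Sum.inr (m-1) : Fin (K+3) ⊕ Fin (K+3)) ≠ Sum.inr m :=
        fun h => fin_pred_ne m (Sum.inr.inj h)
      have h8 : (Sum.inr (m+1) : Fin (K+3) ⊕ Fin (K+3)) ≠ Sum.inr m :=
        fun h => fin_ne_succ m (Sum.inr.inj h).symm
      rcases hB _ _ _ _ h1 h2 hjk h3 h4 h5 h6 h7 h8 with (h | h) | (h | h)
      · cases h
      · exact sun_not_adj₁ m h
      · cases h
      · exact sun_not_adj₂ m h
end
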